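/- arXiv:2207.10954 — 15 statements merged into one kernel-verified Lean document; each statement's English description precedes it below -/
import Mathlib

section
/- Let A be an associative algebra, M an A-bimodule, and R : M → A a relative Rota-Baxter operator, i.e., R(m)·R(m') = R(R(m)·_M m' + m·_M R(m')) for all m, m' ∈ M. Then the operations m ≺ m' := m·_M R(m') and m ≻ m' := R(m)·_M m' make M into a dendriform algebra, i.e., they satisfy (x≺y)≺z = x≺(y≺z+y≻z), (x≻y)≺z = x≻(y≺z), and (x≺y+x≻y)≻z = x≻(y≻z). -/
/-- A relative Rota-Baxter operator induces a dendriform algebra structure on the bimodule. -/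
theorem dendriform_of_relative_rota_baxter
    {K : Type*} [Field K] {A M : Type*}
    [AddCommGroup A] [Module K A] [AddCommGroup M] [Module K M]
    -- associative algebra structure on A
    (mul : A →ₗ[K] A →ₗ[K] A)
    (hmul : ∀ a b c : A, mul (mul a b) c = mul a (mul b c))
    -- A-bimodule structure on M
    (al : A →ₗ[K] M →ₗ[K] M) (ar : M →ₗ[K] A →ₗ[K] M)
    (hal : ∀ (a b : A) (m : M), al (mul a b) m = al a (al b m))
    (halr : ∀ (a : A) (m : M) (b : A), ar (al a m) b = al a (ar m b))
    (har : ∀ (m : M) (a b : A), ar (ar m a) b = ar m (mul a b))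
    -- relative Rota-Baxter operator
    (R : M →ₗ[K] A)
    (hR : ∀ m m' : M, mul (R m) (R m') = R (al (R m) m' + ar m (R m'))) :
    -- dendriform axioms for x ≺ y := ar x (R y), x ≻ y := al (R x) y
    (∀ x y z : M, ar (ar x (R y)) (R z) = ar x (R (ar y (R z) + al (R y) z))) ∧
    (∀ x y z : M, ar (al (R x) y) (R z) = al (R x) (ar y (R z))) ∧
    (∀ x y z : M, al (R (ar x (R y) + al (R x) y)) z = al (R x) (al (R y) z)) := by
  refine ⟨fun x y z => ?_, fun x y z => halr _ _ _, fun x y z => ?_⟩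
  · rw [har, hR, add_comm]
  · rw [add_comm, ← hR, hal]
end

section
/- Let A be an associative algebra and M an A-bimodule. A linear map R : M → A is a relative Rota-Baxter operator if and only if the map R̂ : A ⊕ M → A ⊕ M defined by R̂(a, m) = (R(m), 0) is a Rota-Baxter operator on the semidirect product algebra A ⊕ M, whose multiplication is (a,m)·(a',m') = (a·a', a·_M m' + m·_M a'). -/
/-- R : M → A is a relative Rota-Baxter operator iff R̂(a,m) = (R m, 0) is a
Rota-Baxter operator on the semidirect product algebra A ⊕ M. -/
theorem relative_rota_baxter_iff_lift_rota_baxter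
    {K : Type*} [Field K] {A M : Type*}
    [AddCommGroup A] [Module K A] [AddCommGroup M] [Module K M]
    (mul : A →ₗ[K] A →ₗ[K] A)
    (hmul : ∀ a b c : A, mul (mul a b) c = mul a (mul b c))
    (al : A →ₗ[K] M →ₗ[K] M) (ar : M →ₗ[K] A →ₗ[K] M)
    (hal : ∀ (a b : A) (m : M), al (mul a b) m = al a (al b m))
    (halr : ∀ (a : A) (m : M) (b : A), ar (al a m) b = al a (ar m b))
    (har : ∀ (m : M) (a b : A), ar (ar m a) b = ar m (mul a b))
    (R : M →ₗ[K] A)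
    -- semidirect product multiplication on A × M
    (muls : A × M → A × M → A × M)
    (hmuls : ∀ p q : A × M, muls p q = (mul p.1 q.1, al p.1 q.2 + ar p.2 q.1))
    -- the lift R̂
    (Rhat : A × M → A × M)
    (hRhat : ∀ p : A × M, Rhat p = (R p.2, 0)) :
    (∀ m m' : M, mul (R m) (R m') = R (al (R m) m' + ar m (R m')))
      ↔ (∀ p q : A × M, muls (Rhat p) (Rhat q)
            = Rhat (muls (Rhat p) q + muls p (Rhat q))) := by
  constructor
  · intro h p q
    simp only [hmuls, hRhat, map_zero, LinearMap.zero_apply, add_zero, zero_add,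
      Prod.fst_add, Prod.snd_add, Prod.mk.injEq]
    constructor
    · rw [h]
    · simp
  · intro h m m'
    have := h (0, m) (0, m')
    simp only [hmuls, hRhat, map_zero, LinearMap.zero_apply, add_zero, zero_add,
      Prod.fst_add, Prod.snd_add, Prod.mk.injEq] at this
    exact this.1
end

section
/- Let A be an associative algebra and r = Σ r₍₁₎ ⊗ r₍₂₎ ∈ A ⊗ A be a solution of the associative Yang-Baxter equation r₁₃r₁₂ − r₁₂r₂₃ + r₂₃r₁₃ = 0. Then the map R : A → A defined by R(a) = Σ r₍₁₎ · a · r₍₂₎ is a Rota-Baxter operator on A, i.e., R(a)·R(a') = R(R(a)·a' + a·R(a')) for all a, a' ∈ A. -/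
open TensorProduct

/-- A solution r = Σᵢ uᵢ ⊗ vᵢ of the associative Yang-Baxter equation gives rise to a
Rota-Baxter operator R(a) = Σᵢ uᵢ · a · vᵢ. -/
theorem rota_baxter_of_aybe
    {K : Type*} [Field K] {A : Type*} [AddCommGroup A] [Module K A]
    (mul : A →ₗ[K] A →ₗ[K] A)
    (hmul : ∀ a b c : A, mul (mul a b) c = mul a (mul b c))
    {ι : Type*} [Fintype ι] (u v : ι → A)
    -- the associative Yang-Baxter equation r₁₃r₁₂ − r₁₂r₂₃ + r₂₃r₁₃ = 0 in A ⊗ A ⊗ A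
    (haybe :
      (∑ i : ι, ∑ j : ι, (mul (u i) (u j)) ⊗ₜ[K] ((v j) ⊗ₜ[K] (v i)))
        - (∑ i : ι, ∑ j : ι, (u i) ⊗ₜ[K] ((mul (v i) (u j)) ⊗ₜ[K] (v j)))
        + (∑ i : ι, ∑ j : ι, (u i) ⊗ₜ[K] ((u j) ⊗ₜ[K] (mul (v j) (v i))))
        = (0 : A ⊗[K] (A ⊗[K] A)))
    (R : A → A)
    (hRdef : ∀ a : A, R a = ∑ i : ι, mul (mul (u i) a) (v i)) :
    ∀ a a' : A, mul (R a) (R a') = R (mul (R a) a' + mul a (R a')) := by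
  intro a a'
  -- trilinear map x ⊗ y ⊗ z ↦ x·a·y·a'·z
  set H : A →ₗ[K] A →ₗ[K] A →ₗ[K] A :=
    ((LinearMap.llcomp K A A (A →ₗ[K] A)) (mul ∘ₗ mul.flip a')).comp (mul ∘ₗ (mul.flip a)) with hH
  set L : A ⊗[K] (A ⊗[K] A) →ₗ[K] A :=
    TensorProduct.lift ((TensorProduct.lift.equiv (RingHom.id K) A A A).toLinearMap.comp H) with hL
  have hLt : ∀ x y z : A, L (x ⊗ₜ[K] (y ⊗ₜ[K] z)) = mul (mul (mul (mul x a) y) a') z := by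
    intro x y z
    simp [hL, hH, TensorProduct.lift.equiv]
  have key := congrArg L haybe
  simp only [map_add, map_sub, map_sum, hLt, map_zero] at key
  have key' :
      (∑ i : ι, ∑ j : ι, mul (mul (mul (mul (u i) a) (mul (v i) (u j))) a') (v j))
      = (∑ i : ι, ∑ j : ι, mul (mul (mul (mul (mul (u i) (u j)) a) (v j)) a') (v i))
        + (∑ i : ι, ∑ j : ι, mul (mul (mul (mul (u i) a) (u j)) a') (mul (v j) (v i))) := by
    rw [sub_add_eq_add_sub, sub_eq_zero] at key
    exact key.symm
  clear key haybe hLt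
  clear hL hH L H
  simp only [hRdef, map_sum, map_add, LinearMap.sum_apply, LinearMap.add_apply]
  rw [Finset.sum_comm (f := fun i j => mul (mul (mul (mul (mul (u i) (u j)) a) (v j)) a') (v i)),
      Finset.sum_comm (f := fun i j => mul (mul (mul (mul (u i) a) (u j)) a') (mul (v j) (v i)))] at key'
  simp only [hmul] at key' ⊢
  rw [Finset.sum_add_distrib,
    Finset.sum_comm (f := fun x y =>
      mul (u y) (mul a (mul (v y) (mul (u x) (mul a' (v x)))))),
    key']
  congr 1
  · exact Finset.sum_comm (f := fun x y =>
      mul (u y) (mul (u x) (mul a (mul (v x) (mul a' (v y))))))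
  · exact Finset.sum_comm (f := fun x y =>
      mul (u y) (mul a (mul (u x) (mul a' (mul (v x) (v y))))))
end

section
/- Let A be an associative algebra, r ∈ A ⊗ A an associative r-matrix (solution of the AYBE), and M an A-bimodule. Define R : A → A by R(a) = Σ r₍₁₎·a·r₍₂₎ and R_M : M → M by R_M(m) = Σ r₍₁₎·_M m·_M r₍₂₎. Then (M, R_M) is a Rota-Baxter bimodule over the Rota-Baxter algebra (A, R): R(a)·_M R_M(m) = R_M(R(a)·_M m + a·_M R_M(m)) and R_M(m)·_M R(a) = R_M(R_M(m)·_M a + m·_M R(a)) for all a ∈ A, m ∈ M. -/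
open TensorProduct

/-- Applying a trilinear map to the AYBE relation. -/
lemma aybe_image_of_trilinear
    {K : Type*} [Field K] {A M : Type*}
    [AddCommGroup A] [Module K A] [AddCommGroup M] [Module K M]
    {ι : Type*} [Fintype ι]
    (T : A →ₗ[K] A →ₗ[K] A →ₗ[K] M)
    (a b c a' b' c' a'' b'' c'' : ι → ι → A)
    (h : (∑ i : ι, ∑ j : ι, (a i j) ⊗ₜ[K] ((b i j) ⊗ₜ[K] (c i j)))
        - (∑ i : ι, ∑ j : ι, (a' i j) ⊗ₜ[K] ((b' i j) ⊗ₜ[K] (c' i j)))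
        + (∑ i : ι, ∑ j : ι, (a'' i j) ⊗ₜ[K] ((b'' i j) ⊗ₜ[K] (c'' i j)))
        = (0 : A ⊗[K] (A ⊗[K] A))) :
    (∑ i : ι, ∑ j : ι, T (a i j) (b i j) (c i j))
      - (∑ i : ι, ∑ j : ι, T (a' i j) (b' i j) (c' i j))
      + (∑ i : ι, ∑ j : ι, T (a'' i j) (b'' i j) (c'' i j)) = 0 := by
  have := congrArg (TensorProduct.lift ((TensorProduct.lift.equiv (RingHom.id K) A A M).toLinearMap ∘ₗ T)) h
  simpa [map_sum, map_sub, map_add, TensorProduct.lift.tmul] using this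

/-- For an associative r-matrix r = Σᵢ uᵢ ⊗ vᵢ and an A-bimodule M, the pair
(M, R_M) with R_M(m) = Σᵢ uᵢ ·_M m ·_M vᵢ is a Rota-Baxter bimodule over the
Rota-Baxter algebra (A, R), R(a) = Σᵢ uᵢ · a · vᵢ. -/
theorem rota_baxter_bimodule_of_aybe
    {K : Type*} [Field K] {A M : Type*}
    [AddCommGroup A] [Module K A] [AddCommGroup M] [Module K M]
    (mul : A →ₗ[K] A →ₗ[K] A)
    (hmul : ∀ a b c : A, mul (mul a b) c = mul a (mul b c))
    (al : A →ₗ[K] M →ₗ[K] M) (ar : M →ₗ[K] A →ₗ[K] M)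
    (hal : ∀ (a b : A) (m : M), al (mul a b) m = al a (al b m))
    (halr : ∀ (a : A) (m : M) (b : A), ar (al a m) b = al a (ar m b))
    (har : ∀ (m : M) (a b : A), ar (ar m a) b = ar m (mul a b))
    {ι : Type*} [Fintype ι] (u v : ι → A)
    -- the associative Yang-Baxter equation r₁₃r₁₂ − r₁₂r₂₃ + r₂₃r₁₃ = 0 in A ⊗ A ⊗ A
    (haybe :
      (∑ i : ι, ∑ j : ι, (mul (u i) (u j)) ⊗ₜ[K] ((v j) ⊗ₜ[K] (v i)))
        - (∑ i : ι, ∑ j : ι, (u i) ⊗ₜ[K] ((mul (v i) (u j)) ⊗ₜ[K] (v j)))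
        + (∑ i : ι, ∑ j : ι, (u i) ⊗ₜ[K] ((u j) ⊗ₜ[K] (mul (v j) (v i))))
        = (0 : A ⊗[K] (A ⊗[K] A)))
    (R : A → A) (hRdef : ∀ a : A, R a = ∑ i : ι, mul (mul (u i) a) (v i))
    (RM : M → M) (hRMdef : ∀ m : M, RM m = ∑ i : ι, ar (al (u i) m) (v i)) :
    (∀ (a : A) (m : M), al (R a) (RM m) = RM (al (R a) m + al a (RM m))) ∧
    (∀ (m : M) (a : A), ar (RM m) (R a) = RM (ar (RM m) a + ar m (R a))) := by
  constructor
  · intro a m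
    set T : A →ₗ[K] A →ₗ[K] A →ₗ[K] M :=
      LinearMap.mk₂ K (fun x y => al x ∘ₗ al a ∘ₗ al y ∘ₗ ar m)
        (by intro x x' y; ext z; simp)
        (by intro c x y; ext z; simp)
        (by intro x y y'; ext z; simp)
        (by intro c x y; ext z; simp) with hT
    have key := aybe_image_of_trilinear T
      (fun i j => mul (u i) (u j)) (fun i j => v j) (fun i j => v i)
      (fun i j => u i) (fun i j => mul (v i) (u j)) (fun i j => v j)
      (fun i j => u i) (fun i j => u j) (fun i j => mul (v j) (v i)) haybe
    rw [sub_add_eq_add_sub, sub_eq_zero] at key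
    simp only [hT, LinearMap.mk₂_apply, LinearMap.comp_apply, hmul, hal, halr, har] at key
    rw [hRdef, hRMdef, hRMdef]
    simp only [map_add, map_sum, LinearMap.sum_apply, LinearMap.add_apply,
      Finset.sum_add_distrib, hmul, hal, halr, har]
    rw [Finset.sum_comm]
    exact key.symm
  · intro m a
    set T : A →ₗ[K] A →ₗ[K] A →ₗ[K] M :=
      LinearMap.mk₂ K (fun x y => al x ∘ₗ ar m ∘ₗ mul y ∘ₗ mul a)
        (by intro x x' y; ext z; simp)
        (by intro c x y; ext z; simp)
        (by intro x y y'; ext z; simp)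
        (by intro c x y; ext z; simp) with hT
    have key := aybe_image_of_trilinear T
      (fun i j => mul (u i) (u j)) (fun i j => v j) (fun i j => v i)
      (fun i j => u i) (fun i j => mul (v i) (u j)) (fun i j => v j)
      (fun i j => u i) (fun i j => u j) (fun i j => mul (v j) (v i)) haybe
    rw [sub_add_eq_add_sub, sub_eq_zero] at key
    simp only [hT, LinearMap.mk₂_apply, LinearMap.comp_apply, hmul, hal, halr, har] at key
    rw [hRdef, hRMdef, hRMdef]
    simp only [map_add, map_sum, LinearMap.sum_apply, LinearMap.add_apply,
      Finset.sum_add_distrib, hmul, hal, halr, har]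
    rw [Finset.sum_comm]
    exact key.symm
end

section
/- Let M →^R A be a relative Rota-Baxter algebra and (N →^S B, l, r) a bimodule over it. Then B* →^{−S*} N* is a bimodule over M →^R A, where N* and B* carry the dual A-bimodule structures, and the structure maps l* : M ⊗ N* → B* and r* : N* ⊗ M → B* are given by l*(m, f)(b) = f(r(b, m)) and r*(f, m)(b) = f(l(m, b)). -/
/-- Dual bimodule: if (N →ˢ B, l, r) is a bimodule over the relative Rota-Baxter
algebra M →ᴿ A, then (B* →^{-S*} N*, l*, r*) is again a bimodule over M →ᴿ A. -/
theorem dual_bimodule_of_relative_rota_baxter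
    {K : Type*} [Field K] {A M B N : Type*}
    [AddCommGroup A] [Module K A] [AddCommGroup M] [Module K M]
    [AddCommGroup B] [Module K B] [AddCommGroup N] [Module K N]
    -- relative Rota-Baxter algebra M → A
    (mul : A →ₗ[K] A →ₗ[K] A)
    (hmul : ∀ a b c : A, mul (mul a b) c = mul a (mul b c))
    (al : A →ₗ[K] M →ₗ[K] M) (ar : M →ₗ[K] A →ₗ[K] M)
    (hal : ∀ (a b : A) (m : M), al (mul a b) m = al a (al b m))
    (halr : ∀ (a : A) (m : M) (b : A), ar (al a m) b = al a (ar m b))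
    (har : ∀ (m : M) (a b : A), ar (ar m a) b = ar m (mul a b))
    (R : M →ₗ[K] A)
    (hR : ∀ m m' : M, mul (R m) (R m') = R (al (R m) m' + ar m (R m')))
    -- bimodule (N →ˢ B, l, r)
    (S : N →ₗ[K] B)
    (bl : A →ₗ[K] B →ₗ[K] B) (br : B →ₗ[K] A →ₗ[K] B)
    (hbl : ∀ (a a' : A) (b : B), bl (mul a a') b = bl a (bl a' b))
    (hblr : ∀ (a : A) (b : B) (a' : A), br (bl a b) a' = bl a (br b a'))
    (hbr : ∀ (b : B) (a a' : A), br (br b a) a' = br b (mul a a'))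
    (nl : A →ₗ[K] N →ₗ[K] N) (nr : N →ₗ[K] A →ₗ[K] N)
    (hnl : ∀ (a a' : A) (n : N), nl (mul a a') n = nl a (nl a' n))
    (hnlr : ∀ (a : A) (n : N) (a' : A), nr (nl a n) a' = nl a (nr n a'))
    (hnr : ∀ (n : N) (a a' : A), nr (nr n a) a' = nr n (mul a a'))
    (l : M →ₗ[K] B →ₗ[K] N) (r : B →ₗ[K] M →ₗ[K] N)
    (hl1 : ∀ (a : A) (m : M) (b : B), l (al a m) b = nl a (l m b))
    (hl2 : ∀ (m : M) (a : A) (b : B), l (ar m a) b = l m (bl a b))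
    (hl3 : ∀ (m : M) (b : B) (a : A), l m (br b a) = nr (l m b) a)
    (hr1 : ∀ (a : A) (b : B) (m : M), r (bl a b) m = nl a (r b m))
    (hr2 : ∀ (b : B) (a : A) (m : M), r (br b a) m = r b (al a m))
    (hr3 : ∀ (b : B) (m : M) (a : A), r b (ar m a) = nr (r b m) a)
    (hrs : ∀ (m : M) (n : N), bl (R m) (S n) = S (nl (R m) n + l m (S n)))
    (hsr : ∀ (n : N) (m : M), br (S n) (R m) = S (r (S n) m + nr n (R m)))
    -- the dual structure maps
    (blD : A → Module.Dual K N → Module.Dual K N)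
    (hblD : ∀ a f, blD a f = f ∘ₗ nr.flip a)
    (brD : Module.Dual K N → A → Module.Dual K N)
    (hbrD : ∀ f a, brD f a = f ∘ₗ nl a)
    (nlD : A → Module.Dual K B → Module.Dual K B)
    (hnlD : ∀ a g, nlD a g = g ∘ₗ br.flip a)
    (nrD : Module.Dual K B → A → Module.Dual K B)
    (hnrD : ∀ g a, nrD g a = g ∘ₗ bl a)
    (SD : Module.Dual K B → Module.Dual K N)
    (hSD : ∀ g, SD g = -(g ∘ₗ S))
    (lD : M → Module.Dual K N → Module.Dual K B)
    (hlD : ∀ m f, lD m f = f ∘ₗ r.flip m)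
    (rD : Module.Dual K N → M → Module.Dual K B)
    (hrD : ∀ f m, rD f m = f ∘ₗ l m) :
    -- N* is an A-bimodule
    (∀ (a a' : A) (f : Module.Dual K N), blD (mul a a') f = blD a (blD a' f)) ∧
    (∀ (a : A) (f : Module.Dual K N) (a' : A), brD (blD a f) a' = blD a (brD f a')) ∧
    (∀ (f : Module.Dual K N) (a a' : A), brD (brD f a) a' = brD f (mul a a')) ∧
    -- B* is an A-bimodule
    (∀ (a a' : A) (g : Module.Dual K B), nlD (mul a a') g = nlD a (nlD a' g)) ∧
    (∀ (a : A) (g : Module.Dual K B) (a' : A), nrD (nlD a g) a' = nlD a (nrD g a')) ∧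
    (∀ (g : Module.Dual K B) (a a' : A), nrD (nrD g a) a' = nrD g (mul a a')) ∧
    -- the conditions on l* and r*
    (∀ (a : A) (m : M) (f : Module.Dual K N), lD (al a m) f = nlD a (lD m f)) ∧
    (∀ (m : M) (a : A) (f : Module.Dual K N), lD (ar m a) f = lD m (blD a f)) ∧
    (∀ (m : M) (f : Module.Dual K N) (a : A), lD m (brD f a) = nrD (lD m f) a) ∧
    (∀ (a : A) (f : Module.Dual K N) (m : M), rD (blD a f) m = nlD a (rD f m)) ∧
    (∀ (f : Module.Dual K N) (a : A) (m : M), rD (brD f a) m = rD f (al a m)) ∧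
    (∀ (f : Module.Dual K N) (m : M) (a : A), rD f (ar m a) = nrD (rD f m) a) ∧
    -- compatibility with R and −S*
    (∀ (m : M) (g : Module.Dual K B), blD (R m) (SD g) = SD (nlD (R m) g + lD m (SD g))) ∧
    (∀ (g : Module.Dual K B) (m : M), brD (SD g) (R m) = SD (rD (SD g) m + nrD g (R m))) := by
  refine ⟨?_,?_,?_,?_,?_,?_,?_,?_,?_,?_,?_,?_,?_,?_⟩ <;> intros <;> ext x <;>
    simp [hblD, hbrD, hnlD, hnrD, hSD, hlD, hrD, hnr, hnl, hnlr, hbr, hbl, hblr,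
      hl1, hl2, hl3, hr1, hr2, hr3, hrs, hsr]
end

section
/- Let M →^R A be a relative Rota-Baxter algebra and N →^S B a 2-term chain complex with B and N both A-bimodules, together with maps l : M ⊗ B → N and r : B ⊗ M → N satisfying the compatibility conditions (bimod-l) and (bimod-r). Then B ⊕ N is an (A ⊕ M)-bimodule (over the semidirect product algebra A ⊕ M) with actions (a,m)·(b,n) = (a·_B b, a·_N n + l(m,b)) and (b,n)·(a,m) = (b·_B a, r(b,m) + n·_N a). -/
/-- Lifted bimodule: B ⊕ N is a bimodule over the semidirect product algebra A ⊕ M. -/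
theorem lifted_bimodule_over_semidirect_product
    {K : Type*} [Field K] {A M B N : Type*}
    [AddCommGroup A] [Module K A] [AddCommGroup M] [Module K M]
    [AddCommGroup B] [Module K B] [AddCommGroup N] [Module K N]
    (mul : A →ₗ[K] A →ₗ[K] A)
    (hmul : ∀ a b c : A, mul (mul a b) c = mul a (mul b c))
    (al : A →ₗ[K] M →ₗ[K] M) (ar : M →ₗ[K] A →ₗ[K] M)
    (hal : ∀ (a b : A) (m : M), al (mul a b) m = al a (al b m))
    (halr : ∀ (a : A) (m : M) (b : A), ar (al a m) b = al a (ar m b))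
    (har : ∀ (m : M) (a b : A), ar (ar m a) b = ar m (mul a b))
    (R : M →ₗ[K] A)
    (hR : ∀ m m' : M, mul (R m) (R m') = R (al (R m) m' + ar m (R m')))
    (S : N →ₗ[K] B)
    (bl : A →ₗ[K] B →ₗ[K] B) (br : B →ₗ[K] A →ₗ[K] B)
    (hbl : ∀ (a a' : A) (b : B), bl (mul a a') b = bl a (bl a' b))
    (hblr : ∀ (a : A) (b : B) (a' : A), br (bl a b) a' = bl a (br b a'))
    (hbr : ∀ (b : B) (a a' : A), br (br b a) a' = br b (mul a a'))
    (nl : A →ₗ[K] N →ₗ[K] N) (nr : N →ₗ[K] A →ₗ[K] N)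
    (hnl : ∀ (a a' : A) (n : N), nl (mul a a') n = nl a (nl a' n))
    (hnlr : ∀ (a : A) (n : N) (a' : A), nr (nl a n) a' = nl a (nr n a'))
    (hnr : ∀ (n : N) (a a' : A), nr (nr n a) a' = nr n (mul a a'))
    (l : M →ₗ[K] B →ₗ[K] N) (r : B →ₗ[K] M →ₗ[K] N)
    (hl1 : ∀ (a : A) (m : M) (b : B), l (al a m) b = nl a (l m b))
    (hl2 : ∀ (m : M) (a : A) (b : B), l (ar m a) b = l m (bl a b))
    (hl3 : ∀ (m : M) (b : B) (a : A), l m (br b a) = nr (l m b) a)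
    (hr1 : ∀ (a : A) (b : B) (m : M), r (bl a b) m = nl a (r b m))
    (hr2 : ∀ (b : B) (a : A) (m : M), r (br b a) m = r b (al a m))
    (hr3 : ∀ (b : B) (m : M) (a : A), r b (ar m a) = nr (r b m) a)
    -- semidirect product multiplication on A × M and actions on B × N
    (muls : A × M → A × M → A × M)
    (hmuls : ∀ p q, muls p q = (mul p.1 q.1, al p.1 q.2 + ar p.2 q.1))
    (actl : A × M → B × N → B × N)
    (hactl : ∀ p w, actl p w = (bl p.1 w.1, nl p.1 w.2 + l p.2 w.1))
    (actr : B × N → A × M → B × N)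
    (hactr : ∀ w p, actr w p = (br w.1 p.1, r w.1 p.2 + nr w.2 p.1)) :
    (∀ (p q : A × M) (w : B × N), actl (muls p q) w = actl p (actl q w)) ∧
    (∀ (p : A × M) (w : B × N) (q : A × M), actr (actl p w) q = actl p (actr w q)) ∧
    (∀ (w : B × N) (p q : A × M), actr (actr w p) q = actr w (muls p q)) := by
  refine ⟨?_, ?_, ?_⟩
  · intro p q w
    simp only [hmuls, hactl, map_add, LinearMap.add_apply, hbl, hnl, hl1, hl2]
    exact Prod.ext rfl (by abel)
  · intro p w q
    simp only [hactl, hactr, map_add, LinearMap.add_apply, hblr, hnlr, hl3, hr1]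
    exact Prod.ext rfl (by abel)
  · intro w p q
    simp only [hmuls, hactr, map_add, LinearMap.add_apply, hbr, hnr, hr2, hr3]
    exact Prod.ext rfl (by abel)
end

section
/- Let M →^R A be a relative Rota-Baxter algebra and (N →^S B, l, r) a bimodule over it. Give A ⊕ B the semidirect product algebra structure (a,b)·(a',b') = (a·a', a·_B b' + b·_B a'). Then M ⊕ N is an (A ⊕ B)-bimodule with actions (a,b)▷(m,n) = (a·_M m, a·_N n + r(b,m)) and (m,n)◁(a,b) = (m·_M a, l(m,b) + n·_N a). -/
/-- M ⊕ N is a bimodule over the semidirect product algebra A ⊕ B. -/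
theorem semidirect_bimodule_MN_over_AB
    {K : Type*} [Field K] {A M B N : Type*}
    [AddCommGroup A] [Module K A] [AddCommGroup M] [Module K M]
    [AddCommGroup B] [Module K B] [AddCommGroup N] [Module K N]
    (mul : A →ₗ[K] A →ₗ[K] A)
    (hmul : ∀ a b c : A, mul (mul a b) c = mul a (mul b c))
    (al : A →ₗ[K] M →ₗ[K] M) (ar : M →ₗ[K] A →ₗ[K] M)
    (hal : ∀ (a b : A) (m : M), al (mul a b) m = al a (al b m))
    (halr : ∀ (a : A) (m : M) (b : A), ar (al a m) b = al a (ar m b))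
    (har : ∀ (m : M) (a b : A), ar (ar m a) b = ar m (mul a b))
    (R : M →ₗ[K] A)
    (hR : ∀ m m' : M, mul (R m) (R m') = R (al (R m) m' + ar m (R m')))
    (S : N →ₗ[K] B)
    (bl : A →ₗ[K] B →ₗ[K] B) (br : B →ₗ[K] A →ₗ[K] B)
    (hbl : ∀ (a a' : A) (b : B), bl (mul a a') b = bl a (bl a' b))
    (hblr : ∀ (a : A) (b : B) (a' : A), br (bl a b) a' = bl a (br b a'))
    (hbr : ∀ (b : B) (a a' : A), br (br b a) a' = br b (mul a a'))
    (nl : A →ₗ[K] N →ₗ[K] N) (nr : N →ₗ[K] A →ₗ[K] N)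
    (hnl : ∀ (a a' : A) (n : N), nl (mul a a') n = nl a (nl a' n))
    (hnlr : ∀ (a : A) (n : N) (a' : A), nr (nl a n) a' = nl a (nr n a'))
    (hnr : ∀ (n : N) (a a' : A), nr (nr n a) a' = nr n (mul a a'))
    (l : M →ₗ[K] B →ₗ[K] N) (r : B →ₗ[K] M →ₗ[K] N)
    (hl1 : ∀ (a : A) (m : M) (b : B), l (al a m) b = nl a (l m b))
    (hl2 : ∀ (m : M) (a : A) (b : B), l (ar m a) b = l m (bl a b))
    (hl3 : ∀ (m : M) (b : B) (a : A), l m (br b a) = nr (l m b) a)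
    (hr1 : ∀ (a : A) (b : B) (m : M), r (bl a b) m = nl a (r b m))
    (hr2 : ∀ (b : B) (a : A) (m : M), r (br b a) m = r b (al a m))
    (hr3 : ∀ (b : B) (m : M) (a : A), r b (ar m a) = nr (r b m) a)
    (hrs : ∀ (m : M) (n : N), bl (R m) (S n) = S (nl (R m) n + l m (S n)))
    (hsr : ∀ (n : N) (m : M), br (S n) (R m) = S (r (S n) m + nr n (R m)))
    -- semidirect product multiplication on A × B and actions on M × N
    (mulAB : A × B → A × B → A × B)
    (hmulAB : ∀ p q : A × B, mulAB p q = (mul p.1 q.1, bl p.1 q.2 + br p.2 q.1))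
    (tl : A × B → M × N → M × N)
    (htl : ∀ (q : A × B) (w : M × N), tl q w = (al q.1 w.1, nl q.1 w.2 + r q.2 w.1))
    (tr : M × N → A × B → M × N)
    (htr : ∀ (w : M × N) (q : A × B), tr w q = (ar w.1 q.1, l w.1 q.2 + nr w.2 q.1)) :
    (∀ (p q : A × B) (w : M × N), tl (mulAB p q) w = tl p (tl q w)) ∧
    (∀ (p : A × B) (w : M × N) (q : A × B), tr (tl p w) q = tl p (tr w q)) ∧
    (∀ (w : M × N) (p q : A × B), tr (tr w p) q = tr w (mulAB p q)) := by
  refine ⟨fun p q w => ?_, fun p w q => ?_, fun w p q => ?_⟩ <;>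
    simp only [htl, htr, hmulAB, map_add, LinearMap.add_apply, Prod.mk.injEq] <;>
    constructor
  · exact hal _ _ _
  · rw [hnl, hr1, hr2]; abel
  · exact halr _ _ _
  · rw [hnlr, hl1, hr3]; abel
  · exact har _ _ _
  · rw [hnr, hl2, hl3]; abel
end

section
/- (Semidirect product) Let M →^R A be a relative Rota-Baxter algebra and (N →^S B, l, r) a bimodule over it. Then R ⊕ S : M ⊕ N → A ⊕ B, (m,n) ↦ (R(m), S(n)), is a relative Rota-Baxter operator with respect to the semidirect product algebra A ⊕ B and its bimodule M ⊕ N with actions (a,b)▷(m,n) = (a·_M m, a·_N n + r(b,m)) and (m,n)◁(a,b) = (m·_M a, l(m,b) + n·_N a). Hence M ⊕ N →^{R⊕S} A ⊕ B is a relative Rota-Baxter algebra. -/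
/-- Semidirect product: R ⊕ S is a relative Rota-Baxter operator on M ⊕ N over A ⊕ B. -/
theorem semidirect_product_relative_rota_baxter
    {K : Type*} [Field K] {A M B N : Type*}
    [AddCommGroup A] [Module K A] [AddCommGroup M] [Module K M]
    [AddCommGroup B] [Module K B] [AddCommGroup N] [Module K N]
    (mul : A →ₗ[K] A →ₗ[K] A)
    (hmul : ∀ a b c : A, mul (mul a b) c = mul a (mul b c))
    (al : A →ₗ[K] M →ₗ[K] M) (ar : M →ₗ[K] A →ₗ[K] M)
    (hal : ∀ (a b : A) (m : M), al (mul a b) m = al a (al b m))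
    (halr : ∀ (a : A) (m : M) (b : A), ar (al a m) b = al a (ar m b))
    (har : ∀ (m : M) (a b : A), ar (ar m a) b = ar m (mul a b))
    (R : M →ₗ[K] A)
    (hR : ∀ m m' : M, mul (R m) (R m') = R (al (R m) m' + ar m (R m')))
    (S : N →ₗ[K] B)
    (bl : A →ₗ[K] B →ₗ[K] B) (br : B →ₗ[K] A →ₗ[K] B)
    (hbl : ∀ (a a' : A) (b : B), bl (mul a a') b = bl a (bl a' b))
    (hblr : ∀ (a : A) (b : B) (a' : A), br (bl a b) a' = bl a (br b a'))
    (hbr : ∀ (b : B) (a a' : A), br (br b a) a' = br b (mul a a'))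
    (nl : A →ₗ[K] N →ₗ[K] N) (nr : N →ₗ[K] A →ₗ[K] N)
    (hnl : ∀ (a a' : A) (n : N), nl (mul a a') n = nl a (nl a' n))
    (hnlr : ∀ (a : A) (n : N) (a' : A), nr (nl a n) a' = nl a (nr n a'))
    (hnr : ∀ (n : N) (a a' : A), nr (nr n a) a' = nr n (mul a a'))
    (l : M →ₗ[K] B →ₗ[K] N) (r : B →ₗ[K] M →ₗ[K] N)
    (hl1 : ∀ (a : A) (m : M) (b : B), l (al a m) b = nl a (l m b))
    (hl2 : ∀ (m : M) (a : A) (b : B), l (ar m a) b = l m (bl a b))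
    (hl3 : ∀ (m : M) (b : B) (a : A), l m (br b a) = nr (l m b) a)
    (hr1 : ∀ (a : A) (b : B) (m : M), r (bl a b) m = nl a (r b m))
    (hr2 : ∀ (b : B) (a : A) (m : M), r (br b a) m = r b (al a m))
    (hr3 : ∀ (b : B) (m : M) (a : A), r b (ar m a) = nr (r b m) a)
    (hrs : ∀ (m : M) (n : N), bl (R m) (S n) = S (nl (R m) n + l m (S n)))
    (hsr : ∀ (n : N) (m : M), br (S n) (R m) = S (r (S n) m + nr n (R m)))
    -- semidirect product multiplication on A × B and actions on M × N
    (mulAB : A × B → A × B → A × B)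
    (hmulAB : ∀ p q : A × B, mulAB p q = (mul p.1 q.1, bl p.1 q.2 + br p.2 q.1))
    (tl : A × B → M × N → M × N)
    (htl : ∀ (q : A × B) (w : M × N), tl q w = (al q.1 w.1, nl q.1 w.2 + r q.2 w.1))
    (tr : M × N → A × B → M × N)
    (htr : ∀ (w : M × N) (q : A × B), tr w q = (ar w.1 q.1, l w.1 q.2 + nr w.2 q.1))
    (RS : M × N → A × B) (hRS : ∀ w : M × N, RS w = (R w.1, S w.2)) :
    ∀ w w' : M × N, mulAB (RS w) (RS w') = RS (tl (RS w) w' + tr w (RS w')) := by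
  intro w w'
  simp only [hRS, hmulAB, htl, htr, Prod.fst_add, Prod.snd_add, Prod.mk_add_mk, map_add]
  refine Prod.ext ?_ ?_
  · simp only; rw [hR, map_add]
  · simp only; rw [hrs, hsr, map_add, map_add]; abel
end

section
/- Let M →^R A be a relative Rota-Baxter algebra and (N →^S B, l, r) a bimodule over it. Then N is a representation of the induced dendriform algebra (M, ≺_R, ≻_R) with action maps m ≺ n = l(m, S(n)), m ≻ n = R(m)·_N n, n ≺ m = n·_N R(m), and n ≻ m = r(S(n), m). -/
/-- A bimodule over a relative Rota-Baxter algebra gives a representation of the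
induced dendriform algebra (M, ≺_R, ≻_R) on N. -/
theorem induced_dendriform_representation
    {K : Type*} [Field K] {A M B N : Type*}
    [AddCommGroup A] [Module K A] [AddCommGroup M] [Module K M]
    [AddCommGroup B] [Module K B] [AddCommGroup N] [Module K N]
    (mul : A →ₗ[K] A →ₗ[K] A)
    (hmul : ∀ a b c : A, mul (mul a b) c = mul a (mul b c))
    (al : A →ₗ[K] M →ₗ[K] M) (ar : M →ₗ[K] A →ₗ[K] M)
    (hal : ∀ (a b : A) (m : M), al (mul a b) m = al a (al b m))
    (halr : ∀ (a : A) (m : M) (b : A), ar (al a m) b = al a (ar m b))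
    (har : ∀ (m : M) (a b : A), ar (ar m a) b = ar m (mul a b))
    (R : M →ₗ[K] A)
    (hR : ∀ m m' : M, mul (R m) (R m') = R (al (R m) m' + ar m (R m')))
    (S : N →ₗ[K] B)
    (bl : A →ₗ[K] B →ₗ[K] B) (br : B →ₗ[K] A →ₗ[K] B)
    (hbl : ∀ (a a' : A) (b : B), bl (mul a a') b = bl a (bl a' b))
    (hblr : ∀ (a : A) (b : B) (a' : A), br (bl a b) a' = bl a (br b a'))
    (hbr : ∀ (b : B) (a a' : A), br (br b a) a' = br b (mul a a'))
    (nl : A →ₗ[K] N →ₗ[K] N) (nr : N →ₗ[K] A →ₗ[K] N)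
    (hnl : ∀ (a a' : A) (n : N), nl (mul a a') n = nl a (nl a' n))
    (hnlr : ∀ (a : A) (n : N) (a' : A), nr (nl a n) a' = nl a (nr n a'))
    (hnr : ∀ (n : N) (a a' : A), nr (nr n a) a' = nr n (mul a a'))
    (l : M →ₗ[K] B →ₗ[K] N) (r : B →ₗ[K] M →ₗ[K] N)
    (hl1 : ∀ (a : A) (m : M) (b : B), l (al a m) b = nl a (l m b))
    (hl2 : ∀ (m : M) (a : A) (b : B), l (ar m a) b = l m (bl a b))
    (hl3 : ∀ (m : M) (b : B) (a : A), l m (br b a) = nr (l m b) a)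
    (hr1 : ∀ (a : A) (b : B) (m : M), r (bl a b) m = nl a (r b m))
    (hr2 : ∀ (b : B) (a : A) (m : M), r (br b a) m = r b (al a m))
    (hr3 : ∀ (b : B) (m : M) (a : A), r b (ar m a) = nr (r b m) a)
    (hrs : ∀ (m : M) (n : N), bl (R m) (S n) = S (nl (R m) n + l m (S n)))
    (hsr : ∀ (n : N) (m : M), br (S n) (R m) = S (r (S n) m + nr n (R m))) :
    -- N is a representation of the dendriform algebra (M, ≺_R, ≻_R) with
    -- m ≺ n = l m (S n), m ≻ n = nl (R m) n, n ≺ m = nr n (R m), n ≻ m = r (S n) m.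
    -- Axiom (x ≺ y) ≺ z = x ≺ (y ≺ z + y ≻ z), one argument from N:
    (∀ (e : N) (y z : M),
        nr (nr e (R y)) (R z) = nr e (R (ar y (R z) + al (R y) z))) ∧
    (∀ (x : M) (e : N) (z : M),
        nr (l x (S e)) (R z) = l x (S (nr e (R z) + r (S e) z))) ∧
    (∀ (x y : M) (e : N),
        l (ar x (R y)) (S e) = l x (S (l y (S e) + nl (R y) e))) ∧
    -- Axiom (x ≻ y) ≺ z = x ≻ (y ≺ z):
    (∀ (e : N) (y z : M),
        nr (r (S e) y) (R z) = r (S e) (ar y (R z))) ∧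
    (∀ (x : M) (e : N) (z : M),
        nr (nl (R x) e) (R z) = nl (R x) (nr e (R z))) ∧
    (∀ (x y : M) (e : N),
        l (al (R x) y) (S e) = nl (R x) (l y (S e))) ∧
    -- Axiom (x ≺ y + x ≻ y) ≻ z = x ≻ (y ≻ z):
    (∀ (e : N) (y z : M),
        r (S (nr e (R y) + r (S e) y)) z = r (S e) (al (R y) z)) ∧
    (∀ (x : M) (e : N) (z : M),
        r (S (l x (S e) + nl (R x) e)) z = nl (R x) (r (S e) z)) ∧
    (∀ (x y : M) (e : N),
        nl (R (ar x (R y) + al (R x) y)) e = nl (R x) (nl (R y) e)) := by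
  refine ⟨?_, ?_, ?_, ?_, ?_, ?_, ?_, ?_, ?_⟩
  · intro e y z
    rw [hnr, add_comm, ← hR]
  · intro x e z
    rw [← hl3, hsr, add_comm]
  · intro x y e
    rw [hl2, hrs, add_comm]
  · intro e y z
    rw [hr3]
  · intro x e z
    rw [hnlr]
  · intro x y e
    rw [hl1]
  · intro e y z
    rw [add_comm, ← hsr, hr2]
  · intro x e z
    rw [add_comm, ← hrs, hr1]
  · intro x y e
    rw [add_comm, ← hR, hnl]
end

section
/- Let M →^R A be a relative Rota-Baxter algebra and (N →^S B, l, r) a bimodule over it. Define m ▷_B b = R(m)·_B b − S(l(m, b)) and b ◁_B m = b·_B R(m) − S(r(b, m)). Then these maps make B into a bimodule over the associative algebra M_Tot = (M, ∗_R), where m ∗_R m' = R(m)·_M m' + m·_M R(m'). -/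
/-- The operations m ▷ b = R(m)·b − S(l(m,b)) and b ◁ m = b·R(m) − S(r(b,m)) make B
a bimodule over the total associative algebra M_Tot = (M, ∗_R). -/
theorem B_bimodule_over_total_algebra
    {K : Type*} [Field K] {A M B N : Type*}
    [AddCommGroup A] [Module K A] [AddCommGroup M] [Module K M]
    [AddCommGroup B] [Module K B] [AddCommGroup N] [Module K N]
    (mul : A →ₗ[K] A →ₗ[K] A)
    (hmul : ∀ a b c : A, mul (mul a b) c = mul a (mul b c))
    (al : A →ₗ[K] M →ₗ[K] M) (ar : M →ₗ[K] A →ₗ[K] M)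
    (hal : ∀ (a b : A) (m : M), al (mul a b) m = al a (al b m))
    (halr : ∀ (a : A) (m : M) (b : A), ar (al a m) b = al a (ar m b))
    (har : ∀ (m : M) (a b : A), ar (ar m a) b = ar m (mul a b))
    (R : M →ₗ[K] A)
    (hR : ∀ m m' : M, mul (R m) (R m') = R (al (R m) m' + ar m (R m')))
    (S : N →ₗ[K] B)
    (bl : A →ₗ[K] B →ₗ[K] B) (br : B →ₗ[K] A →ₗ[K] B)
    (hbl : ∀ (a a' : A) (b : B), bl (mul a a') b = bl a (bl a' b))
    (hblr : ∀ (a : A) (b : B) (a' : A), br (bl a b) a' = bl a (br b a'))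
    (hbr : ∀ (b : B) (a a' : A), br (br b a) a' = br b (mul a a'))
    (nl : A →ₗ[K] N →ₗ[K] N) (nr : N →ₗ[K] A →ₗ[K] N)
    (hnl : ∀ (a a' : A) (n : N), nl (mul a a') n = nl a (nl a' n))
    (hnlr : ∀ (a : A) (n : N) (a' : A), nr (nl a n) a' = nl a (nr n a'))
    (hnr : ∀ (n : N) (a a' : A), nr (nr n a) a' = nr n (mul a a'))
    (l : M →ₗ[K] B →ₗ[K] N) (r : B →ₗ[K] M →ₗ[K] N)
    (hl1 : ∀ (a : A) (m : M) (b : B), l (al a m) b = nl a (l m b))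
    (hl2 : ∀ (m : M) (a : A) (b : B), l (ar m a) b = l m (bl a b))
    (hl3 : ∀ (m : M) (b : B) (a : A), l m (br b a) = nr (l m b) a)
    (hr1 : ∀ (a : A) (b : B) (m : M), r (bl a b) m = nl a (r b m))
    (hr2 : ∀ (b : B) (a : A) (m : M), r (br b a) m = r b (al a m))
    (hr3 : ∀ (b : B) (m : M) (a : A), r b (ar m a) = nr (r b m) a)
    (hrs : ∀ (m : M) (n : N), bl (R m) (S n) = S (nl (R m) n + l m (S n)))
    (hsr : ∀ (n : N) (m : M), br (S n) (R m) = S (r (S n) m + nr n (R m)))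
    -- the actions of M_Tot on B
    (tri : M → B → B) (htri : ∀ m b, tri m b = bl (R m) b - S (l m b))
    (trd : B → M → B) (htrd : ∀ b m, trd b m = br b (R m) - S (r b m))
    -- the total associative multiplication on M
    (star : M → M → M) (hstar : ∀ m m', star m m' = al (R m) m' + ar m (R m')) :
    (∀ (m m' : M) (b : B), tri (star m m') b = tri m (tri m' b)) ∧
    (∀ (m : M) (b : B) (m' : M), trd (tri m b) m' = tri m (trd b m')) ∧
    (∀ (b : B) (m m' : M), trd (trd b m) m' = trd b (star m m')) := by
  refine ⟨?_, ?_, ?_⟩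
  · intro m m' b
    have h1 : R (star m m') = mul (R m) (R m') := by rw [hstar, hR]
    have h2 : l (star m m') b = nl (R m) (l m' b) + l m (bl (R m') b) := by
      rw [hstar]; simp [hl1, hl2]
    rw [htri, htri, htri, h1, h2, hbl, map_sub, map_sub, map_sub, hrs, map_add,
      map_add]
    abel
  · intro m b m'
    simp only [htri, htrd, map_sub, map_add, LinearMap.sub_apply,
      LinearMap.add_apply, hblr, hsr, hl3, hr1, hrs]
    abel
  · intro b m m'
    have h1 : R (star m m') = mul (R m) (R m') := by rw [hstar, hR]
    rw [htrd, htrd, htrd, h1]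
    simp only [hstar, map_sub, map_add, LinearMap.sub_apply, LinearMap.add_apply,
      hbr, hsr, hr2, hr3]
    abel
end

section
/- Let (D, ≺, ≻) be a dendriform algebra and E a representation of D. Give E two D_Tot-bimodule structures: E_Tot with 𝗑·e = 𝗑≺e + 𝗑≻e, e·𝗑 = e≺𝗑 + e≻𝗑; and E with 𝗑·e = 𝗑≻e, e·𝗑 = e≺𝗑. Then (E →^{id_E} E_Tot, l, r) with l(x, e) = x ≺ e and r(e, x) = e ≻ x is a bimodule over the relative Rota-Baxter algebra D →^{id_D} D_Tot. -/
/-- A representation E of a dendriform algebra D gives a bimodule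
(E →^{id} E_Tot, l, r) over the relative Rota-Baxter algebra D →^{id} D_Tot,
where l(x,e) = x ≺ e and r(e,x) = e ≻ x. -/
theorem dendriform_representation_gives_bimodule
    {K : Type*} [Field K] {D E : Type*}
    [AddCommGroup D] [Module K D] [AddCommGroup E] [Module K E]
    -- dendriform algebra D
    (pre suc : D →ₗ[K] D →ₗ[K] D)
    (hd1 : ∀ x y z : D, pre (pre x y) z = pre x (pre y z + suc y z))
    (hd2 : ∀ x y z : D, pre (suc x y) z = suc x (pre y z))
    (hd3 : ∀ x y z : D, suc (pre x y + suc x y) z = suc x (suc y z))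
    -- representation of D on E: x ≺ e, x ≻ e, e ≺ x, e ≻ x
    (pde sde : D →ₗ[K] E →ₗ[K] E) (ped sed : E →ₗ[K] D →ₗ[K] E)
    -- the nine representation identities
    (he1 : ∀ (e : E) (y z : D), ped (ped e y) z = ped e (pre y z + suc y z))
    (he2 : ∀ (x : D) (e : E) (z : D), ped (pde x e) z = pde x (ped e z + sed e z))
    (he3 : ∀ (x y : D) (e : E), pde (pre x y) e = pde x (pde y e + sde y e))
    (he4 : ∀ (e : E) (y z : D), ped (sed e y) z = sed e (pre y z))
    (he5 : ∀ (x : D) (e : E) (z : D), ped (sde x e) z = sde x (ped e z))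
    (he6 : ∀ (x y : D) (e : E), pde (suc x y) e = sde x (pde y e))
    (he7 : ∀ (e : E) (y z : D), sed (ped e y + sed e y) z = sed e (suc y z))
    (he8 : ∀ (x : D) (e : E) (z : D), sed (pde x e + sde x e) z = sde x (sed e z))
    (he9 : ∀ (x y : D) (e : E), sde (pre x y + suc x y) e = sde x (sde y e))
    -- total multiplication and the two D_Tot-bimodule structures on E
    (star : D → D → D) (hstar : ∀ x y, star x y = pre x y + suc x y)
    (bl : D → E → E) (hbl : ∀ x e, bl x e = pde x e + sde x e)  -- E_Tot, left
    (br : E → D → E) (hbr : ∀ e x, br e x = ped e x + sed e x)  -- E_Tot, right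
    (nl : D → E → E) (hnl : ∀ x e, nl x e = sde x e)            -- E, left
    (nr : E → D → E) (hnr : ∀ e x, nr e x = ped e x)            -- E, right
    (l : D → E → E) (hl : ∀ x e, l x e = pde x e)
    (r : E → D → E) (hr : ∀ e x, r e x = sed e x) :
    -- E_Tot is a D_Tot-bimodule
    (∀ (x y : D) (e : E), bl (star x y) e = bl x (bl y e)) ∧
    (∀ (x : D) (e : E) (y : D), br (bl x e) y = bl x (br e y)) ∧
    (∀ (e : E) (x y : D), br (br e x) y = br e (star x y)) ∧
    -- E is a D_Tot-bimodule
    (∀ (x y : D) (e : E), nl (star x y) e = nl x (nl y e)) ∧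
    (∀ (x : D) (e : E) (y : D), nr (nl x e) y = nl x (nr e y)) ∧
    (∀ (e : E) (x y : D), nr (nr e x) y = nr e (star x y)) ∧
    -- compatibility of l and r (here the D_Tot-bimodule structure on D is
    -- 𝗑·x = 𝗑 ≻ x, x·𝗑 = x ≺ 𝗑, and R = id_D, S = id_E)
    (∀ (a m : D) (e : E), l (suc a m) e = nl a (l m e)) ∧
    (∀ (m a : D) (e : E), l (pre m a) e = l m (bl a e)) ∧
    (∀ (m : D) (e : E) (a : D), l m (br e a) = nr (l m e) a) ∧
    (∀ (a : D) (e : E) (m : D), r (bl a e) m = nl a (r e m)) ∧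
    (∀ (e : E) (a m : D), r (br e a) m = r e (suc a m)) ∧
    (∀ (e : E) (m a : D), r e (pre m a) = nr (r e m) a) ∧
    -- the relative Rota-Baxter compatibilities with R = id_D and S = id_E
    (∀ (m : D) (n : E), bl m n = nl m n + l m n) ∧
    (∀ (n : E) (m : D), br n m = r n m + nr n m) := by
  subst_vars
  refine ⟨?_, ?_, ?_, ?_, ?_, ?_, ?_, ?_, ?_, ?_, ?_, ?_, ?_, ?_⟩ <;>
    intros <;>
    simp only [hstar, hbl, hbr, hnl, hnr, hl, hr, map_add, LinearMap.add_apply,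
      he1, he2, he3, he4, he5, he6, ← he7, ← he8, ← he9, map_add, LinearMap.add_apply] <;>
    abel
end

section
/- Let M →^R A be a relative Rota-Baxter algebra and (N →^S B, l, r) a bimodule over it. For each k ≥ 1, define ψ_k : Hom(M^⊗k, B) → Hom(k[C_{k+1}] ⊗ M^⊗(k+1), N) by ψ_k(f)([1]; m₁,…,m_{k+1}) = (−1)^{k+1} l(m₁, f(m₂,…,m_{k+1})), ψ_k(f)([r]; …) = 0 for 2 ≤ r ≤ k, and ψ_k(f)([k+1]; m₁,…,m_{k+1}) = r(f(m₁,…,m_k), m_{k+1}). Then ψ commutes with the differentials: δ_D ∘ ψ_k = ψ_{k+1} ∘ δ_{M,B}, where δ_{M,B} is the Hochschild differential of M_Tot with coefficients in B_{▷,◁} and δ_D is the dendriform cohomology differential of (M, ≺_R, ≻_R) with coefficients in N. -/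
/-- The Hochschild-type coboundary operator associated with a multiplication `mu`
and a pair of actions `aL`, `aR`. -/
def hochD {X Y : Type*} [AddCommGroup Y] (mu : X → X → X)
    (aL : X → Y → Y) (aR : Y → X → Y) {k : ℕ}
    (f : (Fin k → X) → Y) : (Fin (k + 1) → X) → Y :=
  fun a =>
    aL (a 0) (f (fun j => a j.succ))
      + ∑ i ∈ Finset.range k, ((-1 : ℤ) ^ (i + 1)) •
          f (fun j => if (j : ℕ) < i then a j.castSucc
              else if (j : ℕ) = i then mu (a j.castSucc) (a j.succ)
              else a j.succ)
      + ((-1 : ℤ) ^ (k + 1)) • aR (f (fun j => a j.castSucc)) (a (Fin.last k))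

/-- The Hochschild coboundary `δ_{M,B}` of the total algebra `M_Tot` with
coefficients in the bimodule `B_{▷,◁}`. -/
def dMB {A M B N : Type*} [AddCommGroup A] [AddCommGroup M] [AddCommGroup B]
    (al : A → M → M) (ar : M → A → M) (bl : A → B → B) (br : B → A → B)
    (R : M → A) (S : N → B) (l : M → B → N) (r : B → M → N) {k : ℕ}
    (γ : (Fin k → M) → B) : (Fin (k + 1) → M) → B :=
  hochD (fun m m' => al (R m) m' + ar m (R m'))
    (fun m b => bl (R m) b - S (l m b))
    (fun b m => br b (R m) - S (r b m)) γ

/-- The multilinear extension `f̂` of a dendriform cochain `f`, used to define the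
dendriform coboundary via the Hochschild complex of `D_Tot ⊕ D` with coefficients
in `E_Tot ⊕ E`. -/
def hatD {D E : Type*} [AddCommGroup E] {n : ℕ}
    (g : Fin n → (Fin n → D) → E) : (Fin n → D × D) → E × E :=
  fun z =>
    (∑ i : Fin n, g i (fun j => (z j).1),
     ∑ i : Fin n, g i (Function.update (fun j => (z j).1) i (z i).2))

/-- The dendriform coboundary `δ_D` of a dendriform algebra `(D, ≺, ≻)` with
coefficients in a representation `E`, defined via the Hochschild coboundary of the
associative algebra `D_Tot ⊕ D` with coefficients in `E_Tot ⊕ E`. -/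
def deltaD {D E : Type*} [AddCommGroup D] [AddCommGroup E]
    (pre suc : D → D → D) (pde sde : D → E → E) (ped sed : E → D → E) {n : ℕ}
    (g : Fin n → (Fin n → D) → E) : Fin (n + 1) → (Fin (n + 1) → D) → E :=
  fun i x =>
    (hochD
      (fun p q => (pre p.1 q.1 + suc p.1 q.1, suc p.1 q.2 + pre p.2 q.1))
      (fun p w => (pde p.1 w.1 + sde p.1 w.1, sde p.1 w.2 + pde p.2 w.1))
      (fun w p => (ped w.1 p.1 + sed w.1 p.1, sed w.1 p.2 + ped w.2 p.1))
      (hatD g) (fun j => if j = i then ((0 : D), x j) else (x j, 0))).2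

/-- The map `ψ_k` from Hochschild cochains of `M_Tot` with coefficients in
`B_{▷,◁}` to dendriform cochains of `(M, ≺_R, ≻_R)` with coefficients in `N`. -/
def psiMap {M B N : Type*} [AddCommGroup N]
    (l : M → B → N) (r : B → M → N) {k : ℕ}
    (f : (Fin k → M) → B) : Fin (k + 1) → (Fin (k + 1) → M) → N :=
  fun i m =>
    if (i : ℕ) = 0 then ((-1 : ℤ) ^ (k + 1)) • l (m 0) (f (fun j => m j.succ))
    else if (i : ℕ) = k then r (f (fun j => m j.castSucc)) (m (Fin.last k))
    else 0

section AuxChain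

/-- merge operator appearing in `hochD`. -/
def mrgF {X : Type*} (mu : X → X → X) {n : ℕ} (i : ℕ) (a : Fin (n+1) → X) : Fin n → X :=
  fun j => if (j : ℕ) < i then a j.castSucc
    else if (j : ℕ) = i then mu (a j.castSucc) (a j.succ)
    else a j.succ

lemma hochD_eq {X Y : Type*} [AddCommGroup Y] (mu : X → X → X)
    (aL : X → Y → Y) (aR : Y → X → Y) {k : ℕ}
    (f : (Fin k → X) → Y) (a : Fin (k+1) → X) :
    hochD mu aL aR f a =
      aL (a 0) (f (fun j => a j.succ))
        + ∑ i ∈ Finset.range k, ((-1 : ℤ) ^ (i + 1)) • f (mrgF mu i a)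
        + ((-1 : ℤ) ^ (k + 1)) • aR (f (fun j => a j.castSucc)) (a (Fin.last k)) := rfl

lemma dMB_eq {A M B N : Type*} [AddCommGroup A] [AddCommGroup M] [AddCommGroup B]
    (al : A → M → M) (ar : M → A → M) (bl : A → B → B) (br : B → A → B)
    (R : M → A) (S : N → B) (l : M → B → N) (r : B → M → N) {k : ℕ}
    (γ : (Fin k → M) → B) (a : Fin (k+1) → M) :
    dMB al ar bl br R S l r γ a =
      (bl (R (a 0)) (γ (fun j => a j.succ)) - S (l (a 0) (γ (fun j => a j.succ))))
        + ∑ i ∈ Finset.range k, ((-1 : ℤ) ^ (i + 1)) •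
            γ (mrgF (fun m m' => al (R m) m' + ar m (R m')) i a)
        + ((-1 : ℤ) ^ (k + 1)) •
            (br (γ (fun j => a j.castSucc)) (R (a (Fin.last k)))
              - S (r (γ (fun j => a j.castSucc)) (a (Fin.last k)))) := rfl

def hatP {M B N : Type*} [AddCommGroup N] (l : M → B → N) (r : B → M → N) {k : ℕ}
    (f : (Fin k → M) → B) (w : Fin (k+1) → M × M) : N :=
  ((-1 : ℤ) ^ (k + 1)) • l (w 0).1 (f (fun j => (w j.succ).1))
    + r (f (fun j => (w j.castSucc).1)) (w (Fin.last k)).1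

def hatQ {M B N : Type*} [AddCommGroup N] (l : M → B → N) (r : B → M → N) {k : ℕ}
    (f : (Fin k → M) → B) (w : Fin (k+1) → M × M) : N :=
  ((-1 : ℤ) ^ (k + 1)) • l (w 0).2 (f (fun j => (w j.succ).1))
    + r (f (fun j => (w j.castSucc).1)) (w (Fin.last k)).2

lemma psi_sum {M B N : Type*} [AddCommGroup N]
    (l : M → B → N) (r : B → M → N) {k : ℕ} (hk : 1 ≤ k)
    (f : (Fin k → M) → B) (v : Fin (k+1) → Fin (k+1) → M) :
    ∑ i : Fin (k+1), psiMap l r f i (v i)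
      = ((-1 : ℤ) ^ (k + 1)) • l (v 0 0) (f (fun j => v 0 j.succ))
        + r (f (fun j => v (Fin.last k) j.castSucc)) (v (Fin.last k) (Fin.last k)) := by
  have hne : (Fin.last k) ≠ (0 : Fin (k+1)) := by
    intro h
    have := congrArg (Fin.val) h
    simp only [Fin.val_last, Fin.val_zero] at this
    omega
  have key : ∀ i : Fin (k+1), psiMap l r f i (v i)
      = (if i = 0 then ((-1 : ℤ) ^ (k + 1)) • l (v i 0) (f (fun j => v i j.succ)) else 0)
        + (if i = Fin.last k then r (f (fun j => v i j.castSucc)) (v i (Fin.last k)) else 0) := by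
    intro i
    by_cases h1 : i = 0
    · subst h1
      simp [psiMap, hne.symm]
    · by_cases h2 : i = Fin.last k
      · subst h2
        have hkk : ((Fin.last k : Fin (k+1)) : ℕ) ≠ 0 := by
          simp only [Fin.val_last]; omega
        simp [psiMap, hkk, Nat.one_le_iff_ne_zero.mp hk]
      · have hv1 : (i : ℕ) ≠ 0 := fun h => h1 (Fin.ext h)
        have hv2 : (i : ℕ) ≠ k := fun h => h2 (Fin.ext h)
        simp [psiMap, hv1, hv2, h1, h2]
  rw [Finset.sum_congr rfl (fun i _ => key i), Finset.sum_add_distrib]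
  rw [Finset.sum_ite_eq' Finset.univ (0 : Fin (k+1)), Finset.sum_ite_eq' Finset.univ (Fin.last k)]
  simp

lemma hatD_psi {M B N : Type*} [AddCommGroup N]
    (l : M → B → N) (r : B → M → N)
    {k : ℕ} (hk : 1 ≤ k)
    (f : (Fin k → M) → B) (z : Fin (k+1) → M × M) :
    hatD (psiMap l r f) z = (hatP l r f z, hatQ l r f z) := by
  unfold hatD hatP hatQ
  refine Prod.ext ?_ ?_
  · simp only
    rw [psi_sum l r hk]
  · simp only
    rw [psi_sum l r hk]
    have e1 : Function.update (fun j => (z j).1) (0 : Fin (k+1)) (z 0).2 0 = (z 0).2 :=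
      Function.update_self _ _ _
    have e2 : (fun j : Fin k => Function.update (fun j => (z j).1) (0 : Fin (k+1)) (z 0).2 j.succ)
        = fun j => (z j.succ).1 := by
      funext j; exact Function.update_of_ne (Fin.succ_ne_zero j) _ _
    have e3 : (fun j : Fin k => Function.update (fun j => (z j).1) (Fin.last k) (z (Fin.last k)).2 j.castSucc)
        = fun j => (z j.castSucc).1 := by
      funext j; exact Function.update_of_ne (Fin.castSucc_lt_last j).ne _ _
    have e4 : Function.update (fun j => (z j).1) (Fin.last k) (z (Fin.last k)).2 (Fin.last k)
        = (z (Fin.last k)).2 := Function.update_self _ _ _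
    rw [e1, e2, e3, e4]

/-- the `z`-sequence of `deltaD`. -/
def zf {M : Type*} [AddCommGroup M] {n : ℕ} (i : Fin n) (x : Fin n → M) : Fin n → M × M :=
  fun j => if j = i then ((0 : M), x j) else (x j, 0)

def mu2 {M : Type*} [Add M] (pre suc : M → M → M) : M × M → M × M → M × M :=
  fun p q => (pre p.1 q.1 + suc p.1 q.1, suc p.1 q.2 + pre p.2 q.1)

lemma deltaD_psi_eq {M B N : Type*} [AddCommGroup M] [AddCommGroup N]
    (pre suc : M → M → M) (pde sde : M → N → N) (ped sed : N → M → N)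
    (l : M → B → N) (r : B → M → N) {k : ℕ} (hk : 1 ≤ k)
    (f : (Fin k → M) → B) (i : Fin (k+2)) (x : Fin (k+2) → M) :
    deltaD pre suc pde sde ped sed (psiMap l r f) i x =
      (sde (zf i x 0).1 (hatQ l r f (fun j => zf i x j.succ))
          + pde (zf i x 0).2 (hatP l r f (fun j => zf i x j.succ)))
        + ∑ i' ∈ Finset.range (k+1), ((-1 : ℤ) ^ (i' + 1)) •
            hatQ l r f (mrgF (mu2 pre suc) i' (zf i x))
        + ((-1 : ℤ) ^ (k + 2)) •
            (sed (hatP l r f (fun j => zf i x j.castSucc)) (zf i x (Fin.last (k+1))).2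
              + ped (hatQ l r f (fun j => zf i x j.castSucc)) (zf i x (Fin.last (k+1))).1) := by
  show (hochD _ _ _ (hatD (psiMap l r f)) (zf i x)).2 = _
  rw [hochD_eq]
  rw [hatD_psi l r hk, hatD_psi l r hk]
  simp only [Prod.snd_add, Prod.smul_snd, Prod.snd_sum]
  have hsum : ∑ i' ∈ Finset.range (k+1), ((-1 : ℤ) ^ (i' + 1)) •
        (hatD (psiMap l r f)
          (mrgF (fun p q => (pre p.1 q.1 + suc p.1 q.1, suc p.1 q.2 + pre p.2 q.1)) i' (zf i x))).2
      = ∑ i' ∈ Finset.range (k+1), ((-1 : ℤ) ^ (i' + 1)) •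
          hatQ l r f (mrgF (mu2 pre suc) i' (zf i x)) :=
    Finset.sum_congr rfl (fun i' _ => by rw [hatD_psi l r hk]; rfl)
  rw [hsum]

lemma hatQ_eval {M B N : Type*} [AddCommGroup M] [AddCommGroup N]
    (l : M → B → N) (r : B → M → N) {k : ℕ} (f : (Fin k → M) → B)
    (v : Fin (k+1) → M × M) (c : M)
    (h0 : (v 0).2 = c) (hl : (v (Fin.last k)).2 = 0) (hr0 : ∀ b, r b (0:M) = 0) :
    hatQ l r f v = ((-1 : ℤ) ^ (k + 1)) • l c (f (fun j => (v j.succ).1)) := by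
  unfold hatQ; rw [h0, hl, hr0, add_zero]

lemma hatQ_eval' {M B N : Type*} [AddCommGroup M] [AddCommGroup N]
    (l : M → B → N) (r : B → M → N) {k : ℕ} (f : (Fin k → M) → B)
    (v : Fin (k+1) → M × M) (c : M)
    (h0 : (v 0).2 = 0) (hl : (v (Fin.last k)).2 = c) (hl0 : ∀ b, l (0:M) b = 0) :
    hatQ l r f v = r (f (fun j => (v j.castSucc).1)) c := by
  unfold hatQ; rw [h0, hl, hl0, smul_zero, zero_add]

lemma hatQ_zero {M B N : Type*} [AddCommGroup M] [AddCommGroup N]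
    (l : M → B → N) (r : B → M → N) {k : ℕ} (f : (Fin k → M) → B)
    (v : Fin (k+1) → M × M)
    (h0 : (v 0).2 = 0) (hl : (v (Fin.last k)).2 = 0)
    (hl0 : ∀ b, l (0:M) b = 0) (hr0 : ∀ b, r b (0:M) = 0) :
    hatQ l r f v = 0 := by
  unfold hatQ; rw [h0, hl, hl0, hr0, smul_zero, add_zero]

lemma psiMap_zero {M B N : Type*} [AddCommGroup N]
    (l : M → B → N) (r : B → M → N) {K : ℕ} (g : (Fin K → M) → B) (x : Fin (K+1) → M) :
    psiMap l r g 0 x = ((-1 : ℤ) ^ (K + 1)) • l (x 0) (g (fun j => x j.succ)) := by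
  simp [psiMap]

lemma psiMap_last {M B N : Type*} [AddCommGroup N]
    (l : M → B → N) (r : B → M → N) {K : ℕ} (hK : 1 ≤ K) (g : (Fin K → M) → B)
    (x : Fin (K+1) → M) :
    psiMap l r g (Fin.last K) x = r (g (fun j => x j.castSucc)) (x (Fin.last K)) := by
  have h1 : ((Fin.last K : Fin (K+1)) : ℕ) = K := Fin.val_last K
  simp [psiMap, h1, Nat.one_le_iff_ne_zero.mp hK]

lemma psiMap_mid {M B N : Type*} [AddCommGroup N]
    (l : M → B → N) (r : B → M → N) {K : ℕ} (g : (Fin K → M) → B)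
    (i : Fin (K+1)) (h0 : (i : ℕ) ≠ 0) (hK : (i : ℕ) ≠ K) (x : Fin (K+1) → M) :
    psiMap l r g i x = 0 := by
  simp [psiMap, h0, hK]

end AuxChain


/-- The maps `ψ_k` commute with the differentials: `δ_D ∘ ψ_k = ψ_{k+1} ∘ δ_{M,B}`. -/
theorem psi_is_chain_map
    {K : Type*} [Field K] {A M B N : Type*}
    [AddCommGroup A] [Module K A] [AddCommGroup M] [Module K M]
    [AddCommGroup B] [Module K B] [AddCommGroup N] [Module K N]
    (mul : A →ₗ[K] A →ₗ[K] A)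
    (hmul : ∀ a b c : A, mul (mul a b) c = mul a (mul b c))
    (al : A →ₗ[K] M →ₗ[K] M) (ar : M →ₗ[K] A →ₗ[K] M)
    (hal : ∀ (a b : A) (m : M), al (mul a b) m = al a (al b m))
    (halr : ∀ (a : A) (m : M) (b : A), ar (al a m) b = al a (ar m b))
    (har : ∀ (m : M) (a b : A), ar (ar m a) b = ar m (mul a b))
    (R : M →ₗ[K] A)
    (hR : ∀ m m' : M, mul (R m) (R m') = R (al (R m) m' + ar m (R m')))
    (S : N →ₗ[K] B)
    (bl : A →ₗ[K] B →ₗ[K] B) (br : B →ₗ[K] A →ₗ[K] B)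
    (hbl : ∀ (a a' : A) (b : B), bl (mul a a') b = bl a (bl a' b))
    (hblr : ∀ (a : A) (b : B) (a' : A), br (bl a b) a' = bl a (br b a'))
    (hbr : ∀ (b : B) (a a' : A), br (br b a) a' = br b (mul a a'))
    (nl : A →ₗ[K] N →ₗ[K] N) (nr : N →ₗ[K] A →ₗ[K] N)
    (hnl : ∀ (a a' : A) (n : N), nl (mul a a') n = nl a (nl a' n))
    (hnlr : ∀ (a : A) (n : N) (a' : A), nr (nl a n) a' = nl a (nr n a'))
    (hnr : ∀ (n : N) (a a' : A), nr (nr n a) a' = nr n (mul a a'))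
    (l : M →ₗ[K] B →ₗ[K] N) (r : B →ₗ[K] M →ₗ[K] N)
    (hl1 : ∀ (a : A) (m : M) (b : B), l (al a m) b = nl a (l m b))
    (hl2 : ∀ (m : M) (a : A) (b : B), l (ar m a) b = l m (bl a b))
    (hl3 : ∀ (m : M) (b : B) (a : A), l m (br b a) = nr (l m b) a)
    (hr1 : ∀ (a : A) (b : B) (m : M), r (bl a b) m = nl a (r b m))
    (hr2 : ∀ (b : B) (a : A) (m : M), r (br b a) m = r b (al a m))
    (hr3 : ∀ (b : B) (m : M) (a : A), r b (ar m a) = nr (r b m) a)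
    (hrs : ∀ (m : M) (n : N), bl (R m) (S n) = S (nl (R m) n + l m (S n)))
    (hsr : ∀ (n : N) (m : M), br (S n) (R m) = S (r (S n) m + nr n (R m))) :
    ∀ (k : ℕ), 1 ≤ k →
      ∀ (f : MultilinearMap K (fun _ : Fin k => M) B),
        deltaD
            -- the dendriform structure (M, ≺_R, ≻_R)
            (fun x y => ar x (R y)) (fun x y => al (R x) y)
            -- the induced representation of (M, ≺_R, ≻_R) on N
            (fun x e => l x (S e)) (fun x e => nl (R x) e)
            (fun e x => nr e (R x)) (fun e x => r (S e) x)
            (psiMap (fun x b => l x b) (fun b x => r b x) (fun v => f v))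
          = psiMap (fun x b => l x b) (fun b x => r b x)
              (dMB (fun a x => al a x) (fun x a => ar x a)
                (fun a b => bl a b) (fun b a => br b a)
                (fun x => R x) (fun n => S n)
                (fun x b => l x b) (fun b x => r b x) (fun v => f v)) := by
  intro k hk f
  funext i x
  have hl0 : ∀ b : B, l (0:M) b = 0 := fun b => by simp
  have hr0 : ∀ b : B, r b (0:M) = 0 := fun b => by simp
  have hz1 : ∀ j : Fin (k+2), j ≠ i → (zf i x j).1 = x j := fun j h => by simp [zf, h]
  have hz2 : ∀ j : Fin (k+2), j ≠ i → (zf i x j).2 = 0 := fun j h => by simp [zf, h]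
  rw [deltaD_psi_eq _ _ _ _ _ _ _ _ hk]
  by_cases hi : i = 0
  · subst hi
    have hz01 : (zf (0:Fin (k+2)) x 0).1 = 0 := by simp [zf]
    have hz02 : (zf (0:Fin (k+2)) x 0).2 = x 0 := by simp [zf]
    have hlne : (Fin.last (k+1) : Fin (k+2)) ≠ 0 := by
      intro h; have := congrArg Fin.val h
      simp only [Fin.val_last, Fin.val_zero] at this; omega
    have hzl1 : (zf (0:Fin (k+2)) x (Fin.last (k+1))).1 = x (Fin.last (k+1)) := hz1 _ hlne
    have hzl2 : (zf (0:Fin (k+2)) x (Fin.last (k+1))).2 = 0 := hz2 _ hlne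
    have hPsucc : hatP (fun x b => l x b) (fun b x => r b x) (fun v => f v)
        (fun j => zf (0:Fin (k+2)) x j.succ)
        = ((-1:ℤ)^(k+1)) • l (x ((0:Fin (k+1)).succ)) (f (fun j => x ((j.succ).succ)))
          + r (f (fun j => x ((j.castSucc).succ))) (x ((Fin.last k).succ)) := by
      simp [hatP, zf, Fin.succ_ne_zero]
    have hQcast : hatQ (fun x b => l x b) (fun b x => r b x) (fun v => f v)
        (fun j => zf (0:Fin (k+2)) x j.castSucc)
        = ((-1:ℤ)^(k+1)) • l (x 0) (f (fun j => x ((j.succ).castSucc))) := by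
      have hlkc : ((Fin.last k).castSucc : Fin (k+2)) ≠ 0 := by
        intro h; have := congrArg Fin.val h
        simp only [Fin.coe_castSucc, Fin.val_last, Fin.val_zero] at this; omega
      have hcsne : ∀ j : Fin k, ((j.succ).castSucc : Fin (k+2)) ≠ 0 := fun j => by
        intro h; have := congrArg Fin.val h
        simp only [Fin.coe_castSucc, Fin.val_succ, Fin.val_zero] at this; omega
      simp [hatQ, zf, hlkc, hcsne, Fin.castSucc_zero]
    have hF0 : ((-1:ℤ)^(0+1)) • hatQ (fun x b => l x b) (fun b x => r b x) (fun v => f v)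
        (mrgF (mu2 (fun x y => ar x (R y)) (fun x y => al (R x) y)) 0 (zf (0:Fin (k+2)) x))
        = -(((-1:ℤ)^(k+1)) • l (ar (x 0) (R (x ((0:Fin (k+1)).succ)))) (f (fun j => x ((j.succ).succ)))) := by
      have h0 : (mrgF (mu2 (fun x y => ar x (R y)) (fun x y => al (R x) y)) 0 (zf (0:Fin (k+2)) x) 0).2
          = ar (x 0) (R (x ((0:Fin (k+1)).succ))) := by
        simp [mrgF, mu2, zf, Fin.succ_ne_zero, Fin.castSucc_zero]
      have hlst : (mrgF (mu2 (fun x y => ar x (R y)) (fun x y => al (R x) y)) 0 (zf (0:Fin (k+2)) x) (Fin.last k)).2 = 0 := by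
        simp only [mrgF]
        split_ifs with h1 h2
        · exact absurd h1 (by omega)
        · exfalso; simp only [Fin.val_last] at h2; omega
        · exact hz2 _ (Fin.succ_ne_zero _)
      rw [hatQ_eval _ _ _ _ _ h0 hlst hr0]
      have harg : (fun j : Fin k => ((mrgF (mu2 (fun x y => ar x (R y)) (fun x y => al (R x) y)) 0 (zf (0:Fin (k+2)) x)) j.succ).1)
          = fun j => x ((j.succ).succ) := by
        funext j
        have h2 : ((j.succ : Fin (k+1)) : ℕ) ≠ 0 := by simp [Fin.val_succ]
        simp [mrgF, h2, zf, Fin.succ_ne_zero]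
      rw [harg]
      simp
    have hFsucc : ∀ i'' ∈ Finset.range k, ((-1:ℤ)^(i''+1+1)) • hatQ (fun x b => l x b) (fun b x => r b x) (fun v => f v)
        (mrgF (mu2 (fun x y => ar x (R y)) (fun x y => al (R x) y)) (i''+1) (zf (0:Fin (k+2)) x))
        = ((-1:ℤ)^(k+1+1) * (-1:ℤ)^(i''+1)) • l (x 0)
            (f (mrgF (fun m m' => al (R m) m' + ar m (R m')) i'' (fun j => x j.succ))) := by
      intro i'' hm
      rw [Finset.mem_range] at hm
      have h0 : (mrgF (mu2 (fun x y => ar x (R y)) (fun x y => al (R x) y)) (i''+1) (zf (0:Fin (k+2)) x) 0).2 = x 0 := by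
        have h : ((0 : Fin (k+1)) : ℕ) < i''+1 := by simp
        simp [mrgF, h, Fin.castSucc_zero, zf]
      have hlst : (mrgF (mu2 (fun x y => ar x (R y)) (fun x y => al (R x) y)) (i''+1) (zf (0:Fin (k+2)) x) (Fin.last k)).2 = 0 := by
        have hlkc : ((Fin.last k).castSucc : Fin (k+2)) ≠ 0 := by
          intro h; have := congrArg Fin.val h
          simp only [Fin.coe_castSucc, Fin.val_last, Fin.val_zero] at this; omega
        simp only [mrgF]
        split_ifs with h1 h2
        · exact hz2 _ hlkc
        · simp [mu2, hz2 _ hlkc, hz2 _ (Fin.succ_ne_zero _), hz2 _ hlne]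
        · exact hz2 _ (Fin.succ_ne_zero _)
      rw [hatQ_eval _ _ _ _ _ h0 hlst hr0]
      have harg : (fun j : Fin k => ((mrgF (mu2 (fun x y => ar x (R y)) (fun x y => al (R x) y)) (i''+1) (zf (0:Fin (k+2)) x)) j.succ).1)
          = mrgF (fun m m' => al (R m) m' + ar m (R m')) i'' (fun j => x j.succ) := by
        funext j
        have hcsne : ((j.succ).castSucc : Fin (k+2)) ≠ 0 := by
          intro h; have := congrArg Fin.val h
          simp only [Fin.coe_castSucc, Fin.val_succ, Fin.val_zero] at this; omega
        by_cases hc1 : (j : ℕ) < i''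
        · have e1 : ((j.succ : Fin (k+1)) : ℕ) < i''+1 := by
            simp only [Fin.val_succ]; omega
          simp [mrgF, e1, hc1, zf, hcsne, Fin.succ_castSucc, -Fin.castSucc_succ]
        · by_cases hc2 : (j : ℕ) = i''
          · have e1 : ¬ ((j.succ : Fin (k+1)) : ℕ) < i''+1 := by
              simp only [Fin.val_succ]; omega
            have e2 : ((j.succ : Fin (k+1)) : ℕ) = i''+1 := by
              simp only [Fin.val_succ]; omega
            simp [mrgF, e1, e2, hc1, hc2, mu2, zf, hcsne, Fin.succ_ne_zero, Fin.succ_castSucc, -Fin.castSucc_succ]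
            exact add_comm _ _
          · have e1 : ¬ ((j.succ : Fin (k+1)) : ℕ) < i''+1 := by
              simp only [Fin.val_succ]; omega
            have e2 : ((j.succ : Fin (k+1)) : ℕ) ≠ i''+1 := by
              simp only [Fin.val_succ]; omega
            simp [mrgF, e1, e2, hc1, hc2, zf, Fin.succ_ne_zero]
      rw [harg, smul_smul]
      congr 1
      rw [← pow_add, ← pow_add]
      congr 1
      omega
    simp only [Finset.sum_range_succ']
    rw [Finset.sum_congr rfl hFsucc, hF0]
    simp only [psiMap_zero, dMB_eq, hPsucc, hQcast, hz01, hz02, hzl1, hzl2]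
    simp only [map_zero, LinearMap.zero_apply, zero_add, add_zero, smul_zero, map_add, map_sub,
      map_zsmul, smul_add, smul_sub, smul_smul, map_sum, Finset.smul_sum, neg_smul,
      LinearMap.smul_apply, LinearMap.add_apply, LinearMap.sub_apply,
      Fin.succ_last, Fin.succ_castSucc, Fin.castSucc_zero, Nat.succ_eq_add_one]
    rw [← hl2 (x 0) (R (x ((0:Fin (k+1)).succ)))]
    rw [hl3]
    rcases Nat.even_or_odd k with hpar | hpar
    · have h1 : ((-1:ℤ))^k = 1 := hpar.neg_one_pow
      have e1 : ((-1:ℤ))^(k+1) = -1 := by rw [pow_succ, h1]; ring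
      have e2 : ((-1:ℤ))^(k+2) = 1 := by rw [show k+2 = (k+1)+1 by omega, pow_succ, e1]; ring
      have e3 : ((-1:ℤ))^(k+1+1) = 1 := by rw [pow_succ, e1]; ring
      simp only [e1, e2, e3, h1]
      module
    · have h1 : ((-1:ℤ))^k = -1 := hpar.neg_one_pow
      have e1 : ((-1:ℤ))^(k+1) = 1 := by rw [pow_succ, h1]; ring
      have e2 : ((-1:ℤ))^(k+2) = -1 := by rw [show k+2 = (k+1)+1 by omega, pow_succ, e1]; ring
      have e3 : ((-1:ℤ))^(k+1+1) = -1 := by rw [pow_succ, e1]; ring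
      simp only [e1, e2, e3, h1]
      module
  · by_cases hil : i = Fin.last (k+1)
    · subst hil
      have h0ne : (0 : Fin (k+2)) ≠ Fin.last (k+1) := by
        intro h; have := congrArg Fin.val h
        simp only [Fin.val_zero, Fin.val_last] at this; omega
      have hz01 : (zf (Fin.last (k+1)) x 0).1 = x 0 := hz1 _ h0ne
      have hz02 : (zf (Fin.last (k+1)) x 0).2 = 0 := hz2 _ h0ne
      have hzl1 : (zf (Fin.last (k+1)) x (Fin.last (k+1))).1 = 0 := by simp [zf]
      have hzl2 : (zf (Fin.last (k+1)) x (Fin.last (k+1))).2 = x (Fin.last (k+1)) := by simp [zf]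
      have hcne : ∀ j : Fin (k+1), (j.castSucc : Fin (k+2)) ≠ Fin.last (k+1) := fun j => by
        intro h; have h2 := congrArg Fin.val h; have h3 := j.isLt
        simp only [Fin.coe_castSucc, Fin.val_last] at h2; omega
      have h1ne : (((0:Fin (k+1)).succ : Fin (k+2))) ≠ Fin.last (k+1) := by
        intro h; have h2 := congrArg Fin.val h
        simp only [Fin.val_succ, Fin.val_zero, Fin.val_last] at h2; omega
      have hsne : ∀ j : Fin k, (((j.succ).castSucc : Fin (k+2))) ≠ Fin.last (k+1) := fun j =>
        hcne _
      have h1ne' : (1 : Fin (k+2)) ≠ Fin.last (k+1) := by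
        intro h; have h2 := congrArg Fin.val h
        simp only [Fin.val_one, Fin.val_last] at h2; omega
      have hQsucc : hatQ (fun x b => l x b) (fun b x => r b x) (fun v => f v)
          (fun j => zf (Fin.last (k+1)) x j.succ)
          = r (f (fun j => x ((j.succ).castSucc))) (x (Fin.last (k+1))) := by
        simp [hatQ, zf, h1ne, h1ne', hsne, Fin.succ_last, Fin.succ_castSucc, -Fin.castSucc_succ, hcne]
      have hPcast : hatP (fun x b => l x b) (fun b x => r b x) (fun v => f v)
          (fun j => zf (Fin.last (k+1)) x j.castSucc)
          = ((-1:ℤ)^(k+1)) • l (x 0) (f (fun j => x ((j.succ).castSucc)))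
            + r (f (fun j => x ((j.castSucc).castSucc))) (x ((Fin.last k).castSucc)) := by
        simp [hatP, zf, hcne, h0ne, Fin.castSucc_zero, Fin.succ_castSucc, -Fin.castSucc_succ]
      have hFk : ((-1:ℤ)^(k+1)) • hatQ (fun x b => l x b) (fun b x => r b x) (fun v => f v)
          (mrgF (mu2 (fun x y => ar x (R y)) (fun x y => al (R x) y)) k (zf (Fin.last (k+1)) x))
          = ((-1:ℤ)^(k+1)) • r (f (fun j => x ((j.castSucc).castSucc)))
              (al (R (x ((Fin.last k).castSucc))) (x (Fin.last (k+1)))) := by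
        have h0 : (mrgF (mu2 (fun x y => ar x (R y)) (fun x y => al (R x) y)) k (zf (Fin.last (k+1)) x) 0).2 = 0 := by
          have hc : ((0:Fin (k+1)):ℕ) < k := by simp only [Fin.val_zero]; omega
          simp only [mrgF, if_pos hc]
          rw [Fin.castSucc_zero]; exact hz02
        have hl' : (mrgF (mu2 (fun x y => ar x (R y)) (fun x y => al (R x) y)) k (zf (Fin.last (k+1)) x) (Fin.last k)).2
            = al (R (x ((Fin.last k).castSucc))) (x (Fin.last (k+1))) := by
          have e1 : ¬ ((Fin.last k : Fin (k+1)):ℕ) < k := by simp [Fin.val_last]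
          have e2 : ((Fin.last k : Fin (k+1)):ℕ) = k := Fin.val_last k
          simp only [mrgF, if_neg e1, if_pos e2, mu2]
          rw [Fin.succ_last]
          rw [hz1 _ (hcne _), hz2 _ (hcne _), hzl2]
          simp
        rw [hatQ_eval' _ _ _ _ _ h0 hl' hl0]
        have harg : (fun j : Fin k => ((mrgF (mu2 (fun x y => ar x (R y)) (fun x y => al (R x) y)) k (zf (Fin.last (k+1)) x)) j.castSucc).1)
            = fun j => x ((j.castSucc).castSucc) := by
          funext j
          have hc : ((j.castSucc : Fin (k+1)):ℕ) < k := by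
            simp only [Fin.coe_castSucc]; exact j.isLt
          simp only [mrgF, if_pos hc]
          exact hz1 _ (hcne _)
        rw [harg]
      have hFmid : ∀ i'' ∈ Finset.range k, ((-1:ℤ)^(i''+1)) • hatQ (fun x b => l x b) (fun b x => r b x) (fun v => f v)
          (mrgF (mu2 (fun x y => ar x (R y)) (fun x y => al (R x) y)) i'' (zf (Fin.last (k+1)) x))
          = ((-1:ℤ)^(i''+1)) • r (f (mrgF (fun m m' => al (R m) m' + ar m (R m')) i'' (fun j => x j.castSucc)))
              (x (Fin.last (k+1))) := by
        intro i'' hm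
        rw [Finset.mem_range] at hm
        have h0 : (mrgF (mu2 (fun x y => ar x (R y)) (fun x y => al (R x) y)) i'' (zf (Fin.last (k+1)) x) 0).2 = 0 := by
          by_cases hc : ((0:Fin (k+1)):ℕ) < i''
          · simp only [mrgF, if_pos hc]
            rw [Fin.castSucc_zero]; exact hz02
          · have hc2 : ((0:Fin (k+1)):ℕ) = i'' := by
              simp only [Fin.val_zero] at hc ⊢; omega
            simp only [mrgF, if_neg hc, if_pos hc2, mu2]
            rw [Fin.castSucc_zero]
            rw [hz02, hz2 _ h1ne]
            simp
        have hl' : (mrgF (mu2 (fun x y => ar x (R y)) (fun x y => al (R x) y)) i'' (zf (Fin.last (k+1)) x) (Fin.last k)).2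
            = x (Fin.last (k+1)) := by
          have e1 : ¬ ((Fin.last k : Fin (k+1)):ℕ) < i'' := by simp [Fin.val_last]; omega
          have e2 : ((Fin.last k : Fin (k+1)):ℕ) ≠ i'' := by simp [Fin.val_last]; omega
          simp only [mrgF, if_neg e1, if_neg e2]
          rw [Fin.succ_last]; exact hzl2
        rw [hatQ_eval' _ _ _ _ _ h0 hl' hl0]
        have harg : (fun j : Fin k => ((mrgF (mu2 (fun x y => ar x (R y)) (fun x y => al (R x) y)) i'' (zf (Fin.last (k+1)) x)) j.castSucc).1)
            = mrgF (fun m m' => al (R m) m' + ar m (R m')) i'' (fun j => x j.castSucc) := by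
          funext j
          by_cases hc1 : (j:ℕ) < i''
          · have e1 : ((j.castSucc : Fin (k+1)):ℕ) < i'' := by simpa [Fin.coe_castSucc] using hc1
            simp only [mrgF, if_pos e1, if_pos hc1]
            exact hz1 _ (hcne _)
          · by_cases hc2 : (j:ℕ) = i''
            · have e1 : ¬ ((j.castSucc : Fin (k+1)):ℕ) < i'' := by simpa [Fin.coe_castSucc] using hc1
              have e2 : ((j.castSucc : Fin (k+1)):ℕ) = i'' := by simpa [Fin.coe_castSucc] using hc2
              simp only [mrgF, if_neg e1, if_pos e2, if_neg hc1, if_pos hc2, mu2]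
              rw [hz1 _ (hcne _), hz1 _ (by rw [Fin.succ_castSucc]; exact hcne _)]
              rw [Fin.succ_castSucc]
              exact add_comm _ _
            · have e1 : ¬ ((j.castSucc : Fin (k+1)):ℕ) < i'' := by simpa [Fin.coe_castSucc] using hc1
              have e2 : ((j.castSucc : Fin (k+1)):ℕ) ≠ i'' := by simpa [Fin.coe_castSucc] using hc2
              simp only [mrgF, if_neg e1, if_neg e2, if_neg hc1, if_neg hc2]
              rw [Fin.succ_castSucc]
              exact hz1 _ (hcne _)
        rw [harg]
      simp only [Finset.sum_range_succ]
      rw [Finset.sum_congr rfl hFmid, hFk]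
      rw [psiMap_last _ _ (Nat.le_add_left 1 k)]
      simp only [dMB_eq, hQsucc, hPcast, hz01, hz02, hzl1, hzl2]
      simp only [map_zero, LinearMap.zero_apply, zero_add, add_zero, smul_zero, map_add, map_sub,
        map_zsmul, smul_add, smul_sub, smul_smul, map_sum, Finset.smul_sum, neg_smul,
        LinearMap.smul_apply, LinearMap.add_apply, LinearMap.sub_apply,
        LinearMap.coe_sum, Finset.sum_apply,
        Fin.succ_last, Fin.succ_castSucc, Fin.castSucc_zero, Nat.succ_eq_add_one]
      rw [hr1, hr2]
      rcases Nat.even_or_odd k with hpar | hpar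
      · have h1 : ((-1:ℤ))^k = 1 := hpar.neg_one_pow
        have e1 : ((-1:ℤ))^(k+1) = -1 := by rw [pow_succ, h1]; ring
        have e2 : ((-1:ℤ))^(k+2) = 1 := by rw [show k+2 = (k+1)+1 by omega, pow_succ, e1]; ring
        have e3 : ((-1:ℤ))^(k+1+1) = 1 := by rw [pow_succ, e1]; ring
        simp only [e1, e2, e3, h1]
        module
      · have h1 : ((-1:ℤ))^k = -1 := hpar.neg_one_pow
        have e1 : ((-1:ℤ))^(k+1) = 1 := by rw [pow_succ, h1]; ring
        have e2 : ((-1:ℤ))^(k+2) = -1 := by rw [show k+2 = (k+1)+1 by omega, pow_succ, e1]; ring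
        have e3 : ((-1:ℤ))^(k+1+1) = -1 := by rw [pow_succ, e1]; ring
        simp only [e1, e2, e3, h1]
        module
    · -- middle case
      have hv0 : (i:ℕ) ≠ 0 := fun h => hi (by apply Fin.ext; simp [h])
      have hvl : (i:ℕ) ≠ k+1 := fun h => hil (by apply Fin.ext; simp [h, Fin.val_last])
      have h0ne : (0:Fin (k+2)) ≠ i := fun h => hv0 (by rw [← h]; rfl)
      have hlne : (Fin.last (k+1) : Fin (k+2)) ≠ i := fun h => hvl (by rw [← h]; simp [Fin.val_last])
      have hz01 : (zf i x 0).1 = x 0 := hz1 _ h0ne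
      have hz02 : (zf i x 0).2 = 0 := hz2 _ h0ne
      have hzl1 : (zf i x (Fin.last (k+1))).1 = x (Fin.last (k+1)) := hz1 _ hlne
      have hzl2 : (zf i x (Fin.last (k+1))).2 = 0 := hz2 _ hlne
      rw [psiMap_mid _ _ _ i hv0 hvl x]
      have hsum1 : ∀ i' ∈ Finset.range (k+1), ((-1:ℤ)^(i'+1)) • hatQ (fun x b => l x b) (fun b x => r b x) (fun v => f v)
            (mrgF (mu2 (fun x y => ar x (R y)) (fun x y => al (R x) y)) i' (zf i x))
          = (if i' = 0 then ((-1:ℤ)^(0+1)) • hatQ (fun x b => l x b) (fun b x => r b x) (fun v => f v)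
                (mrgF (mu2 (fun x y => ar x (R y)) (fun x y => al (R x) y)) 0 (zf i x)) else 0)
            + (if i' = k then ((-1:ℤ)^(k+1)) • hatQ (fun x b => l x b) (fun b x => r b x) (fun v => f v)
                (mrgF (mu2 (fun x y => ar x (R y)) (fun x y => al (R x) y)) k (zf i x)) else 0) := by
        intro i' hm
        rw [Finset.mem_range] at hm
        by_cases c0 : i' = 0
        · subst c0
          have : (0:ℕ) ≠ k := by omega
          simp [this]
        · by_cases ck : i' = k
          · subst ck
            simp [c0]
          · have hQ0 : hatQ (fun x b => l x b) (fun b x => r b x) (fun v => f v)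
                (mrgF (mu2 (fun x y => ar x (R y)) (fun x y => al (R x) y)) i' (zf i x)) = 0 := by
              apply hatQ_zero _ _ _ _ ?_ ?_ hl0 hr0
              · have hc : ((0:Fin (k+1)):ℕ) < i' := by
                  simp only [Fin.val_zero]; omega
                simp only [mrgF, if_pos hc]
                rw [Fin.castSucc_zero]; exact hz02
              · have e1 : ¬ ((Fin.last k : Fin (k+1)):ℕ) < i' := by simp [Fin.val_last]; omega
                have e2 : ((Fin.last k : Fin (k+1)):ℕ) ≠ i' := by simp [Fin.val_last]; omega
                simp only [mrgF, if_neg e1, if_neg e2]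
                rw [Fin.succ_last]; exact hzl2
            rw [hQ0]
            simp [c0, ck]
      rw [Finset.sum_congr rfl hsum1, Finset.sum_add_distrib,
        Finset.sum_ite_eq' (Finset.range (k+1)) (0:ℕ), Finset.sum_ite_eq' (Finset.range (k+1)) k]
      rw [if_pos (Finset.mem_range.mpr (by omega : (0:ℕ) < k+1)),
        if_pos (Finset.mem_range.mpr (by omega : k < k+1))]
      have hF0e : hatQ (fun x b => l x b) (fun b x => r b x) (fun v => f v)
          (mrgF (mu2 (fun x y => ar x (R y)) (fun x y => al (R x) y)) 0 (zf i x))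
          = ((-1:ℤ)^(k+1)) • l (al (R (x 0)) ((zf i x ((0:Fin (k+1)).succ)).2))
              (f (fun j => (zf i x ((j.succ).succ)).1)) := by
        have h0 : (mrgF (mu2 (fun x y => ar x (R y)) (fun x y => al (R x) y)) 0 (zf i x) 0).2
            = al (R (x 0)) ((zf i x ((0:Fin (k+1)).succ)).2) := by
          have hc1 : ¬ ((0:Fin (k+1)):ℕ) < 0 := by omega
          have hc2 : ((0:Fin (k+1)):ℕ) = 0 := rfl
          simp only [mrgF, if_neg hc1, if_pos hc2, mu2]
          rw [Fin.castSucc_zero, hz01, hz02]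
          simp
        have hlst : (mrgF (mu2 (fun x y => ar x (R y)) (fun x y => al (R x) y)) 0 (zf i x) (Fin.last k)).2 = 0 := by
          have e1 : ¬ ((Fin.last k : Fin (k+1)):ℕ) < 0 := by omega
          have e2 : ((Fin.last k : Fin (k+1)):ℕ) ≠ 0 := by simp [Fin.val_last]; omega
          simp only [mrgF, if_neg e1, if_neg e2]
          rw [Fin.succ_last]; exact hzl2
        rw [hatQ_eval _ _ _ _ _ h0 hlst hr0]
        have harg : (fun j : Fin k => ((mrgF (mu2 (fun x y => ar x (R y)) (fun x y => al (R x) y)) 0 (zf i x)) j.succ).1)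
            = fun j => (zf i x ((j.succ).succ)).1 := by
          funext j
          have e1 : ¬ ((j.succ : Fin (k+1)):ℕ) < 0 := by omega
          have e2 : ((j.succ : Fin (k+1)):ℕ) ≠ 0 := by simp [Fin.val_succ]
          simp only [mrgF, if_neg e1, if_neg e2]
        rw [harg]
      have hFke : hatQ (fun x b => l x b) (fun b x => r b x) (fun v => f v)
          (mrgF (mu2 (fun x y => ar x (R y)) (fun x y => al (R x) y)) k (zf i x))
          = r (f (fun j => (zf i x ((j.castSucc).castSucc)).1))
              (ar ((zf i x ((Fin.last k).castSucc)).2) (R (x (Fin.last (k+1))))) := by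
        have h0 : (mrgF (mu2 (fun x y => ar x (R y)) (fun x y => al (R x) y)) k (zf i x) 0).2 = 0 := by
          have hc : ((0:Fin (k+1)):ℕ) < k := by simp only [Fin.val_zero]; omega
          simp only [mrgF, if_pos hc]
          rw [Fin.castSucc_zero]; exact hz02
        have hlst : (mrgF (mu2 (fun x y => ar x (R y)) (fun x y => al (R x) y)) k (zf i x) (Fin.last k)).2
            = ar ((zf i x ((Fin.last k).castSucc)).2) (R (x (Fin.last (k+1)))) := by
          have e1 : ¬ ((Fin.last k : Fin (k+1)):ℕ) < k := by simp [Fin.val_last]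
          have e2 : ((Fin.last k : Fin (k+1)):ℕ) = k := Fin.val_last k
          simp only [mrgF, if_neg e1, if_pos e2, mu2]
          rw [Fin.succ_last, hzl1, hzl2]
          simp
        rw [hatQ_eval' _ _ _ _ _ h0 hlst hl0]
        have harg : (fun j : Fin k => ((mrgF (mu2 (fun x y => ar x (R y)) (fun x y => al (R x) y)) k (zf i x)) j.castSucc).1)
            = fun j => (zf i x ((j.castSucc).castSucc)).1 := by
          funext j
          have hc : ((j.castSucc : Fin (k+1)):ℕ) < k := by
            simp only [Fin.coe_castSucc]; exact j.isLt
          simp only [mrgF, if_pos hc]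
        rw [harg]
      rw [hF0e, hFke]
      have hQsuccm : hatQ (fun x b => l x b) (fun b x => r b x) (fun v => f v)
          (fun j => zf i x j.succ)
          = ((-1:ℤ)^(k+1)) • l ((zf i x ((0:Fin (k+1)).succ)).2)
              (f (fun j => (zf i x ((j.succ).succ)).1)) := by
        have hlx : ((fun j : Fin (k+1) => zf i x j.succ) (Fin.last k)).2 = 0 := by
          show (zf i x ((Fin.last k).succ)).2 = 0
          rw [Fin.succ_last]; exact hzl2
        rw [hatQ_eval (fun x b => l x b) (fun b x => r b x) (fun v => f v) (fun j => zf i x j.succ) _ rfl hlx hr0]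
      have hQcastm : hatQ (fun x b => l x b) (fun b x => r b x) (fun v => f v)
          (fun j => zf i x j.castSucc)
          = r (f (fun j => (zf i x ((j.castSucc).castSucc)).1)) ((zf i x ((Fin.last k).castSucc)).2) := by
        have h0x : ((fun j : Fin (k+1) => zf i x j.castSucc) 0).2 = 0 := by
          show (zf i x ((0:Fin (k+1)).castSucc)).2 = 0
          rw [Fin.castSucc_zero]; exact hz02
        rw [hatQ_eval' (fun x b => l x b) (fun b x => r b x) (fun v => f v) (fun j => zf i x j.castSucc) _ h0x rfl hl0]
      simp only [hQsuccm, hQcastm, hz01, hz02, hzl1, hzl2]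
      simp only [map_zero, LinearMap.zero_apply, zero_add, add_zero, smul_zero, map_zsmul,
        smul_smul, neg_smul, LinearMap.smul_apply, one_smul]
      rw [hl1, hr3]
      rcases Nat.even_or_odd k with hpar | hpar
      · have h1 : ((-1:ℤ))^k = 1 := hpar.neg_one_pow
        have e1 : ((-1:ℤ))^(k+1) = -1 := by rw [pow_succ, h1]; ring
        have e2 : ((-1:ℤ))^(k+2) = 1 := by rw [show k+2 = (k+1)+1 by omega, pow_succ, e1]; ring
        have e3 : ((-1:ℤ))^(k+1+1) = 1 := by rw [pow_succ, e1]; ring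
        simp only [e1, e2, e3, h1]
        module
      · have h1 : ((-1:ℤ))^k = -1 := hpar.neg_one_pow
        have e1 : ((-1:ℤ))^(k+1) = 1 := by rw [pow_succ, h1]; ring
        have e2 : ((-1:ℤ))^(k+2) = -1 := by rw [show k+2 = (k+1)+1 by omega, pow_succ, e1]; ring
        have e3 : ((-1:ℤ))^(k+1+1) = -1 := by rw [pow_succ, e1]; ring
        simp only [e1, e2, e3, h1]
        module
end

section
/- Let M →^R A be a relative Rota-Baxter algebra and (N →^S B, l, r) a bimodule over it. Then the operator δ_rRB on the graded space C^k_rRB = Hom(A^⊗k, B) ⊕ Hom(𝒜^{k−1,1}, N) ⊕ Hom(M^⊗(k−1), B) (with C^1_rRB = Hom(A,B) ⊕ Hom(M,N)), given by δ_rRB(α, β, γ) = (δ_{A,B}(α), δ^α_{A,N}(β), δ_{M,B}(γ) + h_R(α, β)), satisfies (δ_rRB)² = 0. -/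
/-- The Hochschild coboundary `δ_{A,B}` of `A` with coefficients in the
`A`-bimodule `B`. -/
def dAB {A B : Type*} [AddCommGroup B] (mul : A → A → A)
    (bl : A → B → B) (br : B → A → B) {k : ℕ}
    (α : (Fin k → A) → B) : (Fin (k + 1) → A) → B :=
  hochD mul bl br α

/-- The twisted coboundary `δ^α_{A,N}` on mixed cochains (a cochain on `𝒜^{k-1,1}`
is represented as a function on tuples of elements of `A × M`). -/
def dMix {A M B N : Type*} [AddCommGroup A] [AddCommGroup M] [AddCommGroup B] [AddCommGroup N]
    (mul : A → A → A) (al : A → M → M) (ar : M → A → M)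
    (bl : A → B → B) (br : B → A → B) (nl : A → N → N) (nr : N → A → N)
    (l : M → B → N) (r : B → M → N) {k : ℕ}
    (α : (Fin k → A) → B) (β : (Fin k → A × M) → N) :
    (Fin (k + 1) → A × M) → N :=
  fun x =>
    (hochD (fun p q => (mul p.1 q.1, al p.1 q.2 + ar p.2 q.1))
      (fun p w => (bl p.1 w.1, nl p.1 w.2 + l p.2 w.1))
      (fun w p => (br w.1 p.1, r w.1 p.2 + nr w.2 p.1))
      (fun z => (α (fun j => (z j).1), β z)) x).2

/-- The map `h_R`. -/
def hRc {A M B N : Type*} [AddCommGroup A] [AddCommGroup M] [AddCommGroup B]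
    (R : M → A) (S : N → B) {k : ℕ}
    (α : (Fin k → A) → B) (β : (Fin k → A × M) → N) : (Fin k → M) → B :=
  fun m => ((-1 : ℤ) ^ k) •
    (α (fun j => R (m j))
      - ∑ i : Fin k, S (β (fun j => if j = i then ((0 : A), m j) else (R (m j), (0 : M)))))

/-- The mixed cochain on `𝒜^{k-1,1}` determined by its components: the component
`βs s` takes the `A`-arguments together with the `M`-argument in position `s`. -/
def extMixed {A M N : Type*} [AddCommGroup N] {k : ℕ}
    (βs : Fin k → ((Fin k → A) → M → N)) : (Fin k → A × M) → N :=
  fun z => ∑ s : Fin k, βs s (fun j => (z j).1) (z s).2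


set_option linter.unusedSectionVars false

namespace HSq
variable {X Y : Type*} [AddCommGroup Y]

def dfc (mu : X → X → X) {k : ℕ} (i : ℕ) (a : Fin (k+1) → X) : Fin k → X :=
  fun j => if (j : ℕ) < i then a j.castSucc
    else if (j : ℕ) = i then mu (a j.castSucc) (a j.succ) else a j.succ

def Tf (mu : X → X → X) (aL : X → Y → Y) (aR : Y → X → Y) {k : ℕ} (i : ℕ)
    (f : (Fin k → X) → Y) : (Fin (k+1) → X) → Y :=
  fun a =>
    if i = 0 then aL (a 0) (f (Fin.tail a))
    else if i = k + 1 then aR (f (Fin.init a)) (a (Fin.last k))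
    else f (dfc mu (i - 1) a)

variable (mu : X → X → X) (aL : X → Y → Y) (aR : Y → X → Y)

theorem Tf_zero {k : ℕ} (f : (Fin k → X) → Y) (a : Fin (k+1) → X) :
    Tf mu aL aR 0 f a = aL (a 0) (f (Fin.tail a)) := by simp [Tf]

theorem Tf_top {k : ℕ} (f : (Fin k → X) → Y) (a : Fin (k+1) → X) :
    Tf mu aL aR (k+1) f a = aR (f (Fin.init a)) (a (Fin.last k)) := by
  simp [Tf]

theorem Tf_mid {k : ℕ} (f : (Fin k → X) → Y) {i : ℕ} (h1 : 1 ≤ i) (h2 : i ≤ k)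
    (a : Fin (k+1) → X) :
    Tf mu aL aR i f a = f (dfc mu (i-1) a) := by
  simp only [Tf]
  rw [if_neg (by omega), if_neg (by omega)]

-- index lemmas
theorem tail_dfc {k : ℕ} {i : ℕ} (hi : 1 ≤ i) (a : Fin (k+2) → X) :
    Fin.tail (dfc mu i a) = dfc mu (i-1) (Fin.tail a) := by
  funext j
  have hj := j.isLt
  have e : a j.succ.castSucc = a j.castSucc.succ := by rw [Fin.succ_castSucc]
  show dfc mu i a j.succ = _
  simp only [dfc, Fin.val_succ, Fin.tail]
  rcases Nat.lt_trichotomy ((j:ℕ)+1) i with h | h | h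
  · rw [if_pos h, if_pos (by omega), e]
  · rw [if_neg (by omega), if_pos h, if_neg (by omega), if_pos (by omega), e]
  · rw [if_neg (by omega), if_neg (by omega), if_neg (by omega), if_neg (by omega)]

theorem tail_dfc0 {k : ℕ} (a : Fin (k+2) → X) :
    Fin.tail (dfc mu 0 a) = Fin.tail (Fin.tail a) := by
  funext j
  show dfc mu 0 a j.succ = _
  simp only [dfc, Fin.val_succ, Fin.tail]
  rw [if_neg (by omega), if_neg (by omega)]

theorem dfc_zero_apply {k : ℕ} (a : Fin (k+2) → X) :
    dfc mu 0 a 0 = mu (a 0) (a 1) := by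
  show (if ((0 : Fin (k+1)) : ℕ) < 0 then _ else if ((0 : Fin (k+1)) : ℕ) = 0
    then mu (a (0 : Fin (k+1)).castSucc) (a (0 : Fin (k+1)).succ) else _) = _
  rw [if_neg (by omega), if_pos (by simp), Fin.castSucc_zero, Fin.succ_zero_eq_one]

theorem dfc_apply_zero {k : ℕ} {i : ℕ} (hi : 1 ≤ i) (a : Fin (k+2) → X) :
    dfc mu i a 0 = a 0 := by
  show (if ((0 : Fin (k+1)) : ℕ) < i then a (0 : Fin (k+1)).castSucc else _) = _
  rw [if_pos (by simp; omega), Fin.castSucc_zero]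

theorem init_dfc {k : ℕ} (i : ℕ) (a : Fin (k+2) → X) :
    Fin.init (dfc mu i a) = dfc mu i (Fin.init a) := by
  funext t
  show dfc mu i a t.castSucc = _
  simp only [dfc, Fin.coe_castSucc, Fin.init]
  split_ifs with h1 h2
  · rfl
  · rw [Fin.succ_castSucc]
  · rw [Fin.succ_castSucc]

theorem dfc_last_lt {k : ℕ} {i : ℕ} (hi : i < k) (a : Fin (k+2) → X) :
    dfc mu i a (Fin.last k) = a (Fin.last (k+1)) := by
  show (if ((Fin.last k : Fin (k+1)) : ℕ) < i then _
      else if ((Fin.last k : Fin (k+1)) : ℕ) = i then _ else a (Fin.last k).succ) = _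
  rw [if_neg (by simp; omega), if_neg (by simp; omega), Fin.succ_last]

theorem dfc_last_eq {k : ℕ} (a : Fin (k+2) → X) :
    dfc mu k a (Fin.last k) = mu (a (Fin.last k).castSucc) (a (Fin.last (k+1))) := by
  show (if ((Fin.last k : Fin (k+1)) : ℕ) < k then _
      else if ((Fin.last k : Fin (k+1)) : ℕ) = k then
        mu (a (Fin.last k).castSucc) (a (Fin.last k).succ) else _) = _
  rw [if_neg (by simp), if_pos (by simp), Fin.succ_last]

theorem dfc_ge {k : ℕ} {i : ℕ} (hi : k ≤ i) (b : Fin (k+1) → X) :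
    dfc mu i b = Fin.init b := by
  funext t
  have := t.isLt
  show (if (t : ℕ) < i then b t.castSucc else _) = _
  rw [if_pos (by omega)]
  rfl

theorem init_tail {k : ℕ} (a : Fin (k+2) → X) :
    Fin.init (Fin.tail a) = Fin.tail (Fin.init a) := by
  funext j
  show a j.castSucc.succ = a j.succ.castSucc
  rw [Fin.succ_castSucc]

theorem tail_last {k : ℕ} (a : Fin (k+2) → X) :
    Fin.tail a (Fin.last k) = a (Fin.last (k+1)) := by
  show a (Fin.last k).succ = _
  rw [Fin.succ_last]

theorem tail_zero {k : ℕ} (a : Fin (k+2) → X) : Fin.tail a 0 = a 1 := by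
  show a (0 : Fin (k+1)).succ = _
  rw [Fin.succ_zero_eq_one]

theorem init_zero {k : ℕ} (a : Fin (k+2) → X) : Fin.init a 0 = a 0 := by
  show a (0 : Fin (k+1)).castSucc = _
  rw [Fin.castSucc_zero]

theorem init_last {k : ℕ} (a : Fin (k+2) → X) :
    Fin.init a (Fin.last k) = a (Fin.last k).castSucc := rfl


section NatLevel
def dN (mu : X → X → X) (q : ℕ) (a : ℕ → X) : ℕ → X :=
  fun s => if s < q then a s else if s = q then mu (a s) (a (s+1)) else a (s+1)

def ext {t : ℕ} (a : Fin (t+1) → X) : ℕ → X := fun s => a ⟨min s t, by omega⟩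

theorem dN_congr (mu : X → X → X) (q : ℕ) {F G : ℕ → X} {s : ℕ}
    (h1 : F s = G s) (h2 : F (s+1) = G (s+1)) : dN mu q F s = dN mu q G s := by
  simp only [dN]
  split_ifs <;> simp only [h1, h2]

theorem dfc_eq_dN {t : ℕ} (mu : X → X → X) (q : ℕ) (a : Fin (t+1) → X) (j : Fin t) :
    dfc mu q a j = dN mu q (ext a) (j : ℕ) := by
  have hj := j.isLt
  have e1 : ext a (j : ℕ) = a j.castSucc := by
    simp only [ext]; congr 1; exact Fin.ext (show min (j:ℕ) t = (j:ℕ) by omega)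
  have e2 : ext a ((j : ℕ)+1) = a j.succ := by
    simp only [ext]; congr 1; exact Fin.ext (show min ((j:ℕ)+1) t = (j:ℕ)+1 by omega)
  show _ = if (j:ℕ) < q then ext a (j:ℕ)
    else if (j:ℕ) = q then mu (ext a (j:ℕ)) (ext a ((j:ℕ)+1)) else ext a ((j:ℕ)+1)
  rw [e1, e2]; rfl

theorem ext_dfc {k : ℕ} (mu : X → X → X) (q : ℕ) (a : Fin (k+2) → X) {t : ℕ} (ht : t ≤ k) :
    ext (dfc mu q a) t = dN mu q (ext a) t := by
  have : ext (dfc mu q a) t = dfc mu q a ⟨t, by omega⟩ := by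
    simp only [ext]; congr 1; exact Fin.ext (show min t k = t by omega)
  rw [this, dfc_eq_dN]

theorem dN_lt (mu : X → X → X) (q : ℕ) (a : ℕ → X) {s : ℕ} (h : s < q) :
    dN mu q a s = a s := if_pos h

theorem dN_self (mu : X → X → X) (q : ℕ) (a : ℕ → X) :
    dN mu q a q = mu (a q) (a (q+1)) := by simp [dN]

theorem dN_gt (mu : X → X → X) (q : ℕ) (a : ℕ → X) {s : ℕ} (h : q < s) :
    dN mu q a s = a (s+1) := by
  simp only [dN]
  rw [if_neg (by omega), if_neg (by omega)]

theorem dN_comm (mu : X → X → X) (hmu : ∀ a b c : X, mu (mu a b) c = mu a (mu b c))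
    {p q : ℕ} (hpq : p < q) (a : ℕ → X) :
    dN mu p (dN mu q a) = dN mu (q - 1) (dN mu p a) := by
  funext s
  rcases Nat.lt_trichotomy s p with hs | hs | hs
  · rw [dN_lt _ _ _ hs, dN_lt _ _ _ (by omega), dN_lt _ _ _ (by omega), dN_lt _ _ _ hs]
  · subst hs
    rw [dN_self]
    rcases Nat.lt_or_ge (s+1) q with h2 | h2
    · rw [dN_lt _ _ _ hpq, dN_lt _ _ _ h2, dN_lt _ _ _ (by omega), dN_self]
    · have hq : q = s + 1 := by omega
      subst hq
      rw [dN_lt _ _ _ hpq, dN_self, show s+1-1 = s from rfl, dN_self,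
        dN_self, dN_gt _ _ _ (by omega)]
      exact (hmu _ _ _).symm
  · rw [dN_gt _ _ _ hs]
    rcases Nat.lt_trichotomy s (q-1) with h2 | h2 | h2
    · rw [dN_lt _ _ _ (by omega), dN_lt _ _ _ h2, dN_gt _ _ _ hs]
    · subst h2
      rw [show q-1+1 = q from by omega, dN_self, dN_self,
        dN_gt _ _ _ (by omega), dN_gt _ _ _ (by omega), show q-1+1 = q from by omega]
    · rw [dN_gt _ _ _ (by omega), dN_gt _ _ _ h2, dN_gt _ _ _ (by omega)]

theorem dfc_dfc {k : ℕ} (mu : X → X → X)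
    (hmu : ∀ a b c : X, mu (mu a b) c = mu a (mu b c))
    {p q : ℕ} (hpq : p < q) (a : Fin (k+2) → X) :
    dfc mu p (dfc mu q a) = dfc mu (q-1) (dfc mu p a) := by
  funext j
  have hj := j.isLt
  rw [dfc_eq_dN, dfc_eq_dN,
    dN_congr mu p (ext_dfc mu q a (by omega)) (ext_dfc mu q a (by omega)),
    dN_congr mu (q-1) (ext_dfc mu p a (by omega)) (ext_dfc mu p a (by omega)),
    dN_comm mu hmu hpq]

end NatLevel

theorem TT_comm
    (hmu : ∀ a b c : X, mu (mu a b) c = mu a (mu b c))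
    (hLmul : ∀ x x' y, aL (mu x x') y = aL x (aL x' y))
    (hMid : ∀ x y x', aR (aL x y) x' = aL x (aR y x'))
    (hRmul : ∀ y x x', aR (aR y x) x' = aR y (mu x x'))
    {k : ℕ} (f : (Fin k → X) → Y) {i j : ℕ} (hji : j < i) (hik : i ≤ k+2)
    (hjk : j ≤ k+1) (a : Fin (k+2) → X) :
    Tf mu aL aR i (Tf mu aL aR j f) a = Tf mu aL aR j (Tf mu aL aR (i-1) f) a := by
  rcases Nat.eq_zero_or_pos j with hj0 | hjpos
  · subst hj0
    by_cases hi2 : i = k + 2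
    · -- Case C
      subst hi2
      rw [show k+2 = (k+1)+1 from rfl, Tf_top, Tf_zero, Tf_zero]
      simp only [Nat.add_sub_cancel]
      rw [Tf_top, init_zero, tail_last, init_tail, hMid]
    · by_cases hi1 : i = 1
      · -- Case A
        subst hi1
        rw [Tf_mid mu aL aR _ (le_refl 1) (by omega), Tf_zero, Tf_zero, Tf_zero]
        simp only [Nat.sub_self]
        rw [dfc_zero_apply, tail_dfc0, tail_zero, hLmul]
      · -- Case B : 2 ≤ i ≤ k+1
        rw [Tf_mid mu aL aR _ (by omega) (by omega : i ≤ k+1), Tf_zero, Tf_zero,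
          Tf_mid mu aL aR _ (by omega) (by omega : i - 1 ≤ k),
          dfc_apply_zero mu (by omega), tail_dfc mu (by omega)]
  · by_cases hjt : j = k + 1
    · -- Case F : j = k+1, i = k+2
      have hi2 : i = k + 2 := by omega
      subst hi2; subst hjt
      rw [show k+2 = (k+1)+1 from rfl, Tf_top, Tf_top,
        Tf_mid mu aL aR _ (by omega) (le_refl (k+1))]
      simp only [Nat.add_sub_cancel]
      rw [Tf_top, init_dfc, dfc_ge mu (le_refl k), dfc_last_eq, init_last, hRmul]
    · -- 1 ≤ j ≤ k
      by_cases hi2 : i = k + 2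
      · -- Case E
        subst hi2
        rw [show k+2 = (k+1)+1 from rfl, Tf_top,
          Tf_mid mu aL aR _ (by omega) (by omega : j ≤ k),
          Tf_mid mu aL aR _ (by omega) (by omega : j ≤ k+1)]
        simp only [Nat.add_sub_cancel]
        rw [Tf_top, init_dfc, dfc_last_lt mu (by omega : j - 1 < k)]
      · -- Case D : 1 ≤ j ≤ k, j < i ≤ k+1
        rw [Tf_mid mu aL aR _ (by omega) (by omega : i ≤ k+1),
          Tf_mid mu aL aR _ (by omega) (by omega : j ≤ k),
          Tf_mid mu aL aR _ (by omega) (by omega : j ≤ k+1),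
          Tf_mid mu aL aR _ (by omega) (by omega : i - 1 ≤ k),
          dfc_dfc mu hmu (by omega : j - 1 < i - 1)]

end HSq

namespace HSq
variable {X Y : Type*} [AddCommGroup Y] (mu : X → X → X) (aL : X → Y → Y) (aR : Y → X → Y)

theorem hochD_def {k : ℕ} (f : (Fin k → X) → Y) (a : Fin (k+1) → X) :
    hochD mu aL aR f a =
      aL (a 0) (f (Fin.tail a))
      + ∑ i ∈ Finset.range k, ((-1 : ℤ) ^ (i + 1)) • f (dfc mu i a)
      + ((-1 : ℤ) ^ (k + 1)) • aR (f (Fin.init a)) (a (Fin.last k)) := rfl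

theorem hochD_eq_sum {k : ℕ} (f : (Fin k → X) → Y) (a : Fin (k+1) → X) :
    hochD mu aL aR f a = ∑ i ∈ Finset.range (k+2), ((-1 : ℤ) ^ i) • Tf mu aL aR i f a := by
  rw [Finset.sum_range_succ, Finset.sum_range_succ']
  rw [hochD_def]
  have h0 : Tf mu aL aR 0 f a = aL (a 0) (f (Fin.tail a)) := Tf_zero mu aL aR f a
  have hl : Tf mu aL aR (k+1) f a = aR (f (Fin.init a)) (a (Fin.last k)) := Tf_top mu aL aR f a
  rw [h0, hl, pow_zero, one_smul]
  have : ∀ i ∈ Finset.range k, ((-1 : ℤ) ^ (i+1)) • Tf mu aL aR (i+1) f a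
      = ((-1 : ℤ) ^ (i+1)) • f (dfc mu i a) := by
    intro i hi
    have hik : i < k := Finset.mem_range.mp hi
    rw [Tf_mid mu aL aR f (by omega) (by omega), Nat.add_sub_cancel]
  rw [Finset.sum_congr rfl this]
  abel

theorem Tf_sum
    (hLa : ∀ x y y', aL x (y + y') = aL x y + aL x y')
    (hRa : ∀ (y y' : Y) x, aR (y + y') x = aR y x + aR y' x)
    {k : ℕ} (i : ℕ) (s : Finset ℕ) (c : ℕ → ℤ)
    (h : ℕ → ((Fin (k+1) → X) → Y)) (a : Fin (k+2) → X) :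
    Tf mu aL aR i (fun b => ∑ j ∈ s, c j • h j b) a
      = ∑ j ∈ s, c j • Tf mu aL aR i (h j) a := by
  simp only [Tf]
  split_ifs
  · let φ : Y →+ Y := AddMonoidHom.mk' (aL (a 0)) (hLa (a 0))
    show φ _ = _
    rw [map_sum]
    exact Finset.sum_congr rfl fun j _ => map_zsmul φ _ _
  · let φ : Y →+ Y := AddMonoidHom.mk' (fun y => aR y (a (Fin.last (k+1))))
      (fun y y' => hRa y y' _)
    show φ _ = _
    rw [map_sum]
    exact Finset.sum_congr rfl fun j _ => map_zsmul φ _ _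
  · rfl

theorem hochD_sq
    (hLa : ∀ x y y', aL x (y + y') = aL x y + aL x y')
    (hRa : ∀ (y y' : Y) x, aR (y + y') x = aR y x + aR y' x)
    (hmu : ∀ a b c : X, mu (mu a b) c = mu a (mu b c))
    (hLmul : ∀ x x' y, aL (mu x x') y = aL x (aL x' y))
    (hMid : ∀ x y x', aR (aL x y) x' = aL x (aR y x'))
    (hRmul : ∀ y x x', aR (aR y x) x' = aR y (mu x x'))
    {k : ℕ} (f : (Fin k → X) → Y) (a : Fin (k+2) → X) :
    hochD mu aL aR (hochD mu aL aR f) a = 0 := by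
  rw [hochD_eq_sum]
  have hre : hochD mu aL aR f = fun b => ∑ j ∈ Finset.range (k+2),
      ((-1:ℤ)^j) • Tf mu aL aR j f b := funext fun b => hochD_eq_sum mu aL aR f b
  have step1 : ∀ i ∈ Finset.range (k+3),
      ((-1:ℤ)^i) • Tf mu aL aR i (hochD mu aL aR f) a
      = ∑ j ∈ Finset.range (k+2), ((-1:ℤ)^(i+j)) • Tf mu aL aR i (Tf mu aL aR j f) a := by
    intro i _
    rw [hre, Tf_sum mu aL aR hLa hRa, Finset.smul_sum]
    exact Finset.sum_congr rfl fun j _ => by rw [smul_smul, ← pow_add]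
  rw [Finset.sum_congr rfl step1, ← Finset.sum_product']
  set P := Finset.range (k+3) ×ˢ Finset.range (k+2) with hP
  set F : ℕ × ℕ → Y := fun p => ((-1:ℤ)^(p.1+p.2)) • Tf mu aL aR p.1 (Tf mu aL aR p.2 f) a with hF
  rw [← Finset.sum_filter_add_sum_filter_not P (fun p => p.2 < p.1)]
  have key : ∑ p ∈ P.filter (fun p => ¬ p.2 < p.1), F p
      = ∑ p ∈ P.filter (fun p => p.2 < p.1), (- F p) := by
    apply Finset.sum_nbij' (fun p => (p.2+1, p.1)) (fun p => (p.2, p.1-1))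
    · intro p hp
      simp only [Finset.mem_filter, Finset.mem_product, Finset.mem_range, hP] at hp ⊢
      omega
    · intro p hp
      simp only [Finset.mem_filter, Finset.mem_product, Finset.mem_range, hP] at hp ⊢
      omega
    · intro p hp
      obtain ⟨p1, p2⟩ := p
      simp
    · intro p hp
      obtain ⟨p1, p2⟩ := p
      simp only [Finset.mem_filter, Finset.mem_product, Finset.mem_range, hP] at hp
      have h1 : p1 - 1 + 1 = p1 := by omega
      simp [h1]
    · intro p hp
      simp only [Finset.mem_filter, Finset.mem_product, Finset.mem_range, hP] at hp
      have hcomm := TT_comm mu aL aR hmu hLmul hMid hRmul f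
        (show p.1 < p.2 + 1 by omega) (show p.2+1 ≤ k+2 by omega)
        (show p.1 ≤ k+1 by omega) a
      rw [Nat.add_sub_cancel] at hcomm
      simp only [hF]
      rw [hcomm, show p.2 + 1 + p.1 = (p.1 + p.2) + 1 by omega, pow_succ,
        mul_comm, mul_smul]
      simp
  rw [key, Finset.sum_neg_distrib]
  abel

theorem hochD_addf
    (hLa : ∀ x y y', aL x (y + y') = aL x y + aL x y')
    (hRa : ∀ (y y' : Y) x, aR (y + y') x = aR y x + aR y' x)
    {k : ℕ} (f g : (Fin k → X) → Y) (a : Fin (k+1) → X) :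
    hochD mu aL aR (fun z => f z + g z) a = hochD mu aL aR f a + hochD mu aL aR g a := by
  rw [hochD_def, hochD_def, hochD_def]
  simp only [hLa, hRa, smul_add]
  rw [Finset.sum_add_distrib]
  abel

theorem hochD_smulf
    (hLa : ∀ x y y', aL x (y + y') = aL x y + aL x y')
    (hRa : ∀ (y y' : Y) x, aR (y + y') x = aR y x + aR y' x)
    (c : ℤ) {k : ℕ} (f : (Fin k → X) → Y) (a : Fin (k+1) → X) :
    hochD mu aL aR (fun z => c • f z) a = c • hochD mu aL aR f a := by
  rw [hochD_def, hochD_def]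
  have hL : ∀ x y, aL x (c • y) = c • aL x y := fun x y =>
    map_zsmul (AddMonoidHom.mk' (aL x) (hLa x)) c y
  have hR : ∀ y x, aR (c • y) x = c • aR y x := fun y x =>
    map_zsmul (AddMonoidHom.mk' (fun y => aR y x) (fun y y' => hRa y y' x)) c y
  have hcomm : ∀ (i : ℕ) (y : Y), ((-1:ℤ)^i) • (c • y) = c • (((-1:ℤ)^i) • y) :=
    fun i y => smul_comm _ _ _
  simp only [hL, hR, hcomm, ← Finset.smul_sum, ← smul_add]

theorem hochD_congr {k : ℕ} {F G : (Fin k → X) → Y} (a : Fin (k+1) → X)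
    (h1 : F (Fin.tail a) = G (Fin.tail a))
    (h2 : ∀ i ∈ Finset.range k, F (dfc mu i a) = G (dfc mu i a))
    (h3 : F (Fin.init a) = G (Fin.init a)) :
    hochD mu aL aR F a = hochD mu aL aR G a := by
  rw [hochD_def, hochD_def, h1, h3]
  congr 2
  exact Finset.sum_congr rfl fun i hi => by rw [h2 i hi]

theorem hochD_pull {W Z : Type*} [AddCommGroup Z]
    (muW : W → W → W) (aLW : W → Z → Z) (aRW : Z → W → Z)
    (σ : W → X) (p : Y → Z)
    (hσ : ∀ w w', mu (σ w) (σ w') = σ (muW w w'))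
    (hp : ∀ y y', p (y + y') = p y + p y')
    (hpL : ∀ w y, p (aL (σ w) y) = aLW w (p y))
    (hpR : ∀ y w, p (aR y (σ w)) = aRW (p y) w)
    {k : ℕ} (F : (Fin k → X) → Y) (w : Fin (k+1) → W) :
    p (hochD mu aL aR F (fun j => σ (w j)))
      = hochD muW aLW aRW (fun v => p (F (fun j => σ (v j)))) w := by
  have hface : ∀ i, dfc mu i (fun j => σ (w j)) = fun j => σ (dfc muW i w j) := by
    intro i
    funext j
    simp only [dfc]
    split_ifs
    · rfl
    · exact hσ _ _
    · rfl
  let φ : Y →+ Z := AddMonoidHom.mk' p hp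
  rw [hochD_def, hochD_def]
  show φ _ = _
  rw [map_add, map_add, map_sum]
  congr 1
  · congr 1
    · exact hpL (w 0) _
    · refine Finset.sum_congr rfl fun i _ => ?_
      rw [map_zsmul]
      show ((-1:ℤ)^(i+1)) • p (F (dfc mu i fun j => σ (w j))) = _
      rw [hface i]
  · rw [map_zsmul]
    show ((-1:ℤ)^(k+1)) • p (aR (F (Fin.init fun j => σ (w j))) (σ (w (Fin.last k)))) = _
    rw [hpR]
    rfl

theorem hochD_push {X' Z : Type*} [AddCommGroup Z]
    (mu' : X' → X' → X') (aL' : X' → Z → Z) (aR' : Z → X' → Z)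
    (q : X → X') (p : Y → Z)
    (hq : ∀ x x', q (mu x x') = mu' (q x) (q x'))
    (hp : ∀ y y', p (y + y') = p y + p y')
    (hpL : ∀ x y, p (aL x y) = aL' (q x) (p y))
    (hpR : ∀ y x, p (aR y x) = aR' (p y) (q x))
    {k : ℕ} (F : (Fin k → X) → Y) (g : (Fin k → X') → Z)
    (hg : ∀ z, p (F z) = g (fun j => q (z j)))
    (x : Fin (k+1) → X) :
    p (hochD mu aL aR F x) = hochD mu' aL' aR' g (fun j => q (x j)) := by
  have hface : ∀ i, (fun j => q (dfc mu i x j)) = dfc mu' i (fun j => q (x j)) := by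
    intro i
    funext j
    simp only [dfc]
    split_ifs
    · rfl
    · exact hq _ _
    · rfl
  let φ : Y →+ Z := AddMonoidHom.mk' p hp
  rw [hochD_def, hochD_def]
  show φ _ = _
  rw [map_add, map_add, map_sum]
  congr 1
  · congr 1
    · show p (aL (x 0) (F (Fin.tail x))) = _
      rw [hpL, hg]
      rfl
    · refine Finset.sum_congr rfl fun i _ => ?_
      rw [map_zsmul]
      show ((-1:ℤ)^(i+1)) • p (F (dfc mu i x)) = _
      rw [hg, hface i]
  · rw [map_zsmul]
    show ((-1:ℤ)^(k+1)) • p (aR (F (Fin.init x)) (x (Fin.last k))) = _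
    rw [hpR, hg]
    rfl
end HSq

section Concrete
set_option linter.unusedSectionVars false

variable {K : Type*} [Field K] {A M B N : Type*}
    [AddCommGroup A] [Module K A] [AddCommGroup M] [Module K M]
    [AddCommGroup B] [Module K B] [AddCommGroup N] [Module K N]
    (mul : A →ₗ[K] A →ₗ[K] A) (al : A →ₗ[K] M →ₗ[K] M) (ar : M →ₗ[K] A →ₗ[K] M)
    (R : M →ₗ[K] A) (S : N →ₗ[K] B)
    (bl : A →ₗ[K] B →ₗ[K] B) (br : B →ₗ[K] A →ₗ[K] B)
    (nl : A →ₗ[K] N →ₗ[K] N) (nr : N →ₗ[K] A →ₗ[K] N)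
    (l : M →ₗ[K] B →ₗ[K] N) (r : B →ₗ[K] M →ₗ[K] N)

def muA : A → A → A := fun x y => mul x y
def blA : A → B → B := fun x y => bl x y
def brA : B → A → B := fun x y => br x y
def muX : A × M → A × M → A × M := fun p q => (mul p.1 q.1, al p.1 q.2 + ar p.2 q.1)
def aLX : A × M → B × N → B × N := fun p w => (bl p.1 w.1, nl p.1 w.2 + l p.2 w.1)
def aRX : B × N → A × M → B × N := fun w p => (br w.1 p.1, r w.1 p.2 + nr w.2 p.1)
def muM : M → M → M := fun m m' => al (R m) m' + ar m (R m')
def aLM : M → B → B := fun m b => bl (R m) b - S (l m b)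
def aRM : B → M → B := fun b m => br b (R m) - S (r b m)

section Axioms
-- (A, B) axioms
theorem blA_add : ∀ (x : A) (y y' : B), blA bl x (y + y') = blA bl x y + blA bl x y' := by
  intro x y y'; simp [blA]
theorem brA_add : ∀ (y y' : B) (x : A), brA br (y + y') x = brA br y x + brA br y' x := by
  intro y y' x; simp [brA, map_add]

-- product axioms
theorem muX_assoc
    (hmul : ∀ a b c : A, mul (mul a b) c = mul a (mul b c))
    (hal : ∀ (a b : A) (m : M), al (mul a b) m = al a (al b m))
    (halr : ∀ (a : A) (m : M) (b : A), ar (al a m) b = al a (ar m b))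
    (har : ∀ (m : M) (a b : A), ar (ar m a) b = ar m (mul a b)) : ∀ p q c : A × M,
    muX mul al ar (muX mul al ar p q) c = muX mul al ar p (muX mul al ar q c) := by
  intro p q c
  simp only [muX, Prod.mk.injEq]
  constructor
  · exact hmul _ _ _
  · simp only [map_add, LinearMap.add_apply, hal, halr, har]
    abel

theorem aLX_add : ∀ (p : A × M) (w w' : B × N),
    aLX bl nl l p (w + w') = aLX bl nl l p w + aLX bl nl l p w' := by
  intro p w w'
  simp only [aLX, Prod.fst_add, Prod.snd_add, map_add, Prod.mk.injEq, Prod.mk_add_mk]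
  exact ⟨trivial, by abel⟩

theorem aRX_add : ∀ (w w' : B × N) (p : A × M),
    aRX br nr r (w + w') p = aRX br nr r w p + aRX br nr r w' p := by
  intro w w' p
  simp only [aRX, Prod.fst_add, Prod.snd_add, map_add, LinearMap.add_apply,
    Prod.mk.injEq, Prod.mk_add_mk]
  exact ⟨trivial, by abel⟩

theorem aLX_mul
    (hbl : ∀ (a a' : A) (b : B), bl (mul a a') b = bl a (bl a' b))
    (hnl : ∀ (a a' : A) (n : N), nl (mul a a') n = nl a (nl a' n))
    (hl1 : ∀ (a : A) (m : M) (b : B), l (al a m) b = nl a (l m b))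
    (hl2 : ∀ (m : M) (a : A) (b : B), l (ar m a) b = l m (bl a b)) : ∀ (p q : A × M) (w : B × N),
    aLX bl nl l (muX mul al ar p q) w = aLX bl nl l p (aLX bl nl l q w) := by
  intro p q w
  simp only [aLX, muX, Prod.mk.injEq]
  constructor
  · exact hbl _ _ _
  · simp only [map_add, LinearMap.add_apply, hnl, hl1, hl2]
    abel

theorem aX_mid
    (hblr : ∀ (a : A) (b : B) (a' : A), br (bl a b) a' = bl a (br b a'))
    (hr1 : ∀ (a : A) (b : B) (m : M), r (bl a b) m = nl a (r b m))
    (hnlr : ∀ (a : A) (n : N) (a' : A), nr (nl a n) a' = nl a (nr n a'))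
    (hl3 : ∀ (m : M) (b : B) (a : A), l m (br b a) = nr (l m b) a) : ∀ (p : A × M) (w : B × N) (q : A × M),
    aRX br nr r (aLX bl nl l p w) q = aLX bl nl l p (aRX br nr r w q) := by
  intro p w q
  simp only [aLX, aRX, Prod.mk.injEq]
  constructor
  · exact hblr _ _ _
  · simp only [map_add, LinearMap.add_apply, hr1, hnlr, hl3]
    abel

theorem aRX_mul
    (hbr : ∀ (b : B) (a a' : A), br (br b a) a' = br b (mul a a'))
    (hr2 : ∀ (b : B) (a : A) (m : M), r (br b a) m = r b (al a m))
    (hr3 : ∀ (b : B) (m : M) (a : A), r b (ar m a) = nr (r b m) a)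
    (hnr : ∀ (n : N) (a a' : A), nr (nr n a) a' = nr n (mul a a')) : ∀ (w : B × N) (p q : A × M),
    aRX br nr r (aRX br nr r w p) q = aRX br nr r w (muX mul al ar p q) := by
  intro w p q
  simp only [aRX, muX, Prod.mk.injEq]
  constructor
  · exact hbr _ _ _
  · simp only [map_add, LinearMap.add_apply, hr2, hr3, hnr]
    abel

-- M-level axioms
theorem muM_assoc
    (hR : ∀ m m' : M, mul (R m) (R m') = R (al (R m) m' + ar m (R m')))
    (hal : ∀ (a b : A) (m : M), al (mul a b) m = al a (al b m))
    (halr : ∀ (a : A) (m : M) (b : A), ar (al a m) b = al a (ar m b))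
    (har : ∀ (m : M) (a b : A), ar (ar m a) b = ar m (mul a b)) : ∀ u v w : M,
    muM al ar R (muM al ar R u v) w = muM al ar R u (muM al ar R v w) := by
  intro u v w
  simp only [muM, ← hR, map_add, LinearMap.add_apply, hal, halr, har]
  abel

theorem aLM_add : ∀ (m : M) (b b' : B), aLM R S bl l m (b + b') =
    aLM R S bl l m b + aLM R S bl l m b' := by
  intro m b b'
  simp only [aLM, map_add]
  abel

theorem aRM_add : ∀ (b b' : B) (m : M), aRM R S br r (b + b') m =
    aRM R S br r b m + aRM R S br r b' m := by
  intro b b' m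
  simp only [aRM, map_add, LinearMap.add_apply]
  abel

theorem aLM_mul
    (hR : ∀ m m' : M, mul (R m) (R m') = R (al (R m) m' + ar m (R m')))
    (hbl : ∀ (a a' : A) (b : B), bl (mul a a') b = bl a (bl a' b))
    (hl1 : ∀ (a : A) (m : M) (b : B), l (al a m) b = nl a (l m b))
    (hl2 : ∀ (m : M) (a : A) (b : B), l (ar m a) b = l m (bl a b))
    (hrs : ∀ (m : M) (n : N), bl (R m) (S n) = S (nl (R m) n + l m (S n))) : ∀ (u v : M) (b : B), aLM R S bl l (muM al ar R u v) b =
    aLM R S bl l u (aLM R S bl l v b) := by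
  intro u v b
  simp only [aLM, muM, ← hR, map_sub, map_add, LinearMap.add_apply, hbl, hl1, hl2, hrs]
  abel

theorem aM_mid
    (hblr : ∀ (a : A) (b : B) (a' : A), br (bl a b) a' = bl a (br b a'))
    (hr1 : ∀ (a : A) (b : B) (m : M), r (bl a b) m = nl a (r b m))
    (hl3 : ∀ (m : M) (b : B) (a : A), l m (br b a) = nr (l m b) a)
    (hrs : ∀ (m : M) (n : N), bl (R m) (S n) = S (nl (R m) n + l m (S n)))
    (hsr : ∀ (n : N) (m : M), br (S n) (R m) = S (r (S n) m + nr n (R m))) : ∀ (u : M) (b : B) (v : M), aRM R S br r (aLM R S bl l u b) v =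
    aLM R S bl l u (aRM R S br r b v) := by
  intro u b v
  have h1 : br (S (l u b)) (R v) = S (r (S (l u b)) v + nr (l u b) (R v)) := hsr _ _
  have h2 : bl (R u) (S (r b v)) = S (nl (R u) (r b v) + l u (S (r b v))) := hrs _ _
  simp only [aLM, aRM, map_sub, LinearMap.sub_apply, map_add, h1, h2, hblr, hr1, hl3]
  abel

theorem aRM_mul
    (hR : ∀ m m' : M, mul (R m) (R m') = R (al (R m) m' + ar m (R m')))
    (hbr : ∀ (b : B) (a a' : A), br (br b a) a' = br b (mul a a'))
    (hr2 : ∀ (b : B) (a : A) (m : M), r (br b a) m = r b (al a m))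
    (hr3 : ∀ (b : B) (m : M) (a : A), r b (ar m a) = nr (r b m) a)
    (hsr : ∀ (n : N) (m : M), br (S n) (R m) = S (r (S n) m + nr n (R m))) : ∀ (b : B) (u v : M), aRM R S br r (aRM R S br r b u) v =
    aRM R S br r b (muM al ar R u v) := by
  intro b u v
  have h1 : br (S (r b u)) (R v) = S (r (S (r b u)) v + nr (r b u) (R v)) := hsr _ _
  simp only [aRM, muM, ← hR, map_sub, LinearMap.sub_apply, map_add, h1, hbr, hr2, hr3]
  abel

end Axioms

section Mixed
set_option linter.unusedSectionVars false
variable {t : ℕ}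

def zipAM (a : Fin t → A) (u : Fin t → M) : Fin t → A × M := fun j => (a j, u j)

def bup (βs : Fin t → ((Fin t → A) → M → N)) : Fin t → ((Fin t → A) → M → N) :=
  fun s a m => βs s (Function.update a s 0) m

variable (βs : Fin t → ((Fin t → A) → M → N))
variable (hadd : ∀ (s : Fin t) (a : Fin t → A) (m m' : M),
    βs s a (m + m') = βs s a m + βs s a m')

theorem extMixed_zip (a : Fin t → A) (u : Fin t → M) :
    extMixed βs (zipAM a u) = ∑ s : Fin t, βs s a (u s) := rfl

include hadd in
theorem bs_zero (s : Fin t) (a : Fin t → A) : βs s a 0 = 0 := by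
  have h := hadd s a 0 0
  rw [add_zero] at h
  exact left_eq_add.mp h

include hadd in
theorem bup_hadd : ∀ (s : Fin t) (a : Fin t → A) (m m' : M),
    bup βs s a (m + m') = bup βs s a m + bup βs s a m' :=
  fun s a m m' => hadd s _ m m'

theorem bup_congr {c c' : Fin t → A} (s : Fin t)
    (h : Function.update c s 0 = Function.update c' s 0) (v : M) :
    bup βs s c v = bup βs s c' v := by
  simp only [bup, h]

theorem bup_update (c : Fin t → A) (s : Fin t) (v : M) :
    bup βs s (Function.update c s 0) v = bup βs s c v := by
  simp only [bup, Function.update_idem]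

include hadd in
theorem extMixed_zip_single (c : Fin t → A) (s0 : Fin t) (v : M) :
    extMixed βs (zipAM c (Pi.single s0 v)) = βs s0 c v := by
  rw [extMixed_zip]
  rw [Finset.sum_eq_single s0]
  · rw [Pi.single_eq_same (M := fun _ => M)]
  · intro s _ hs
    rw [Pi.single_eq_of_ne (M := fun _ => M) hs, bs_zero βs hadd]
  · intro h
    exact absurd (Finset.mem_univ s0) h

include hadd in
theorem extMixed_zip_addM (c : Fin t → A) (u v : Fin t → M) :
    extMixed βs (zipAM c (u + v))
      = extMixed βs (zipAM c u) + extMixed βs (zipAM c v) := by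
  rw [extMixed_zip, extMixed_zip, extMixed_zip, ← Finset.sum_add_distrib]
  exact Finset.sum_congr rfl fun s _ => hadd s c (u s) (v s)

include hadd in
theorem extMixed_zip_zeroM (c : Fin t → A) :
    extMixed βs (zipAM c 0) = 0 := by
  rw [extMixed_zip]
  exact Finset.sum_eq_zero fun s _ => bs_zero βs hadd s c

include hadd in
theorem extMixed_bup_congr {c c' : Fin t → A} (w : Fin t → M)
    (h : ∀ s : Fin t, Function.update c s 0 = Function.update c' s 0 ∨ w s = 0) :
    extMixed (bup βs) (zipAM c w) = extMixed (bup βs) (zipAM c' w) := by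
  rw [extMixed_zip, extMixed_zip]
  refine Finset.sum_congr rfl fun s _ => ?_
  rcases h s with h1 | h1
  · exact bup_congr βs s h1 (w s)
  · rw [h1, bs_zero (bup βs) (bup_hadd βs hadd), bs_zero (bup βs) (bup_hadd βs hadd)]

include hadd in
theorem extMixed_eq_bup (z : Fin t → A × M)
    (hC : ∀ s : Fin t, (z s).1 = 0 ∨ (z s).2 = 0) :
    extMixed βs z = extMixed (bup βs) z := by
  refine Finset.sum_congr rfl fun s _ => ?_
  rcases hC s with h1 | h1
  · show βs s _ _ = βs s (Function.update _ s 0) _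
    congr 1
    rw [← h1]
    exact (Function.update_eq_self s _).symm
  · rw [h1, bs_zero βs hadd, bs_zero (bup βs) (bup_hadd βs hadd)]

end Mixed

section Bridge
set_option linter.unusedSectionVars false
variable {t : ℕ}

theorem dAB_eq {n : ℕ} (α : (Fin n → A) → B) :
    dAB (fun x y => mul x y) (fun x y => bl x y) (fun x y => br x y) α
      = hochD (muA mul) (blA bl) (brA br) α := rfl

theorem dMix_eq {n : ℕ} (α : (Fin n → A) → B) (β : (Fin n → A × M) → N) :
    dMix (fun x y => mul x y) (fun x y => al x y) (fun x y => ar x y)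
      (fun x y => bl x y) (fun x y => br x y) (fun x y => nl x y)
      (fun x y => nr x y) (fun x y => l x y) (fun x y => r x y) α β
      = fun x => (hochD (muX mul al ar) (aLX bl nl l) (aRX br nr r)
          (fun z => (α (fun j => (z j).1), β z)) x).2 := rfl

theorem dMB_eq_s15 {n : ℕ} (γ : (Fin n → M) → B) :
    dMB (fun x y => al x y) (fun x y => ar x y) (fun x y => bl x y)
      (fun x y => br x y) (fun x => R x) (fun x => S x)
      (fun x y => l x y) (fun x y => r x y) γ
      = hochD (muM al ar R) (aLM R S bl l) (aRM R S br r) γ := rfl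

def eT (m : Fin t → M) (i : Fin t) : Fin t → A × M :=
  fun j => if j = i then ((0 : A), m j) else (R (m j), (0 : M))

theorem hRc_eq {n : ℕ} (α : (Fin n → A) → B) (β : (Fin n → A × M) → N) (m : Fin n → M) :
    hRc (fun x => R x) (fun x => S x) α β m
      = ((-1 : ℤ) ^ n) • (α (fun j => R (m j)) - ∑ i : Fin n, S (β (eT R m i))) := rfl

def dfM (i : ℕ) (a : Fin (t+1) → A) (u : Fin (t+1) → M) : Fin t → M :=
  fun j => if (j : ℕ) < i then u j.castSucc
    else if (j : ℕ) = i then al (a j.castSucc) (u j.succ) + ar (u j.castSucc) (a j.succ)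
    else u j.succ

theorem dfc_zip (i : ℕ) (a : Fin (t+1) → A) (u : Fin (t+1) → M) :
    HSq.dfc (muX mul al ar) i (zipAM a u)
      = zipAM (HSq.dfc (muA mul) i a) (dfM al ar i a u) := by
  funext j
  simp only [HSq.dfc, zipAM, dfM, muX, muA]
  split_ifs <;> rfl

theorem dfM_add (i : ℕ) (a : Fin (t+1) → A) (u v : Fin (t+1) → M) :
    dfM al ar i a (u + v) = dfM al ar i a u + dfM al ar i a v := by
  funext j
  simp only [dfM, Pi.add_apply]
  split_ifs with h1 h2
  · rfl
  · simp only [map_add, LinearMap.add_apply]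
    abel
  · rfl

theorem tail_zip (a : Fin (t+1) → A) (u : Fin (t+1) → M) :
    Fin.tail (zipAM a u) = zipAM (Fin.tail a) (Fin.tail u) := rfl

theorem init_zip (a : Fin (t+1) → A) (u : Fin (t+1) → M) :
    Fin.init (zipAM a u) = zipAM (Fin.init a) (Fin.init u) := rfl

theorem tail_addM (u v : Fin (t+1) → M) : Fin.tail (u + v) = Fin.tail u + Fin.tail v := rfl
theorem init_addM (u v : Fin (t+1) → M) : Fin.init (u + v) = Fin.init u + Fin.init v := rfl

theorem dMix_expand {n : ℕ} (α : (Fin n → A) → B) (g : (Fin n → A × M) → N)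
    (x : Fin (n+1) → A × M) :
    (hochD (muX mul al ar) (aLX bl nl l) (aRX br nr r)
        (fun z => (α (fun j => (z j).1), g z)) x).2
      = nl (x 0).1 (g (Fin.tail x)) + l (x 0).2 (α (fun j => (Fin.tail x j).1))
        + ∑ i ∈ Finset.range n, ((-1 : ℤ) ^ (i+1)) • g (HSq.dfc (muX mul al ar) i x)
        + ((-1 : ℤ) ^ (n+1)) • (r (α (fun j => (Fin.init x j).1)) ((x (Fin.last n)).2)
            + nr (g (Fin.init x)) ((x (Fin.last n)).1)) := by
  rw [HSq.hochD_def]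
  simp only [Prod.snd_add, Prod.snd_sum, Prod.smul_snd, aLX, aRX]

end Bridge

section Single
set_option linter.unusedSectionVars false
variable {t : ℕ}

theorem tail_update_zero {C : Type*} (a : Fin (t+1) → C) (x : C) :
    Fin.tail (Function.update a 0 x) = Fin.tail a := by
  funext j
  show Function.update a 0 x j.succ = a j.succ
  rw [Function.update_of_ne (Fin.succ_ne_zero j)]

theorem tail_update_succ {C : Type*} (a : Fin (t+1) → C) (i : Fin t) (x : C) :
    Fin.tail (Function.update a i.succ x) = Function.update (Fin.tail a) i x := by
  funext j
  show Function.update a i.succ x j.succ = _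
  by_cases h : j = i
  · subst h
    rw [Function.update_self, Function.update_self]
  · rw [Function.update_of_ne (fun hh => h (Fin.succ_injective _ hh)),
      Function.update_of_ne h]
    rfl

theorem tail_single_zero (v : M) :
    Fin.tail (Pi.single (0 : Fin (t+1)) v : Fin (t+1) → M) = (0 : Fin t → M) := by
  funext j
  show (Pi.single (0 : Fin (t+1)) v : Fin (t+1) → M) j.succ = 0
  exact Pi.single_eq_of_ne (M := fun _ => M) (Fin.succ_ne_zero j) v

theorem tail_single_succ (i : Fin t) (v : M) :
    Fin.tail (Pi.single i.succ v : Fin (t+1) → M) = Pi.single i v := by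
  funext j
  show (Pi.single i.succ v : Fin (t+1) → M) j.succ = (Pi.single i v : Fin t → M) j
  by_cases h : j = i
  · subst h
    rw [Pi.single_eq_same (M := fun _ => M), Pi.single_eq_same (M := fun _ => M)]
  · rw [Pi.single_eq_of_ne (M := fun _ => M) (fun hh => h (Fin.succ_injective _ hh)),
      Pi.single_eq_of_ne (M := fun _ => M) h]

theorem init_update_last {C : Type*} (a : Fin (t+1) → C) (x : C) :
    Fin.init (Function.update a (Fin.last t) x) = Fin.init a := by
  funext j
  show Function.update a (Fin.last t) x j.castSucc = a j.castSucc
  rw [Function.update_of_ne (Fin.castSucc_lt_last j).ne]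

theorem init_update_castSucc {C : Type*} (a : Fin (t+1) → C) (i : Fin t) (x : C) :
    Fin.init (Function.update a i.castSucc x) = Function.update (Fin.init a) i x := by
  funext j
  show Function.update a i.castSucc x j.castSucc = _
  by_cases h : j = i
  · subst h
    rw [Function.update_self, Function.update_self]
  · rw [Function.update_of_ne (fun hh => h (Fin.castSucc_injective _ hh)),
      Function.update_of_ne h]
    rfl

theorem init_single_last (v : M) :
    Fin.init (Pi.single (Fin.last t) v : Fin (t+1) → M) = (0 : Fin t → M) := by
  funext j
  show (Pi.single (Fin.last t) v : Fin (t+1) → M) j.castSucc = 0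
  exact Pi.single_eq_of_ne (M := fun _ => M) (Fin.castSucc_lt_last j).ne v

theorem init_single_castSucc (i : Fin t) (v : M) :
    Fin.init (Pi.single i.castSucc v : Fin (t+1) → M) = Pi.single i v := by
  funext j
  show (Pi.single i.castSucc v : Fin (t+1) → M) j.castSucc = (Pi.single i v : Fin t → M) j
  by_cases h : j = i
  · subst h
    rw [Pi.single_eq_same (M := fun _ => M), Pi.single_eq_same (M := fun _ => M)]
  · rw [Pi.single_eq_of_ne (M := fun _ => M) (fun hh => h (Fin.castSucc_injective _ hh)),
      Pi.single_eq_of_ne (M := fun _ => M) h]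

theorem dfM_update_single {n : ℕ} (i' : ℕ) (a : Fin (n+1) → A) (i : Fin (n+1)) (v : M) :
    dfM al ar i' (Function.update a i 0) (Pi.single i v)
      = dfM al ar i' a (Pi.single i v) := by
  funext j
  simp only [dfM]
  split_ifs with h1 h2
  · rfl
  · by_cases hc : j.castSucc = i
    · have hs : j.succ ≠ i := by
        intro h
        rw [← hc] at h
        have := congrArg Fin.val h
        simp only [Fin.val_succ, Fin.coe_castSucc] at this
        omega
      rw [Function.update_of_ne hs]
      have hz : (Pi.single i v : Fin (n+1) → M) j.succ = 0 := Pi.single_eq_of_ne (M := fun _ => M) hs v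
      rw [hz, map_zero, map_zero]
    · by_cases hs : j.succ = i
      · rw [Function.update_of_ne hc]
        have hz : (Pi.single i v : Fin (n+1) → M) j.castSucc = 0 := Pi.single_eq_of_ne (M := fun _ => M) hc v
        rw [hz, map_zero, LinearMap.zero_apply, LinearMap.zero_apply]
      · rw [Function.update_of_ne hc, Function.update_of_ne hs]
  · rfl

theorem dfc_update_eq {n : ℕ} (a : Fin (n+1) → A) (i : Fin (n+1)) (i' : ℕ) (j : Fin n)
    (h1 : (j : ℕ) < i' → j.castSucc ≠ i)
    (h2 : (j : ℕ) = i' → j.castSucc ≠ i ∧ j.succ ≠ i)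
    (h3 : i' < (j : ℕ) → j.succ ≠ i) :
    HSq.dfc (muA mul) i' (Function.update a i 0) j = HSq.dfc (muA mul) i' a j := by
  simp only [HSq.dfc, muA]
  split_ifs with g1 g2
  · rw [Function.update_of_ne (h1 g1)]
  · rw [Function.update_of_ne (h2 g2).1, Function.update_of_ne (h2 g2).2]
  · rw [Function.update_of_ne (h3 (by omega))]

theorem dfc_update_or {n : ℕ} (a : Fin (n+1) → A) (i : Fin (n+1)) (v : M) (i' : ℕ)
    (s : Fin n) :
    Function.update (HSq.dfc (muA mul) i' (Function.update a i 0)) s 0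
        = Function.update (HSq.dfc (muA mul) i' a) s 0
      ∨ dfM al ar i' a (Pi.single i v) s = 0 := by
  by_cases h0 : dfM al ar i' a (Pi.single i v) s = 0
  · exact Or.inr h0
  · left
    have hsingle : ∀ p : Fin (n+1), (Pi.single i v : Fin (n+1) → M) p ≠ 0 → (p : ℕ) = (i : ℕ) := by
      intro p h
      by_contra hne
      exact h (Pi.single_eq_of_ne (M := fun _ => M) (fun he => hne (congrArg Fin.val he)) v)
    have hfacts : ((i : ℕ) = (s : ℕ) ∧ (s : ℕ) < i')
        ∨ ((s : ℕ) = i' ∧ ((i : ℕ) = (s : ℕ) ∨ (i : ℕ) = (s : ℕ) + 1))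
        ∨ ((i : ℕ) = (s : ℕ) + 1 ∧ i' < (s : ℕ)) := by
      simp only [dfM] at h0
      split_ifs at h0 with g1 g2
      · left
        have := hsingle s.castSucc h0
        simp only [Fin.coe_castSucc] at this
        exact ⟨this.symm, g1⟩
      · right; left
        refine ⟨g2, ?_⟩
        by_cases hcs : s.castSucc = i
        · left
          have := congrArg Fin.val hcs
          simpa using this.symm
        · right
          by_cases hss : s.succ = i
          · have := congrArg Fin.val hss
            simp only [Fin.val_succ] at this
            omega
          · exfalso
            apply h0
            rw [show (Pi.single i v : Fin (n+1) → M) s.succ = 0 from Pi.single_eq_of_ne (M := fun _ => M) hss v,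
              show (Pi.single i v : Fin (n+1) → M) s.castSucc = 0 from Pi.single_eq_of_ne (M := fun _ => M) hcs v,
              map_zero, map_zero, LinearMap.zero_apply, add_zero]
      · right; right
        have := hsingle s.succ h0
        simp only [Fin.val_succ] at this
        exact ⟨this.symm, by omega⟩
    funext j
    by_cases hj : j = s
    · subst hj
      rw [Function.update_self, Function.update_self]
    · rw [Function.update_of_ne hj, Function.update_of_ne hj]
      have hjv : (j : ℕ) ≠ (s : ℕ) := fun h => hj (Fin.ext h)
      refine dfc_update_eq mul a i i' j ?_ ?_ ?_
      · intro hlt he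
        have := congrArg Fin.val he
        simp only [Fin.coe_castSucc] at this
        rcases hfacts with ⟨e1, e2⟩ | ⟨e1, e2 | e2⟩ | ⟨e1, e2⟩ <;> omega
      · intro heq
        constructor
        · intro he
          have := congrArg Fin.val he
          simp only [Fin.coe_castSucc] at this
          rcases hfacts with ⟨e1, e2⟩ | ⟨e1, e2 | e2⟩ | ⟨e1, e2⟩ <;> omega
        · intro he
          have := congrArg Fin.val he
          simp only [Fin.val_succ] at this
          rcases hfacts with ⟨e1, e2⟩ | ⟨e1, e2 | e2⟩ | ⟨e1, e2⟩ <;> omega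
      · intro hlt he
        have := congrArg Fin.val he
        simp only [Fin.val_succ] at this
        rcases hfacts with ⟨e1, e2⟩ | ⟨e1, e2 | e2⟩ | ⟨e1, e2⟩ <;> omega

end Single

section KeySum
set_option linter.unusedSectionVars false

def DMix2 {n : ℕ} (α : (Fin n → A) → B) (g : (Fin n → A × M) → N) :
    (Fin (n+1) → A × M) → N :=
  fun x => (hochD (muX mul al ar) (aLX bl nl l) (aRX br nr r)
      (fun z => (α (fun j => (z j).1), g z)) x).2

theorem DMix2_expand {n : ℕ} (α : (Fin n → A) → B) (g : (Fin n → A × M) → N)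
    (x : Fin (n+1) → A × M) :
    DMix2 mul al ar bl br nl nr l r α g x
      = nl (x 0).1 (g (Fin.tail x)) + l (x 0).2 (α (fun j => (Fin.tail x j).1))
        + ∑ i ∈ Finset.range n, ((-1 : ℤ) ^ (i+1)) • g (HSq.dfc (muX mul al ar) i x)
        + ((-1 : ℤ) ^ (n+1)) • (r (α (fun j => (Fin.init x j).1)) ((x (Fin.last n)).2)
            + nr (g (Fin.init x)) ((x (Fin.last n)).1)) :=
  dMix_expand mul al ar bl br nl nr l r α g x

variable {n : ℕ} (α : (Fin n → A) → B) (βs : Fin n → ((Fin n → A) → M → N))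
variable (hadd : ∀ (s : Fin n) (a : Fin n → A) (m m' : M),
    βs s a (m + m') = βs s a m + βs s a m')

include hadd in
theorem DMix2_zip_add (a : Fin (n+1) → A) (u v : Fin (n+1) → M) :
    DMix2 mul al ar bl br nl nr l r α (extMixed (bup βs)) (zipAM a (u + v))
      = DMix2 mul al ar bl br nl nr l r α (extMixed (bup βs)) (zipAM a u)
        + DMix2 mul al ar bl br nl nr l r α (extMixed (bup βs)) (zipAM a v) := by
  have haddb := bup_hadd βs hadd
  rw [DMix2_expand, DMix2_expand, DMix2_expand]
  simp only [tail_zip, init_zip, tail_addM, init_addM, dfc_zip, dfM_add,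
    extMixed_zip_addM _ haddb]
  simp only [zipAM, Pi.add_apply, map_add, LinearMap.add_apply, smul_add,
    Finset.sum_add_distrib]
  abel

include hadd in
theorem DMix2_zip_single (a : Fin (n+1) → A) (i : Fin (n+1)) (v : M) :
    DMix2 mul al ar bl br nl nr l r α (extMixed (bup βs))
        (zipAM (Function.update a i 0) (Pi.single i v))
      = DMix2 mul al ar bl br nl nr l r α (extMixed (bup βs))
        (zipAM a (Pi.single i v)) := by
  have haddb := bup_hadd βs hadd
  rw [DMix2_expand, DMix2_expand]
  have hchunk3 : (∑ i' ∈ Finset.range n, ((-1 : ℤ) ^ (i'+1)) •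
        extMixed (bup βs) (HSq.dfc (muX mul al ar) i'
          (zipAM (Function.update a i 0) (Pi.single i v))))
      = ∑ i' ∈ Finset.range n, ((-1 : ℤ) ^ (i'+1)) •
        extMixed (bup βs) (HSq.dfc (muX mul al ar) i' (zipAM a (Pi.single i v))) := by
    refine Finset.sum_congr rfl fun i' _ => ?_
    rw [dfc_zip, dfc_zip, dfM_update_single]
    congr 1
    exact extMixed_bup_congr βs hadd _ (fun s => dfc_update_or mul al ar a i v i' s)
  rw [hchunk3]
  have h12 : nl ((zipAM (Function.update a i 0) (Pi.single i v)) 0).1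
        (extMixed (bup βs) (Fin.tail (zipAM (Function.update a i 0) (Pi.single i v))))
      + l ((zipAM (Function.update a i 0) (Pi.single i v)) 0).2
        (α (fun j => (Fin.tail (zipAM (Function.update a i 0) (Pi.single i v)) j).1))
      = nl ((zipAM a (Pi.single i v)) 0).1
        (extMixed (bup βs) (Fin.tail (zipAM a (Pi.single i v))))
      + l ((zipAM a (Pi.single i v)) 0).2
        (α (fun j => (Fin.tail (zipAM a (Pi.single i v)) j).1)) := by
    rcases Fin.eq_zero_or_eq_succ i with hi | ⟨i0, hi⟩
    · subst hi
      have e1 : Fin.tail (zipAM (Function.update a 0 0) (Pi.single (0 : Fin (n+1)) v))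
          = zipAM (Fin.tail a) 0 := by
        rw [tail_zip, tail_update_zero, tail_single_zero]
      have e2 : Fin.tail (zipAM a (Pi.single (0 : Fin (n+1)) v))
          = zipAM (Fin.tail a) 0 := by
        rw [tail_zip, tail_single_zero]
      rw [e1, e2, extMixed_zip_zeroM _ haddb]
      simp [zipAM, Pi.single_eq_same (M := fun _ => M), Function.update_self]
    · subst hi
      have e1 : Fin.tail (zipAM (Function.update a i0.succ 0) (Pi.single i0.succ v))
          = zipAM (Function.update (Fin.tail a) i0 0) (Pi.single i0 v) := by
        rw [tail_zip, tail_update_succ, tail_single_succ]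
      have e2 : Fin.tail (zipAM a (Pi.single i0.succ v))
          = zipAM (Fin.tail a) (Pi.single i0 v) := by
        rw [tail_zip, tail_single_succ]
      rw [e1, e2, extMixed_zip_single _ haddb, extMixed_zip_single _ haddb, bup_update]
      have hz : (Pi.single i0.succ v : Fin (n+1) → M) 0 = 0 :=
        Pi.single_eq_of_ne (M := fun _ => M) (Fin.succ_ne_zero i0).symm v
      have hu : Function.update a i0.succ (0 : A) 0 = a 0 :=
        Function.update_of_ne (Fin.succ_ne_zero i0).symm _ _
      simp [zipAM, hz, hu, map_zero]
  rw [h12]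
  have h4 : r (α (fun j =>
          (Fin.init (zipAM (Function.update a i 0) (Pi.single i v)) j).1))
        (((zipAM (Function.update a i 0) (Pi.single i v)) (Fin.last n)).2)
      + nr (extMixed (bup βs)
          (Fin.init (zipAM (Function.update a i 0) (Pi.single i v))))
        (((zipAM (Function.update a i 0) (Pi.single i v)) (Fin.last n)).1)
      = r (α (fun j => (Fin.init (zipAM a (Pi.single i v)) j).1))
        (((zipAM a (Pi.single i v)) (Fin.last n)).2)
      + nr (extMixed (bup βs) (Fin.init (zipAM a (Pi.single i v))))
        (((zipAM a (Pi.single i v)) (Fin.last n)).1) := by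
    rcases Fin.eq_castSucc_or_eq_last i with ⟨i0, hi⟩ | hi
    · subst hi
      have e1 : Fin.init (zipAM (Function.update a i0.castSucc 0) (Pi.single i0.castSucc v))
          = zipAM (Function.update (Fin.init a) i0 0) (Pi.single i0 v) := by
        rw [init_zip, init_update_castSucc, init_single_castSucc]
      have e2 : Fin.init (zipAM a (Pi.single i0.castSucc v))
          = zipAM (Fin.init a) (Pi.single i0 v) := by
        rw [init_zip, init_single_castSucc]
      rw [e1, e2, extMixed_zip_single _ haddb, extMixed_zip_single _ haddb, bup_update]
      have hz : (Pi.single i0.castSucc v : Fin (n+1) → M) (Fin.last n) = 0 :=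
        Pi.single_eq_of_ne (M := fun _ => M) (Fin.castSucc_lt_last i0).ne' v
      have hu : Function.update a i0.castSucc (0 : A) (Fin.last n) = a (Fin.last n) :=
        Function.update_of_ne (Fin.castSucc_lt_last i0).ne' _ _
      simp [zipAM, hz, hu, map_zero]
    · subst hi
      have e1 : Fin.init (zipAM (Function.update a (Fin.last n) 0)
            (Pi.single (Fin.last n) v)) = zipAM (Fin.init a) 0 := by
        rw [init_zip, init_update_last, init_single_last]
      have e2 : Fin.init (zipAM a (Pi.single (Fin.last n) v))
          = zipAM (Fin.init a) 0 := by
        rw [init_zip, init_single_last]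
      rw [e1, e2, extMixed_zip_zeroM _ haddb]
      simp [zipAM, Pi.single_eq_same (M := fun _ => M), Function.update_self, map_zero]
  rw [h4]

theorem eT_zip {t : ℕ} (m : Fin t → M) (i : Fin t) :
    eT R m i = zipAM (Function.update (fun j => R (m j)) i 0) (Pi.single i (m i)) := by
  funext j
  by_cases h : j = i
  · subst h
    simp [eT, zipAM, Function.update_self, Pi.single_eq_same (M := fun _ => M)]
  · simp [eT, zipAM, Function.update_of_ne h, Pi.single_eq_of_ne (M := fun _ => M) h,
      if_neg h]

include hadd in
theorem DMix2_sum_eT (m : Fin (n+1) → M) :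
    DMix2 mul al ar bl br nl nr l r α (extMixed (bup βs))
        (zipAM (fun j => R (m j)) m)
      = ∑ i : Fin (n+1), DMix2 mul al ar bl br nl nr l r α (extMixed (bup βs))
          (eT R m i) := by
  let φ : (Fin (n+1) → M) →+ N := AddMonoidHom.mk'
    (fun u => DMix2 mul al ar bl br nl nr l r α (extMixed (bup βs))
      (zipAM (fun j => R (m j)) u))
    (fun u v => DMix2_zip_add mul al ar bl br nl nr l r α βs hadd _ u v)
  have h1 : DMix2 mul al ar bl br nl nr l r α (extMixed (bup βs))
      (zipAM (fun j => R (m j)) m) = φ m := rfl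
  have h2 : φ m = φ (∑ i : Fin (n+1), Pi.single i (m i)) := by
    rw [Finset.univ_sum_single]
  rw [h1, h2, map_sum]
  refine Finset.sum_congr rfl fun i _ => ?_
  show DMix2 mul al ar bl br nl nr l r α (extMixed (bup βs))
      (zipAM (fun j => R (m j)) (Pi.single i (m i))) = _
  rw [eT_zip]
  exact (DMix2_zip_single mul al ar bl br nl nr l r α βs hadd
    (fun j => R (m j)) i (m i)).symm

end KeySum

section Chain
set_option linter.unusedSectionVars false
variable {n : ℕ}
variable (hR : ∀ m m' : M, mul (R m) (R m') = R (al (R m) m' + ar m (R m')))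
variable (hrs : ∀ (m : M) (n : N), bl (R m) (S n) = S (nl (R m) n + l m (S n)))
variable (hsr : ∀ (n : N) (m : M), br (S n) (R m) = S (r (S n) m + nr n (R m)))

theorem eT_C (m : Fin n → M) (i : Fin n) :
    ∀ j, ((eT R m i j).1 = 0 ∨ (eT R m i j).2 = 0) := by
  intro j
  by_cases h : j = i
  · subst h; left; simp [eT]
  · right; simp [eT, if_neg h]

theorem C_dfc (x : Fin (n+1) → A × M)
    (hC : ∀ s, (x s).1 = 0 ∨ (x s).2 = 0) (i : ℕ) :
    ∀ j : Fin n, ((HSq.dfc (muX mul al ar) i x j).1 = 0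
      ∨ (HSq.dfc (muX mul al ar) i x j).2 = 0) := by
  intro j
  simp only [HSq.dfc]
  split_ifs
  · exact hC _
  · rcases hC j.castSucc with h1 | h1
    · left
      show mul (x j.castSucc).1 (x j.succ).1 = 0
      rw [h1, map_zero, LinearMap.zero_apply]
    · rcases hC j.succ with h2 | h2
      · left
        show mul (x j.castSucc).1 (x j.succ).1 = 0
        rw [h2, map_zero]
      · right
        show al (x j.castSucc).1 (x j.succ).2 + ar (x j.castSucc).2 (x j.succ).1 = 0
        rw [h1, h2, map_zero, map_zero, LinearMap.zero_apply, add_zero]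
  · exact hC _

theorem DMix2_C_bup (α : (Fin n → A) → B) (βs : Fin n → ((Fin n → A) → M → N))
    (hadd : ∀ (s : Fin n) (a : Fin n → A) (m m' : M),
      βs s a (m + m') = βs s a m + βs s a m')
    (x : Fin (n+1) → A × M) (hC : ∀ s, (x s).1 = 0 ∨ (x s).2 = 0) :
    DMix2 mul al ar bl br nl nr l r α (extMixed βs) x
      = DMix2 mul al ar bl br nl nr l r α (extMixed (bup βs)) x := by
  show (hochD (muX mul al ar) (aLX bl nl l) (aRX br nr r)
      (fun z => (α (fun j => (z j).1), extMixed βs z)) x).2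
    = (hochD (muX mul al ar) (aLX bl nl l) (aRX br nr r)
      (fun z => (α (fun j => (z j).1), extMixed (bup βs) z)) x).2
  congr 1
  refine HSq.hochD_congr (muX mul al ar) (aLX bl nl l) (aRX br nr r) x ?_ ?_ ?_
  · have := extMixed_eq_bup βs hadd (Fin.tail x) (fun s => hC s.succ)
    simp only [Prod.mk.injEq]
    exact ⟨trivial, this⟩
  · intro i hi
    have := extMixed_eq_bup βs hadd (HSq.dfc (muX mul al ar) i x)
      (C_dfc mul al ar x hC i)
    simp only [Prod.mk.injEq]
    exact ⟨trivial, this⟩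
  · have := extMixed_eq_bup βs hadd (Fin.init x) (fun s => hC s.castSucc)
    simp only [Prod.mk.injEq]
    exact ⟨trivial, this⟩

theorem extMixed_eT (βs : Fin n → ((Fin n → A) → M → N))
    (hadd : ∀ (s : Fin n) (a : Fin n → A) (m m' : M),
      βs s a (m + m') = βs s a m + βs s a m')
    (m : Fin n → M) (i : Fin n) :
    extMixed βs (eT R m i) = bup βs i (fun j => R (m j)) (m i) := by
  rw [eT_zip, extMixed_zip]
  rw [Finset.sum_eq_single i]
  · rw [Pi.single_eq_same (M := fun _ => M)]
    rfl
  · intro s _ hs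
    rw [Pi.single_eq_of_ne (M := fun _ => M) hs, bs_zero βs hadd]
  · intro h
    exact absurd (Finset.mem_univ i) h

theorem hRc_bup (α : (Fin n → A) → B) (βs : Fin n → ((Fin n → A) → M → N))
    (hadd : ∀ (s : Fin n) (a : Fin n → A) (m m' : M),
      βs s a (m + m') = βs s a m + βs s a m')
    (m : Fin n → M) :
    hRc (fun x => R x) (fun x => S x) α (extMixed βs) m
      = ((-1 : ℤ) ^ n) • (α (fun j => R (m j))
          - S (extMixed (bup βs) (zipAM (fun j => R (m j)) m))) := by
  rw [hRc_eq]
  congr 2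
  have h1 : ∀ i : Fin n, S (extMixed βs (eT R m i))
      = S (bup βs i (fun j => R (m j)) (m i)) := by
    intro i
    rw [extMixed_eT R βs hadd]
  rw [Finset.sum_congr rfl (fun i _ => h1 i), ← map_sum, extMixed_zip]

def rhoRB : M → A × M := fun u => (R u, u)
def piS : B × N → B := fun y => y.1 - S y.2

include hR in
theorem rho_hom (u u' : M) :
    muX mul al ar (rhoRB R u) (rhoRB R u') = rhoRB R (muM al ar R u u') := by
  simp only [muX, rhoRB, muM, Prod.mk.injEq]
  exact ⟨hR u u', trivial⟩

theorem piS_add (y y' : B × N) : piS S (y + y') = piS S y + piS S y' := by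
  simp only [piS, Prod.fst_add, Prod.snd_add, map_add]
  abel

include hrs in
theorem piS_aLX (u : M) (y : B × N) :
    piS S (aLX bl nl l (rhoRB R u) y) = aLM R S bl l u (piS S y) := by
  simp only [piS, aLX, rhoRB, aLM, map_sub, map_add, hrs u y.2]
  abel

include hsr in
theorem piS_aRX (y : B × N) (u : M) :
    piS S (aRX br nr r y (rhoRB R u)) = aRM R S br r (piS S y) u := by
  simp only [piS, aRX, rhoRB, aRM, map_sub, map_add, LinearMap.sub_apply, hsr y.2 u]
  abel

theorem hochX_fst (α : (Fin n → A) → B) (g : (Fin n → A × M) → N)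
    (x : Fin (n+1) → A × M) :
    (hochD (muX mul al ar) (aLX bl nl l) (aRX br nr r)
        (fun z => (α (fun j => (z j).1), g z)) x).1
      = hochD (muA mul) (blA bl) (brA br) α (fun j => (x j).1) := by
  exact HSq.hochD_push (muX mul al ar) (aLX bl nl l) (aRX br nr r)
    (muA mul) (blA bl) (brA br) Prod.fst Prod.fst
    (fun _ _ => rfl) (fun _ _ => rfl) (fun _ _ => rfl) (fun _ _ => rfl)
    _ α (fun _ => rfl) x

include hR hrs hsr in
theorem chain_lemma (α : (Fin n → A) → B) (βs : Fin n → ((Fin n → A) → M → N))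
    (hadd : ∀ (s : Fin n) (a : Fin n → A) (m m' : M),
      βs s a (m + m') = βs s a m + βs s a m')
    (m : Fin (n+1) → M) :
    hochD (muM al ar R) (aLM R S bl l) (aRM R S br r)
        (hRc (fun x => R x) (fun x => S x) α (extMixed βs)) m
      + hRc (fun x => R x) (fun x => S x)
          (dAB (fun x y => mul x y) (fun x y => bl x y) (fun x y => br x y) α)
          (dMix (fun x y => mul x y) (fun x y => al x y) (fun x y => ar x y)
            (fun x y => bl x y) (fun x y => br x y) (fun x y => nl x y)
            (fun x y => nr x y) (fun x y => l x y) (fun x y => r x y) α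
            (extMixed βs)) m = 0 := by
  have hA : hRc (fun x => R x) (fun x => S x)
      (dAB (fun x y => mul x y) (fun x y => bl x y) (fun x y => br x y) α)
      (dMix (fun x y => mul x y) (fun x y => al x y) (fun x y => ar x y)
        (fun x y => bl x y) (fun x y => br x y) (fun x y => nl x y)
        (fun x y => nr x y) (fun x y => l x y) (fun x y => r x y) α
        (extMixed βs)) m
      = ((-1 : ℤ) ^ (n+1)) • (hochD (muA mul) (blA bl) (brA br) α (fun j => R (m j))
          - S (DMix2 mul al ar bl br nl nr l r α (extMixed (bup βs))
              (zipAM (fun j => R (m j)) m))) := by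
    rw [hRc_eq]
    congr 2
    have h1 : ∀ i : Fin (n+1),
        S (dMix (fun x y => mul x y) (fun x y => al x y) (fun x y => ar x y)
          (fun x y => bl x y) (fun x y => br x y) (fun x y => nl x y)
          (fun x y => nr x y) (fun x y => l x y) (fun x y => r x y) α
          (extMixed βs) (eT R m i))
        = S (DMix2 mul al ar bl br nl nr l r α (extMixed (bup βs)) (eT R m i)) :=
      fun i => congrArg S (DMix2_C_bup mul al ar bl br nl nr l r α βs hadd
        (eT R m i) (eT_C R m i))
    rw [Finset.sum_congr rfl (fun i _ => h1 i), ← map_sum,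
      ← DMix2_sum_eT mul al ar R bl br nl nr l r α βs hadd m]
  have hB : hochD (muM al ar R) (aLM R S bl l) (aRM R S br r)
      (hRc (fun x => R x) (fun x => S x) α (extMixed βs)) m
      = ((-1 : ℤ) ^ n) • (hochD (muA mul) (blA bl) (brA br) α (fun j => R (m j))
          - S (DMix2 mul al ar bl br nl nr l r α (extMixed (bup βs))
              (zipAM (fun j => R (m j)) m))) := by
    have hfun : hRc (fun x => R x) (fun x => S x) α (extMixed βs)
        = fun mm => ((-1 : ℤ) ^ n) •
            ((fun v => piS S ((fun z => (α (fun j => (z j).1), extMixed (bup βs) z))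
              (fun j => rhoRB R (v j)))) mm) := by
      funext mm
      rw [hRc_bup R S α βs hadd mm]
      rfl
    rw [hfun, HSq.hochD_smulf (muM al ar R) (aLM R S bl l) (aRM R S br r)
      (aLM_add R S bl l) (aRM_add R S br r)]
    congr 1
    rw [← HSq.hochD_pull (muX mul al ar) (aLX bl nl l) (aRX br nr r)
      (muM al ar R) (aLM R S bl l) (aRM R S br r) (rhoRB R) (piS S)
      (rho_hom mul al ar R hR) (piS_add S)
      (piS_aLX R S bl nl l hrs) (piS_aRX R S br nr r hsr)
      (fun z => (α (fun j => (z j).1), extMixed (bup βs) z)) m]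
    show (hochD (muX mul al ar) (aLX bl nl l) (aRX br nr r)
        (fun z => (α (fun j => (z j).1), extMixed (bup βs) z))
        (fun j => rhoRB R (m j))).1
      - S ((hochD (muX mul al ar) (aLX bl nl l) (aRX br nr r)
        (fun z => (α (fun j => (z j).1), extMixed (bup βs) z))
        (fun j => rhoRB R (m j))).2) = _
    rw [hochX_fst]
    rfl
  rw [hA, hB, pow_succ, mul_comm, mul_smul, neg_one_zsmul]
  exact add_neg_cancel _

end Chain

end Concrete

/-- The coboundary operator of a relative Rota-Baxter algebra with coefficients in a
bimodule squares to zero: `(δ_rRB)² = 0`. -/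
theorem relative_rota_baxter_coboundary_squares_to_zero
    {K : Type*} [Field K] {A M B N : Type*}
    [AddCommGroup A] [Module K A] [AddCommGroup M] [Module K M]
    [AddCommGroup B] [Module K B] [AddCommGroup N] [Module K N]
    (mul : A →ₗ[K] A →ₗ[K] A)
    (hmul : ∀ a b c : A, mul (mul a b) c = mul a (mul b c))
    (al : A →ₗ[K] M →ₗ[K] M) (ar : M →ₗ[K] A →ₗ[K] M)
    (hal : ∀ (a b : A) (m : M), al (mul a b) m = al a (al b m))
    (halr : ∀ (a : A) (m : M) (b : A), ar (al a m) b = al a (ar m b))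
    (har : ∀ (m : M) (a b : A), ar (ar m a) b = ar m (mul a b))
    (R : M →ₗ[K] A)
    (hR : ∀ m m' : M, mul (R m) (R m') = R (al (R m) m' + ar m (R m')))
    (S : N →ₗ[K] B)
    (bl : A →ₗ[K] B →ₗ[K] B) (br : B →ₗ[K] A →ₗ[K] B)
    (hbl : ∀ (a a' : A) (b : B), bl (mul a a') b = bl a (bl a' b))
    (hblr : ∀ (a : A) (b : B) (a' : A), br (bl a b) a' = bl a (br b a'))
    (hbr : ∀ (b : B) (a a' : A), br (br b a) a' = br b (mul a a'))
    (nl : A →ₗ[K] N →ₗ[K] N) (nr : N →ₗ[K] A →ₗ[K] N)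
    (hnl : ∀ (a a' : A) (n : N), nl (mul a a') n = nl a (nl a' n))
    (hnlr : ∀ (a : A) (n : N) (a' : A), nr (nl a n) a' = nl a (nr n a'))
    (hnr : ∀ (n : N) (a a' : A), nr (nr n a) a' = nr n (mul a a'))
    (l : M →ₗ[K] B →ₗ[K] N) (r : B →ₗ[K] M →ₗ[K] N)
    (hl1 : ∀ (a : A) (m : M) (b : B), l (al a m) b = nl a (l m b))
    (hl2 : ∀ (m : M) (a : A) (b : B), l (ar m a) b = l m (bl a b))
    (hl3 : ∀ (m : M) (b : B) (a : A), l m (br b a) = nr (l m b) a)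
    (hr1 : ∀ (a : A) (b : B) (m : M), r (bl a b) m = nl a (r b m))
    (hr2 : ∀ (b : B) (a : A) (m : M), r (br b a) m = r b (al a m))
    (hr3 : ∀ (b : B) (m : M) (a : A), r b (ar m a) = nr (r b m) a)
    (hrs : ∀ (m : M) (n : N), bl (R m) (S n) = S (nl (R m) n + l m (S n)))
    (hsr : ∀ (n : N) (m : M), br (S n) (R m) = S (r (S n) m + nr n (R m))) :
    -- on 1-cochains (α, β) ∈ C¹ = Hom(A,B) ⊕ Hom(M,N):
    (∀ (α : (Fin 1 → A) → B) (βs : Fin 1 → ((Fin 1 → A) → M → N)),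
      (∀ (s : Fin 1) (a : Fin 1 → A) (m m' : M),
          βs s a (m + m') = βs s a m + βs s a m') →
      let β : (Fin 1 → A × M) → N := extMixed βs
      (∀ a : Fin 3 → A,
        dAB (fun x y => mul x y) (fun x y => bl x y) (fun x y => br x y)
          (dAB (fun x y => mul x y) (fun x y => bl x y) (fun x y => br x y) α) a = 0) ∧
      (∀ x : Fin 3 → A × M,
        dMix (fun x y => mul x y) (fun x y => al x y) (fun x y => ar x y)
            (fun x y => bl x y) (fun x y => br x y) (fun x y => nl x y)
            (fun x y => nr x y) (fun x y => l x y) (fun x y => r x y)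
            (dAB (fun x y => mul x y) (fun x y => bl x y) (fun x y => br x y) α)
            (dMix (fun x y => mul x y) (fun x y => al x y) (fun x y => ar x y)
              (fun x y => bl x y) (fun x y => br x y) (fun x y => nl x y)
              (fun x y => nr x y) (fun x y => l x y) (fun x y => r x y) α β) x = 0) ∧
      (∀ m : Fin 2 → M,
        dMB (fun x y => al x y) (fun x y => ar x y) (fun x y => bl x y)
            (fun x y => br x y) (fun x => R x) (fun x => S x)
            (fun x y => l x y) (fun x y => r x y)
            (hRc (fun x => R x) (fun x => S x) α β) m
          + hRc (fun x => R x) (fun x => S x)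
              (dAB (fun x y => mul x y) (fun x y => bl x y) (fun x y => br x y) α)
              (dMix (fun x y => mul x y) (fun x y => al x y) (fun x y => ar x y)
                (fun x y => bl x y) (fun x y => br x y) (fun x y => nl x y)
                (fun x y => nr x y) (fun x y => l x y) (fun x y => r x y) α β) m = 0)) ∧
    -- on k-cochains (α, β, γ) ∈ Cᵏ for k ≥ 2:
    (∀ (k : ℕ) (α : (Fin (k + 1) → A) → B)
        (βs : Fin (k + 1) → ((Fin (k + 1) → A) → M → N))
        (γ : (Fin k → M) → B),
      (∀ (s : Fin (k + 1)) (a : Fin (k + 1) → A) (m m' : M),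
          βs s a (m + m') = βs s a m + βs s a m') →
      let β : (Fin (k + 1) → A × M) → N := extMixed βs
      (∀ a : Fin (k + 3) → A,
        dAB (fun x y => mul x y) (fun x y => bl x y) (fun x y => br x y)
          (dAB (fun x y => mul x y) (fun x y => bl x y) (fun x y => br x y) α) a = 0) ∧
      (∀ x : Fin (k + 3) → A × M,
        dMix (fun x y => mul x y) (fun x y => al x y) (fun x y => ar x y)
            (fun x y => bl x y) (fun x y => br x y) (fun x y => nl x y)
            (fun x y => nr x y) (fun x y => l x y) (fun x y => r x y)
            (dAB (fun x y => mul x y) (fun x y => bl x y) (fun x y => br x y) α)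
            (dMix (fun x y => mul x y) (fun x y => al x y) (fun x y => ar x y)
              (fun x y => bl x y) (fun x y => br x y) (fun x y => nl x y)
              (fun x y => nr x y) (fun x y => l x y) (fun x y => r x y) α β) x = 0) ∧
      (∀ m : Fin (k + 2) → M,
        dMB (fun x y => al x y) (fun x y => ar x y) (fun x y => bl x y)
            (fun x y => br x y) (fun x => R x) (fun x => S x)
            (fun x y => l x y) (fun x y => r x y)
            (dMB (fun x y => al x y) (fun x y => ar x y) (fun x y => bl x y)
                (fun x y => br x y) (fun x => R x) (fun x => S x)
                (fun x y => l x y) (fun x y => r x y) γ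
              + hRc (fun x => R x) (fun x => S x) α β) m
          + hRc (fun x => R x) (fun x => S x)
              (dAB (fun x y => mul x y) (fun x y => bl x y) (fun x y => br x y) α)
              (dMix (fun x y => mul x y) (fun x y => al x y) (fun x y => ar x y)
                (fun x y => bl x y) (fun x y => br x y) (fun x y => nl x y)
                (fun x y => nr x y) (fun x y => l x y) (fun x y => r x y) α β) m = 0)) := by
  constructor
  · intro α βs hadd β
    refine ⟨?_, ?_, ?_⟩
    · intro a
      exact HSq.hochD_sq _ _ _ (blA_add bl) (brA_add br) hmul hbl hblr hbr α a
    · intro x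
      have hfun : (fun z : Fin 2 → A × M =>
            (dAB (fun x y => mul x y) (fun x y => bl x y) (fun x y => br x y) α (fun j => (z j).1), dMix (fun x y => mul x y) (fun x y => al x y) (fun x y => ar x y)
            (fun x y => bl x y) (fun x y => br x y) (fun x y => nl x y)
            (fun x y => nr x y) (fun x y => l x y) (fun x y => r x y) α β z))
          = hochD (muX mul al ar) (aLX bl nl l) (aRX br nr r)
              (fun z => (α (fun j => (z j).1), β z)) := by
        funext z
        exact Prod.ext ((hochX_fst mul al ar bl br nl nr l r α β z).symm) rfl
      show (hochD (muX mul al ar) (aLX bl nl l) (aRX br nr r)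
        (fun z : Fin 2 → A × M =>
          (dAB (fun x y => mul x y) (fun x y => bl x y) (fun x y => br x y) α (fun j => (z j).1), dMix (fun x y => mul x y) (fun x y => al x y) (fun x y => ar x y)
            (fun x y => bl x y) (fun x y => br x y) (fun x y => nl x y)
            (fun x y => nr x y) (fun x y => l x y) (fun x y => r x y) α β z)) x).2 = 0
      rw [hfun, HSq.hochD_sq (muX mul al ar) (aLX bl nl l) (aRX br nr r)
        (aLX_add bl nl l) (aRX_add br nr r) (muX_assoc mul al ar hmul hal halr har)
        (aLX_mul mul al ar bl nl l hbl hnl hl1 hl2)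
        (aX_mid bl br nl nr l r hblr hr1 hnlr hl3)
        (aRX_mul mul al ar br nr r hbr hr2 hr3 hnr) _ x]
      rfl
    · intro m
      exact chain_lemma mul al ar R S bl br nl nr l r hR hrs hsr α βs hadd m
  · intro k α βs γ hadd β
    refine ⟨?_, ?_, ?_⟩
    · intro a
      exact HSq.hochD_sq _ _ _ (blA_add bl) (brA_add br) hmul hbl hblr hbr α a
    · intro x
      have hfun : (fun z : Fin (k+2) → A × M =>
            (dAB (fun x y => mul x y) (fun x y => bl x y) (fun x y => br x y) α (fun j => (z j).1), dMix (fun x y => mul x y) (fun x y => al x y) (fun x y => ar x y)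
            (fun x y => bl x y) (fun x y => br x y) (fun x y => nl x y)
            (fun x y => nr x y) (fun x y => l x y) (fun x y => r x y) α β z))
          = hochD (muX mul al ar) (aLX bl nl l) (aRX br nr r)
              (fun z => (α (fun j => (z j).1), β z)) := by
        funext z
        exact Prod.ext ((hochX_fst mul al ar bl br nl nr l r α β z).symm) rfl
      show (hochD (muX mul al ar) (aLX bl nl l) (aRX br nr r)
        (fun z : Fin (k+2) → A × M =>
          (dAB (fun x y => mul x y) (fun x y => bl x y) (fun x y => br x y) α (fun j => (z j).1), dMix (fun x y => mul x y) (fun x y => al x y) (fun x y => ar x y)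
            (fun x y => bl x y) (fun x y => br x y) (fun x y => nl x y)
            (fun x y => nr x y) (fun x y => l x y) (fun x y => r x y) α β z)) x).2 = 0
      rw [hfun, HSq.hochD_sq (muX mul al ar) (aLX bl nl l) (aRX br nr r)
        (aLX_add bl nl l) (aRX_add br nr r) (muX_assoc mul al ar hmul hal halr har)
        (aLX_mul mul al ar bl nl l hbl hnl hl1 hl2)
        (aX_mid bl br nl nr l r hblr hr1 hnlr hl3)
        (aRX_mul mul al ar br nr r hbr hr2 hr3 hnr) _ x]
      rfl
    · intro m
      have hsplit := HSq.hochD_addf (muM al ar R) (aLM R S bl l) (aRM R S br r)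
        (aLM_add R S bl l) (aRM_add R S br r)
        (dMB (fun x y => al x y) (fun x y => ar x y) (fun x y => bl x y)
            (fun x y => br x y) (fun x => R x) (fun x => S x)
            (fun x y => l x y) (fun x y => r x y) γ) (hRc (fun x => R x) (fun x => S x) α β) m
      show hochD (muM al ar R) (aLM R S bl l) (aRM R S br r)
          (fun z => dMB (fun x y => al x y) (fun x y => ar x y) (fun x y => bl x y)
            (fun x y => br x y) (fun x => R x) (fun x => S x)
            (fun x y => l x y) (fun x y => r x y) γ z + hRc (fun x => R x) (fun x => S x) α β z) m
        + hRc (fun x => R x) (fun x => S x)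
            (dAB (fun x y => mul x y) (fun x y => bl x y) (fun x y => br x y) α) (dMix (fun x y => mul x y) (fun x y => al x y) (fun x y => ar x y)
            (fun x y => bl x y) (fun x y => br x y) (fun x y => nl x y)
            (fun x y => nr x y) (fun x y => l x y) (fun x y => r x y) α β) m = 0
      rw [hsplit]
      have hzero : hochD (muM al ar R) (aLM R S bl l) (aRM R S br r)
          (dMB (fun x y => al x y) (fun x y => ar x y) (fun x y => bl x y)
            (fun x y => br x y) (fun x => R x) (fun x => S x)
            (fun x y => l x y) (fun x y => r x y) γ) m = 0 := by
        show hochD (muM al ar R) (aLM R S bl l) (aRM R S br r)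
          (hochD (muM al ar R) (aLM R S bl l) (aRM R S br r) γ) m = 0
        exact HSq.hochD_sq _ _ _ (aLM_add R S bl l) (aRM_add R S br r)
          (muM_assoc mul al ar R hR hal halr har)
          (aLM_mul mul al ar R S bl nl l hR hbl hl1 hl2 hrs)
          (aM_mid R S bl br nl nr l r hblr hr1 hl3 hrs hsr)
          (aRM_mul mul al ar R S br nr r hR hbr hr2 hr3 hsr) γ m
      rw [hzero, zero_add]
      exact chain_lemma mul al ar R S bl br nl nr l r hR hrs hsr α βs hadd m
end

section
/- Let M →^R A be a relative Rota-Baxter algebra, (N →^S B, l, r) a bimodule over it, and (α, β, γ) ∈ Hom(A^⊗2, B) ⊕ Hom(𝒜^{1,1}, N) ⊕ Hom(M, B) a 2-cocycle (δ_rRB(α,β,γ) = 0). Define on Â = A ⊕ B the product (a,b)·(a',b') = (a·a', a·_B b' + b·_B a' + α(a,a')), on M̂ = M ⊕ N the actions (a,b)·(m,n) = (a·_M m, a·_N n + r(b,m) + β(a,m)) and (m,n)·(a,b) = (m·_M a, l(m,b) + n·_N a + β(m,a)), and R̂(m,n) = (R(m), S(n) + γ(m)). Then Â is an associative algebra, M̂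 is an Â-bimodule, and R̂ : M̂ → Â is a relative Rota-Baxter operator; moreover M̂ →^{R̂} Â is an abelian extension of M →^R A by N →^S B. -/
private lemma sub_helper {G : Type*} [AddCommGroup G] {x y e : G}
    (he : e = 0) (h : x - y = e) : x = y := sub_eq_zero.mp (h.trans he)

/-- A 2-cocycle (α, β, γ) of a relative Rota-Baxter algebra with coefficients in a
bimodule determines an abelian extension M̂ →^{R̂} Â on Â = A ⊕ B, M̂ = M ⊕ N. -/
theorem abelian_extension_of_two_cocycle
    {K : Type*} [Field K] {A M B N : Type*}
    [AddCommGroup A] [Module K A] [AddCommGroup M] [Module K M]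
    [AddCommGroup B] [Module K B] [AddCommGroup N] [Module K N]
    (mul : A →ₗ[K] A →ₗ[K] A)
    (hmul : ∀ a b c : A, mul (mul a b) c = mul a (mul b c))
    (al : A →ₗ[K] M →ₗ[K] M) (ar : M →ₗ[K] A →ₗ[K] M)
    (hal : ∀ (a b : A) (m : M), al (mul a b) m = al a (al b m))
    (halr : ∀ (a : A) (m : M) (b : A), ar (al a m) b = al a (ar m b))
    (har : ∀ (m : M) (a b : A), ar (ar m a) b = ar m (mul a b))
    (R : M →ₗ[K] A)
    (hR : ∀ m m' : M, mul (R m) (R m') = R (al (R m) m' + ar m (R m')))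
    (S : N →ₗ[K] B)
    (bl : A →ₗ[K] B →ₗ[K] B) (br : B →ₗ[K] A →ₗ[K] B)
    (hbl : ∀ (a a' : A) (b : B), bl (mul a a') b = bl a (bl a' b))
    (hblr : ∀ (a : A) (b : B) (a' : A), br (bl a b) a' = bl a (br b a'))
    (hbr : ∀ (b : B) (a a' : A), br (br b a) a' = br b (mul a a'))
    (nl : A →ₗ[K] N →ₗ[K] N) (nr : N →ₗ[K] A →ₗ[K] N)
    (hnl : ∀ (a a' : A) (n : N), nl (mul a a') n = nl a (nl a' n))
    (hnlr : ∀ (a : A) (n : N) (a' : A), nr (nl a n) a' = nl a (nr n a'))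
    (hnr : ∀ (n : N) (a a' : A), nr (nr n a) a' = nr n (mul a a'))
    (l : M →ₗ[K] B →ₗ[K] N) (r : B →ₗ[K] M →ₗ[K] N)
    (hl1 : ∀ (a : A) (m : M) (b : B), l (al a m) b = nl a (l m b))
    (hl2 : ∀ (m : M) (a : A) (b : B), l (ar m a) b = l m (bl a b))
    (hl3 : ∀ (m : M) (b : B) (a : A), l m (br b a) = nr (l m b) a)
    (hr1 : ∀ (a : A) (b : B) (m : M), r (bl a b) m = nl a (r b m))
    (hr2 : ∀ (b : B) (a : A) (m : M), r (br b a) m = r b (al a m))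
    (hr3 : ∀ (b : B) (m : M) (a : A), r b (ar m a) = nr (r b m) a)
    (hrs : ∀ (m : M) (n : N), bl (R m) (S n) = S (nl (R m) n + l m (S n)))
    (hsr : ∀ (n : N) (m : M), br (S n) (R m) = S (r (S n) m + nr n (R m)))
    -- a 2-cochain (α, β, γ), with β given by its two components
    (alpha : A →ₗ[K] A →ₗ[K] B)
    (betaAM : A →ₗ[K] M →ₗ[K] N) (betaMA : M →ₗ[K] A →ₗ[K] N)
    (gamma : M →ₗ[K] B)
    -- the 2-cocycle conditions δ_rRB(α, β, γ) = 0
    (hc1 : ∀ a₁ a₂ a₃ : A,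
      bl a₁ (alpha a₂ a₃) - alpha (mul a₁ a₂) a₃ + alpha a₁ (mul a₂ a₃)
        - br (alpha a₁ a₂) a₃ = 0)
    (hc2 : ∀ (m : M) (a₂ a₃ : A),
      l m (alpha a₂ a₃) - betaMA (ar m a₂) a₃ + betaMA m (mul a₂ a₃)
        - nr (betaMA m a₂) a₃ = 0)
    (hc3 : ∀ (a₁ : A) (m : M) (a₃ : A),
      nl a₁ (betaMA m a₃) - betaMA (al a₁ m) a₃ + betaAM a₁ (ar m a₃)
        - nr (betaAM a₁ m) a₃ = 0)
    (hc4 : ∀ (a₁ a₂ : A) (m : M),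
      nl a₁ (betaAM a₂ m) - betaAM (mul a₁ a₂) m + betaAM a₁ (al a₂ m)
        - r (alpha a₁ a₂) m = 0)
    (hc5 : ∀ m₁ m₂ : M,
      (bl (R m₁) (gamma m₂) - S (l m₁ (gamma m₂)))
        - gamma (al (R m₁) m₂ + ar m₁ (R m₂))
        + (br (gamma m₁) (R m₂) - S (r (gamma m₁) m₂))
        + (alpha (R m₁) (R m₂) - S (betaAM (R m₁) m₂) - S (betaMA m₁ (R m₂))) = 0)
    -- the twisted structure on Â = A × B and M̂ = M × N
    (mulE : A × B → A × B → A × B)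
    (hmulE : ∀ p q : A × B,
      mulE p q = (mul p.1 q.1, bl p.1 q.2 + br p.2 q.1 + alpha p.1 q.1))
    (actlE : A × B → M × N → M × N)
    (hactlE : ∀ (p : A × B) (w : M × N),
      actlE p w = (al p.1 w.1, nl p.1 w.2 + r p.2 w.1 + betaAM p.1 w.1))
    (actrE : M × N → A × B → M × N)
    (hactrE : ∀ (w : M × N) (p : A × B),
      actrE w p = (ar w.1 p.1, l w.1 p.2 + nr w.2 p.1 + betaMA w.1 p.1))
    (RE : M × N → A × B)
    (hRE : ∀ w : M × N, RE w = (R w.1, S w.2 + gamma w.1)) :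
    -- Â is an associative algebra
    (∀ p q s : A × B, mulE (mulE p q) s = mulE p (mulE q s)) ∧
    -- M̂ is an Â-bimodule
    (∀ (p q : A × B) (w : M × N), actlE (mulE p q) w = actlE p (actlE q w)) ∧
    (∀ (p : A × B) (w : M × N) (q : A × B), actrE (actlE p w) q = actlE p (actrE w q)) ∧
    (∀ (w : M × N) (p q : A × B), actrE (actrE w p) q = actrE w (mulE p q)) ∧
    -- R̂ is a relative Rota-Baxter operator
    (∀ w w' : M × N, mulE (RE w) (RE w') = RE (actlE (RE w) w' + actrE w (RE w'))) ∧
    -- it is an abelian extension: the projections are a surjective morphism onto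
    -- M →ᴿ A, the inclusions of B and N are injective morphisms from the trivial
    -- relative Rota-Baxter algebra N →ˢ B, and the sequences are exact
    (∀ p q : A × B, (mulE p q).1 = mul p.1 q.1) ∧
    (∀ (p : A × B) (w : M × N), (actlE p w).1 = al p.1 w.1) ∧
    (∀ (w : M × N) (p : A × B), (actrE w p).1 = ar w.1 p.1) ∧
    (∀ w : M × N, (RE w).1 = R w.1) ∧
    (∀ b b' : B, mulE ((0 : A), b) ((0 : A), b') = 0) ∧
    (∀ n : N, RE ((0 : M), n) = ((0 : A), S n)) ∧
    Function.Injective (fun b : B => ((0 : A), b)) ∧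
    Function.Injective (fun n : N => ((0 : M), n)) ∧
    Function.Surjective (Prod.fst : A × B → A) ∧
    Function.Surjective (Prod.fst : M × N → M) ∧
    (∀ p : A × B, p.1 = 0 ↔ ∃ b : B, p = ((0 : A), b)) ∧
    (∀ w : M × N, w.1 = 0 ↔ ∃ n : N, w = ((0 : M), n)) := by
  refine ⟨?_, ?_, ?_, ?_, ?_, ?_, ?_, ?_, ?_, ?_, ?_, ?_, ?_, ?_, ?_, ?_, ?_⟩
  · intro p q s
    simp only [hmulE, map_add, LinearMap.add_apply, hbl, hblr, hbr]
    refine Prod.ext (hmul _ _ _) ?_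
    exact (sub_helper (hc1 p.1 q.1 s.1) (by module)).symm
  · intro p q w
    simp only [hmulE, hactlE, map_add, LinearMap.add_apply, hnl, hnlr, hnr, hr1, hr2, hr3]
    refine Prod.ext (hal _ _ _) ?_
    exact (sub_helper (hc4 p.1 q.1 w.1) (by module)).symm
  · intro p w q
    simp only [hmulE, hactlE, hactrE, map_add, LinearMap.add_apply, hnl, hnlr, hnr, hl1, hl2, hl3, hr1, hr2, hr3]
    refine Prod.ext (halr _ _ _) ?_
    exact (sub_helper (hc3 p.1 w.1 q.1) (by module)).symm
  · intro w p q
    simp only [hmulE, hactlE, hactrE, map_add, LinearMap.add_apply, hnl, hnlr, hnr, hl1, hl2, hl3, hr1, hr2, hr3]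
    refine Prod.ext (har _ _ _) ?_
    exact (sub_helper (hc2 w.1 p.1 q.1) (by module)).symm
  · intro w w'
    simp only [hmulE, hactlE, hactrE, hRE, map_add, LinearMap.add_apply, Prod.mk_add_mk, hrs, hsr]
    refine Prod.ext ((hR w.1 w'.1).trans (map_add R _ _)) ?_
    have h5 := hc5 w.1 w'.1
    simp only [map_add] at h5
    exact sub_helper h5 (by module)
  · intro p q; rw [hmulE]
  · intro p w; rw [hactlE]
  · intro w p; rw [hactrE]
  · intro w; rw [hRE]
  · intro b b'
    rw [hmulE]
    simp only [map_zero, LinearMap.zero_apply, add_zero, zero_add, Prod.mk_eq_zero, and_self]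
  · intro n
    rw [hRE]
    simp only [map_zero, add_zero]
  · intro x y h; simpa using h
  · intro x y h; simpa using h
  · intro a; exact ⟨(a, 0), rfl⟩
  · intro m; exact ⟨(m, 0), rfl⟩
  · intro p
    constructor
    · intro h; exact ⟨p.2, by ext <;> simp [h]⟩
    · rintro ⟨b, rfl⟩; rfl
  · intro w
    constructor
    · intro h; exact ⟨w.2, by ext <;> simp [h]⟩
    · rintro ⟨n, rfl⟩; rfl
end

section
/- Let M →^R A be a relative Rota-Baxter algebra, (N →^S B, l, r) a bimodule over it, and let M̂ →^{R̂} Â be an abelian extension of M →^R A by the 2-term chain complex N →^S B with section (s, s̄). Define α(a, a') := s(a)·_{Â} s(a') − s(a·a'), β(a, m) := s(a)·_{M̂} s̄(m) − s̄(a·_M m), β(m, a) := s̄(m)·_{M̂} s(a) − s̄(m·_M a), and γ(m) := R̂(s̄(m)) − s(R(m)). Then (α, β, γ) is a 2-cocycle: δ_rRB(α, β, γ) = 0. -/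
/-- Given an abelian extension M̂ →^{R̂} Â of a relative Rota-Baxter algebra M →ᴿ A
by a 2-term chain complex N →ˢ B, together with a section (s, s̄), the associated
triple (α, β, γ) is a 2-cocycle: δ_rRB(α, β, γ) = 0.  (The cocycle conditions are
expressed inside Â and M̂ via the injections, using the induced bimodule structure
a ·_B b = s(a)·i(b), l(m, b) = s̄(m)·i(b), etc.) -/
theorem two_cocycle_of_abelian_extension
    {K : Type*} [Field K] {A M B N Ah Mh : Type*}
    [AddCommGroup A] [Module K A] [AddCommGroup M] [Module K M]
    [AddCommGroup B] [Module K B] [AddCommGroup N] [Module K N]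
    [AddCommGroup Ah] [Module K Ah] [AddCommGroup Mh] [Module K Mh]
    -- the base relative Rota-Baxter algebra M →ᴿ A
    (mul : A →ₗ[K] A →ₗ[K] A)
    (hmul : ∀ a b c : A, mul (mul a b) c = mul a (mul b c))
    (al : A →ₗ[K] M →ₗ[K] M) (ar : M →ₗ[K] A →ₗ[K] M)
    (hal : ∀ (a b : A) (m : M), al (mul a b) m = al a (al b m))
    (halr : ∀ (a : A) (m : M) (b : A), ar (al a m) b = al a (ar m b))
    (har : ∀ (m : M) (a b : A), ar (ar m a) b = ar m (mul a b))
    (R : M →ₗ[K] A)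
    (hR : ∀ m m' : M, mul (R m) (R m') = R (al (R m) m' + ar m (R m')))
    -- the 2-term chain complex N →ˢ B
    (S : N →ₗ[K] B)
    -- the relative Rota-Baxter algebra M̂ →^{R̂} Â
    (mulh : Ah →ₗ[K] Ah →ₗ[K] Ah)
    (hmulh : ∀ x y z : Ah, mulh (mulh x y) z = mulh x (mulh y z))
    (alh : Ah →ₗ[K] Mh →ₗ[K] Mh) (arh : Mh →ₗ[K] Ah →ₗ[K] Mh)
    (halh : ∀ (x y : Ah) (v : Mh), alh (mulh x y) v = alh x (alh y v))
    (halrh : ∀ (x : Ah) (v : Mh) (y : Ah), arh (alh x v) y = alh x (arh v y))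
    (harh : ∀ (v : Mh) (x y : Ah), arh (arh v x) y = arh v (mulh x y))
    (Rh : Mh →ₗ[K] Ah)
    (hRh : ∀ v v' : Mh, mulh (Rh v) (Rh v') = Rh (alh (Rh v) v' + arh v (Rh v')))
    -- the short exact sequences 0 → N → M̂ → M → 0 and 0 → B → Â → A → 0
    (i : B →ₗ[K] Ah) (ii : N →ₗ[K] Mh) (p : Ah →ₗ[K] A) (pp : Mh →ₗ[K] M)
    (hi : Function.Injective i) (hii : Function.Injective ii)
    (hpsur : Function.Surjective p) (hppsur : Function.Surjective pp)
    (hexA : ∀ x : Ah, p x = 0 ↔ x ∈ Set.range i)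
    (hexM : ∀ v : Mh, pp v = 0 ↔ v ∈ Set.range ii)
    -- the projections form a morphism of relative Rota-Baxter algebras
    (hp : ∀ x y : Ah, p (mulh x y) = mul (p x) (p y))
    (hpl : ∀ (x : Ah) (v : Mh), pp (alh x v) = al (p x) (pp v))
    (hpr : ∀ (v : Mh) (x : Ah), pp (arh v x) = ar (pp v) (p x))
    (hpR : ∀ v : Mh, p (Rh v) = R (pp v))
    -- the inclusions form a morphism from the trivial relative Rota-Baxter
    -- algebra N →ˢ B
    (hitriv : ∀ b b' : B, mulh (i b) (i b') = 0)
    (hitrivl : ∀ (b : B) (n : N), alh (i b) (ii n) = 0)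
    (hitrivr : ∀ (n : N) (b : B), arh (ii n) (i b) = 0)
    (hiS : ∀ n : N, Rh (ii n) = i (S n))
    -- a section (s, s̄)
    (s : A →ₗ[K] Ah) (ss : M →ₗ[K] Mh)
    (hs : ∀ a : A, p (s a) = a) (hss : ∀ m : M, pp (ss m) = m)
    -- the 2-cochain (α, β, γ) defined by the section (written inside Â and M̂)
    (alphah : A → A → Ah)
    (halphah : ∀ a a' : A, alphah a a' = mulh (s a) (s a') - s (mul a a'))
    (betaAMh : A → M → Mh)
    (hbetaAMh : ∀ (a : A) (m : M), betaAMh a m = alh (s a) (ss m) - ss (al a m))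
    (betaMAh : M → A → Mh)
    (hbetaMAh : ∀ (m : M) (a : A), betaMAh m a = arh (ss m) (s a) - ss (ar m a))
    (gammah : M → Ah)
    (hgammah : ∀ m : M, gammah m = Rh (ss m) - s (R m)) :
    -- δ_rRB(α, β, γ) = 0
    (∀ a₁ a₂ a₃ : A,
      mulh (s a₁) (alphah a₂ a₃) - alphah (mul a₁ a₂) a₃
        + alphah a₁ (mul a₂ a₃) - mulh (alphah a₁ a₂) (s a₃) = 0) ∧
    (∀ (m : M) (a₂ a₃ : A),
      arh (ss m) (alphah a₂ a₃) - betaMAh (ar m a₂) a₃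
        + betaMAh m (mul a₂ a₃) - arh (betaMAh m a₂) (s a₃) = 0) ∧
    (∀ (a₁ : A) (m : M) (a₃ : A),
      alh (s a₁) (betaMAh m a₃) - betaMAh (al a₁ m) a₃
        + betaAMh a₁ (ar m a₃) - arh (betaAMh a₁ m) (s a₃) = 0) ∧
    (∀ (a₁ a₂ : A) (m : M),
      alh (s a₁) (betaAMh a₂ m) - betaAMh (mul a₁ a₂) m
        + betaAMh a₁ (al a₂ m) - alh (alphah a₁ a₂) (ss m) = 0) ∧
    (∀ m₁ m₂ : M,
      (mulh (s (R m₁)) (gammah m₂) - Rh (arh (ss m₁) (gammah m₂)))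
        - gammah (al (R m₁) m₂ + ar m₁ (R m₂))
        + (mulh (gammah m₁) (s (R m₂)) - Rh (alh (gammah m₁) (ss m₂)))
        + (alphah (R m₁) (R m₂) - Rh (betaAMh (R m₁) m₂) - Rh (betaMAh m₁ (R m₂)))
        = 0) := by
  refine ⟨?_, ?_, ?_, ?_, ?_⟩
  · intro a₁ a₂ a₃
    simp only [halphah, map_sub, LinearMap.sub_apply, hmulh, hmul]
    abel
  · intro m a₂ a₃
    simp only [halphah, hbetaMAh, map_sub, LinearMap.sub_apply, harh, har]
    abel
  · intro a₁ m a₃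
    simp only [hbetaMAh, hbetaAMh, map_sub, LinearMap.sub_apply, halrh, halr]
    abel
  · intro a₁ a₂ m
    simp only [halphah, hbetaAMh, map_sub, LinearMap.sub_apply, halh, hal]
    abel
  · intro m₁ m₂
    -- γ m lies in the range of i
    have hker : ∀ m : M, ∃ b : B, gammah m = i b := by
      intro m
      have : p (gammah m) = 0 := by
        rw [hgammah, map_sub, hpR, hss, hs]
        abel
      exact ((hexA _).mp this).imp fun b hb => hb.symm
    obtain ⟨b₁, hb₁⟩ := hker m₁
    obtain ⟨b₂, hb₂⟩ := hker m₂
    have h0 : mulh (Rh (ss m₁) - s (R m₁)) (Rh (ss m₂) - s (R m₂)) = 0 := by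
      rw [← hgammah, ← hgammah, hb₁, hb₂, hitriv]
    have key : mulh (Rh (ss m₁)) (Rh (ss m₂))
        = mulh (Rh (ss m₁)) (s (R m₂)) + mulh (s (R m₁)) (Rh (ss m₂))
          - mulh (s (R m₁)) (s (R m₂)) := by
      apply eq_of_sub_eq_zero
      rw [← h0]
      simp only [map_sub, LinearMap.sub_apply]
      abel
    have k : Rh (alh (Rh (ss m₁)) (ss m₂))
        = mulh (Rh (ss m₁)) (Rh (ss m₂)) - Rh (arh (ss m₁) (Rh (ss m₂))) := by
      rw [hRh, map_add]
      abel
    simp only [hgammah, halphah, hbetaAMh, hbetaMAh, map_sub, map_add,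
      LinearMap.sub_apply, ← hR]
    rw [k, key]
    abel
end
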